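/- arXiv:1209.3459 — 8 statements merged into one kernel-verified Lean document; each statement's English description precedes it below -/
import Mathlib

section
/- Every maximal abelian *-subalgebra (MASA) of an infinite-dimensional C*-algebra is infinite-dimensional. -/
set_option linter.unusedSectionVars false
set_option maxHeartbeats 1000000

open Polynomial Unitization

section Aux

private lemma sq_zero_of_sa {E : Type*} [NonUnitalNormedRing E] [StarRing E] [CStarRing E]
    (w : E) (hw : star w = w) (h : w * w = 0) : w = 0 := by
  have h2 : ‖w‖ * ‖w‖ = 0 := by
    rw [← CStarRing.norm_self_mul_star (x := w), hw, h, norm_zero]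
  simpa using mul_self_eq_zero.mp h2

private lemma star_mul_self_zero {E : Type*} [NonUnitalNormedRing E] [StarRing E] [CStarRing E]
    (z : E) (h : star z * z = 0) : z = 0 := by
  have h2 : ‖z‖ * ‖z‖ = 0 := by rw [← CStarRing.norm_star_mul_self (x := z), h, norm_zero]
  simpa using mul_self_eq_zero.mp h2


variable {B : Type*} [NonUnitalNormedRing B] [StarRing B] [CStarRing B] [NormedSpace ℂ B]
    [IsScalarTower ℂ B B] [SMulCommClass ℂ B B] [StarModule ℂ B] [CompleteSpace B]

private lemma key_commutant (A : NonUnitalStarSubalgebra ℂ B)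
    (hcomm : ∀ x ∈ A, ∀ y ∈ A, x * y = y * x)
    (hmax : ∀ C : NonUnitalStarSubalgebra ℂ B, IsClosed (C : Set B) →
      (∀ x ∈ C, ∀ y ∈ C, x * y = y * x) → A ≤ C → C = A)
    (x : B) (hx : star x = x) (hxc : ∀ a ∈ A, a * x = x * a) : x ∈ A := by
  classical
  set s : Set B := insert x (A : Set B) with hs
  have hstar : ∀ b ∈ s, star b ∈ s := by
    rintro b (rfl | hb)
    · exact Or.inl hx
    · exact Or.inr (star_mem hb)
  have hcomm' : ∀ a ∈ s, ∀ b ∈ s, a * b = b * a := by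
    rintro a (rfl | ha) b (rfl | hb)
    · rfl
    · exact (hxc b hb).symm
    · exact hxc a ha
    · exact hcomm a ha b hb
  set C0 := NonUnitalStarAlgebra.adjoin ℂ s with hC0
  have hC0comm : ∀ u v : C0, u * v = v * u := by
    letI := NonUnitalStarAlgebra.adjoinNonUnitalCommSemiringOfComm ℂ
      (s := s) hcomm' (fun a ha b hb => hcomm' a ha (star b) (hstar b hb))
    exact fun u v => mul_comm u v
  set C := C0.topologicalClosure with hC
  have hCcomm : ∀ u ∈ C, ∀ v ∈ C, u * v = v * u := by
    letI := NonUnitalStarSubalgebra.nonUnitalCommSemiringTopologicalClosure C0 hC0comm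
    intro u hu v hv
    exact congrArg Subtype.val (mul_comm (⟨u, hu⟩ : C) ⟨v, hv⟩)
  have hAC : A ≤ C :=
    le_trans (by
      intro a ha
      exact NonUnitalStarAlgebra.subset_adjoin ℂ s (Or.inr ha))
      (C0.le_topologicalClosure)
  have := hmax C (C0.isClosed_topologicalClosure) hCcomm hAC
  rw [← this]
  exact C0.le_topologicalClosure (NonUnitalStarAlgebra.subset_adjoin ℂ s (Or.inl rfl))

private lemma spectral_decomp (A : NonUnitalStarSubalgebra ℂ B) (hfin : FiniteDimensional ℂ A)
    (b : B) (hb : b ∈ A) (hbsa : star b = b) :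
    ∃ (T : Finset ℂ) (w : ℂ → B),
      (∀ mu ∈ T, w mu ∈ A ∧ star (w mu) = w mu ∧ w mu * w mu = w mu ∧ w mu ≠ 0 ∧
        ∃ c : ℂ, ∃ a ∈ A, w mu = c • b + b * a) ∧
      (∀ mu ∈ T, ∀ nu ∈ T, mu ≠ nu → w mu * w nu = 0) ∧
      b = ∑ mu ∈ T, mu • w mu := by
  classical
  -- the unital subalgebra ℂ·1 + A of the unitization
  set U := Unitization ℂ B with hU
  have hinj : Function.Injective (fun a : B => (a : U)) := Unitization.inr_injective
  let S₁ : Subalgebra ℂ U :=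
    { carrier := {u | ∃ c : ℂ, ∃ a ∈ A, u = algebraMap ℂ U c + (a : U)}
      mul_mem' := by
        rintro u v ⟨c₁, a₁, ha₁, rfl⟩ ⟨c₂, a₂, ha₂, rfl⟩
        refine ⟨c₁ * c₂, c₁ • a₂ + c₂ • a₁ + a₁ * a₂, ?_, ?_⟩
        · exact add_mem (add_mem (SMulMemClass.smul_mem _ ha₂) (SMulMemClass.smul_mem _ ha₁))
            (mul_mem ha₁ ha₂)
        · push_cast [Unitization.inr_add, Unitization.inr_smul, Unitization.inr_mul]
          rw [mul_add, add_mul, add_mul, ← map_mul, ← Algebra.commutes c₂ ((a₁ : B) : U),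
            ← Algebra.smul_def, ← Algebra.smul_def]
          abel
      one_mem' := ⟨1, 0, zero_mem A, by simp⟩
      add_mem' := by
        rintro u v ⟨c₁, a₁, ha₁, rfl⟩ ⟨c₂, a₂, ha₂, rfl⟩
        exact ⟨c₁ + c₂, a₁ + a₂, add_mem ha₁ ha₂, by rw [map_add]; push_cast [Unitization.inr_add]; abel⟩
      zero_mem' := ⟨0, 0, zero_mem A, by simp⟩
      algebraMap_mem' := fun c => ⟨c, 0, zero_mem A, by simp⟩ }
  -- S₁ is finite dimensional
  have hfg : S₁.toSubmodule.FG := by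
    let inrl : B →ₗ[ℂ] U :=
      { toFun := fun a => (a : U)
        map_add' := fun x y => by simp [Unitization.inr_add]
        map_smul' := fun c x => by simp [Unitization.inr_smul] }
    let W : Submodule ℂ U := (Submodule.span ℂ {(1 : U)}) ⊔
      (Submodule.map inrl A.toNonUnitalSubalgebra.toSubmodule)
    haveI : FiniteDimensional ℂ A.toNonUnitalSubalgebra.toSubmodule := hfin
    haveI : FiniteDimensional ℂ W := by
      apply Submodule.finiteDimensional_sup
    have hle : S₁.toSubmodule ≤ W := by
      rintro u ⟨c, a, ha, rfl⟩
      apply Submodule.mem_sup.mpr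
      refine ⟨algebraMap ℂ U c, ?_, (a : U), ⟨a, ha, rfl⟩, rfl⟩
      rw [Algebra.algebraMap_eq_smul_one]
      exact Submodule.smul_mem _ _ (Submodule.mem_span_singleton_self _)
    haveI : FiniteDimensional ℂ S₁.toSubmodule := Submodule.finiteDimensional_of_le hle
    exact (Submodule.fg_iff_finiteDimensional _).mpr this
  have hbS₁ : (b : U) ∈ S₁ := ⟨0, b, hb, by simp⟩
  have hint : IsIntegral ℂ (b : U) := IsIntegral.of_mem_of_fg S₁ hfg _ hbS₁
  have hbsa' : star ((b : B) : U) = (b : U) := by rw [← Unitization.inr_star, hbsa]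
  set m : Polynomial ℂ := minpoly ℂ ((b : B) : U) with hm
  have hm0 : m ≠ 0 := minpoly.ne_zero hint
  have hmonic : m.Monic := minpoly.monic hint
  -- star invariance of m
  have haev : ∀ q : Polynomial ℂ, star (Polynomial.aeval ((b : B) : U) q)
      = Polynomial.aeval ((b : B) : U) (q.map (starRingEnd ℂ)) := fun q => by
    induction q using Polynomial.induction_on' with
    | add p r hp hr => simp [star_add, hp, hr]
    | monomial n c =>
      simp only [aeval_monomial, Polynomial.map_monomial]
      rw [star_mul, star_pow, hbsa', ← algebraMap_star_comm]
      exact (Algebra.commutes _ _).symm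
  have hconj_ann : ∀ q : Polynomial ℂ, Polynomial.aeval ((b : B) : U) q = 0 →
      Polynomial.aeval ((b : B) : U) (q.map (starRingEnd ℂ)) = 0 := fun q hq => by
    rw [← haev, hq, star_zero]
  have hmstar : m.map (starRingEnd ℂ) = m := by
    have h1 : m ∣ m.map (starRingEnd ℂ) :=
      minpoly.dvd ℂ _ (hconj_ann m (minpoly.aeval ℂ _))
    have h2 : m.map (starRingEnd ℂ) ∣ m := by
      obtain ⟨t, ht⟩ := h1
      have := congrArg (Polynomial.map (starRingEnd ℂ)) ht
      rw [Polynomial.map_mul, Polynomial.map_map] at this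
      have hcc : (starRingEnd ℂ).comp (starRingEnd ℂ) = RingHom.id ℂ := by
        ext z; simp
      rw [hcc, Polynomial.map_id] at this
      exact ⟨_, this⟩
    exact Polynomial.eq_of_monic_of_associated (hmonic.map _) hmonic
      (associated_of_dvd_dvd h2 h1)
  -- roots are simple
  have hsplits : m.Splits := IsAlgClosed.splits m
  have hnodup : m.roots.Nodup := by
    rw [Multiset.nodup_iff_count_le_one]
    by_contra hcon
    push_neg at hcon
    obtain ⟨lam, hlam⟩ := hcon
    rw [Polynomial.count_roots] at hlam
    have hd : (X - C lam) ^ 2 ∣ m :=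
      dvd_trans (pow_dvd_pow _ hlam) (Polynomial.pow_rootMultiplicity_dvd m lam)
    obtain ⟨g, hg⟩ := hd
    have hgne : g ≠ 0 := fun h => hm0 (by rw [hg, h, mul_zero])
    set z : U := Polynomial.aeval ((b : B) : U) ((X - C lam) * g) with hz
    have hz2 : z * z = 0 := by
      rw [hz, ← map_mul]
      have : (X - C lam) * g * ((X - C lam) * g) = m * g := by rw [hg]; ring
      rw [this, map_mul, minpoly.aeval, zero_mul]
    have hzne : z ≠ 0 := by
      intro h0
      have hdvd : m ∣ (X - C lam) * g := minpoly.dvd ℂ _ (by rw [← hz, h0])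
      have hne : (X - C lam) * g ≠ 0 :=
        mul_ne_zero (Polynomial.X_sub_C_ne_zero lam) hgne
      have hdeg := Polynomial.natDegree_le_of_dvd hdvd hne
      rw [hg] at hdeg
      rw [Polynomial.natDegree_mul (pow_ne_zero 2 (Polynomial.X_sub_C_ne_zero lam)) hgne,
        Polynomial.natDegree_mul (Polynomial.X_sub_C_ne_zero lam) hgne,
        Polynomial.natDegree_pow, Polynomial.natDegree_X_sub_C] at hdeg
      omega
    have hcommz : z * star z = star z * z := by
      rw [haev, hz, ← map_mul, ← map_mul, mul_comm ((X - C lam) * g)]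
    have hw : star z * z = 0 := by
      apply sq_zero_of_sa (star z * z) (by rw [star_mul, star_star])
      calc star z * z * (star z * z) = star z * (z * star z) * z := by
            rw [mul_assoc, mul_assoc, mul_assoc]
        _ = star z * (star z * z) * z := by rw [hcommz]
        _ = (star z * star z) * (z * z) := by rw [mul_assoc, mul_assoc, mul_assoc]
        _ = 0 := by rw [hz2, mul_zero]
    exact hzne (star_mul_self_zero z hw)
  -- node set
  set sf : Finset ℂ := insert 0 m.roots.toFinset with hsf
  have h0sf : (0 : ℂ) ∈ sf := Finset.mem_insert_self _ _
  have hInj : Set.InjOn (id : ℂ → ℂ) sf := fun x _ y _ h => h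
  -- m divides the product over nodes
  have hmprod : m = ∏ mu ∈ m.roots.toFinset, (X - C mu) := by
    conv_lhs => rw [hsplits.eq_prod_roots_of_monic hmonic]
    rw [Finset.prod_eq_multiset_prod]
    congr 1
    rw [Multiset.toFinset_val]
    rw [Multiset.Nodup.dedup hnodup]
  set p : Polynomial ℂ := ∏ mu ∈ sf, (X - C mu) with hp
  have hmp : m ∣ p := by
    rw [hmprod, hp]
    exact Finset.prod_dvd_prod_of_subset _ _ _ (Finset.subset_insert _ _)
  have hp0 : Polynomial.aeval ((b : B) : U) p = 0 := by
    obtain ⟨t, ht⟩ := hmp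
    rw [ht, map_mul, minpoly.aeval, zero_mul]
  -- congruence: polynomials agreeing on the nodes have equal aeval
  have hcong : ∀ f g : Polynomial ℂ, (∀ mu ∈ sf, f.eval mu = g.eval mu) →
      Polynomial.aeval ((b : B) : U) f = Polynomial.aeval ((b : B) : U) g := by
    intro f g hfg
    have hdvd : p ∣ f - g := by
      rw [hp]
      refine Finset.prod_dvd_of_coprime ?_ ?_
      · intro x hx y hy hxy
        exact (Polynomial.pairwise_coprime_X_sub_C Function.injective_id) hxy
      · intro mu hmu
        rw [Polynomial.dvd_iff_isRoot]
        simp [Polynomial.IsRoot, hfg mu hmu]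
    obtain ⟨t, ht⟩ := hdvd
    have := congrArg (Polynomial.aeval ((b : B) : U)) ht
    rw [map_sub, map_mul, hp0, zero_mul] at this
    exact sub_eq_zero.mp this
  have hself : ∀ mu ∈ sf, Polynomial.eval mu (Lagrange.basis sf id mu) = 1 := fun mu hmu => by
    simpa using Lagrange.eval_basis_self hInj hmu
  have hofne : ∀ mu nu, mu ≠ nu → nu ∈ sf → Polynomial.eval nu (Lagrange.basis sf id mu) = 0 :=
    fun mu nu h hnu => by simpa using Lagrange.eval_basis_of_ne (s := sf) (v := id) h hnu
  -- the family of spectral idempotents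
  set E : ℂ → U := fun mu => Polynomial.aeval ((b : B) : U) (Lagrange.basis sf id mu) with hE
  have hidem : ∀ mu ∈ sf, E mu * E mu = E mu := by
    intro mu hmu
    rw [hE]
    simp only
    rw [← map_mul]
    apply hcong
    intro nu hnu
    rw [Polynomial.eval_mul]
    by_cases h : mu = nu
    · subst h
      rw [hself mu hmu]; norm_num
    · rw [hofne mu nu h hnu]; ring
  have horth : ∀ mu ∈ sf, ∀ nu ∈ sf, mu ≠ nu → E mu * E nu = 0 := by
    intro mu hmu nu hnu hne
    rw [hE]
    simp only
    rw [← map_mul]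
    have h0 : Polynomial.aeval ((b : B) : U) (0 : Polynomial ℂ) = 0 := map_zero _
    rw [← h0]
    apply hcong
    intro rho hrho
    rw [Polynomial.eval_mul, Polynomial.eval_zero]
    rcases eq_or_ne mu rho with h | h
    · subst h
      rw [hofne nu mu hne.symm hrho]; ring
    · rw [hofne mu rho h hrho]; ring
  have hdecomp : ((b : B) : U) = ∑ mu ∈ sf, mu • E mu := by
    have hX : Polynomial.aeval ((b : B) : U) (X : Polynomial ℂ)
        = Polynomial.aeval ((b : B) : U) (∑ mu ∈ sf, C mu * Lagrange.basis sf id mu) := by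
      apply hcong
      intro nu hnu
      rw [Polynomial.eval_X, Polynomial.eval_finset_sum]
      rw [Finset.sum_eq_single nu]
      · rw [Polynomial.eval_mul, Polynomial.eval_C, hself nu hnu]; ring
      · intro mu hmu hne
        rw [Polynomial.eval_mul, hofne mu nu hne hnu]; ring
      · intro h; exact absurd hnu h
    rw [Polynomial.aeval_X] at hX
    rw [hX, map_sum]
    exact Finset.sum_congr rfl fun mu _ => by
      rw [map_mul, Polynomial.aeval_C]
      exact (Algebra.smul_def _ _).symm
  -- star of the idempotents
  have hsfstar : sf.image (starRingEnd ℂ) = sf := by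
    have hroots : (m.roots.map (starRingEnd ℂ)).toFinset = m.roots.toFinset := by
      have := hsplits.roots_map (starRingEnd ℂ)
      rw [hmstar] at this
      rw [← this]
    rw [hsf, Finset.image_insert, map_zero]
    congr 1
    rw [← Multiset.toFinset_map]
    exact hroots
  have hEstar : ∀ mu ∈ sf, star (E mu) = E (starRingEnd ℂ mu) := by
    intro mu hmu
    rw [hE]
    simp only
    rw [haev]
    congr 1
    -- map conj of Lagrange basis
    unfold Lagrange.basis
    rw [Polynomial.map_prod]
    have hterm : ∀ nu, (Lagrange.basisDivisor (id mu) (id nu)).map (starRingEnd ℂ)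
        = Lagrange.basisDivisor (starRingEnd ℂ mu) (starRingEnd ℂ nu) := by
      intro nu
      unfold Lagrange.basisDivisor
      rw [Polynomial.map_mul, Polynomial.map_C, Polynomial.map_sub, Polynomial.map_X,
        Polynomial.map_C, map_inv₀, map_sub]
      rfl
    calc ∏ nu ∈ sf.erase mu, (Lagrange.basisDivisor (id mu) (id nu)).map (starRingEnd ℂ)
        = ∏ nu ∈ sf.erase mu, Lagrange.basisDivisor (starRingEnd ℂ mu) (starRingEnd ℂ nu) := by
          exact Finset.prod_congr rfl (fun nu _ => hterm nu)
      _ = ∏ nu' ∈ (sf.erase mu).image (starRingEnd ℂ),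
            Lagrange.basisDivisor (starRingEnd ℂ mu) nu' := by
          rw [Finset.prod_image]
          intro x _ y _ h
          exact (starRingEnd ℂ).injective h
      _ = ∏ nu' ∈ sf.erase (starRingEnd ℂ mu), Lagrange.basisDivisor (starRingEnd ℂ mu) (id nu') := by
          congr 1
          rw [Finset.image_erase (starRingEnd ℂ).injective, hsfstar]
  -- nonzero idempotents are selfadjoint
  have hEsa : ∀ mu ∈ sf, E mu ≠ 0 → star (E mu) = E mu := by
    intro mu hmu hne
    by_cases h : starRingEnd ℂ mu = mu
    · rw [hEstar mu hmu, h]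
    · exfalso
      apply hne
      have hmustar : starRingEnd ℂ mu ∈ sf := by
        rw [← hsfstar]
        exact Finset.mem_image_of_mem _ hmu
      have : star (E mu) * E mu = 0 := by
        rw [hEstar mu hmu]
        exact horth _ hmustar _ hmu h
      exact star_mul_self_zero _ this
  -- membership in A for nonzero nodes
  have hmemA : ∀ mu ∈ sf, mu ≠ 0 → ∃ c : ℂ, ∃ a ∈ A, E mu = ((c • b + b * a : B) : U) := by
    intro mu hmu hmune
    have hcoeff : (Lagrange.basis sf id mu).coeff 0 = 0 := by
      rw [Polynomial.coeff_zero_eq_eval_zero]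
      exact hofne mu 0 hmune h0sf
    obtain ⟨q, hq⟩ := Polynomial.X_dvd_iff.mpr hcoeff
    have hqmem : Polynomial.aeval ((b : B) : U) q ∈ S₁ := by
      have h1 : Polynomial.aeval ((b : B) : U) q ∈ Algebra.adjoin ℂ {((b : B) : U)} :=
        Polynomial.aeval_mem_adjoin_singleton ℂ _
      have h2 : Algebra.adjoin ℂ {((b : B) : U)} ≤ S₁ :=
        Algebra.adjoin_le (by simpa using hbS₁)
      exact h2 h1
    obtain ⟨c, a, ha, hca⟩ := hqmem
    refine ⟨c, a, ha, ?_⟩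
    rw [hE]
    simp only
    rw [hq, map_mul, Polynomial.aeval_X, hca]
    rw [mul_add, ← Algebra.commutes c (((b : B)) : U), ← Algebra.smul_def]
    push_cast [Unitization.inr_add, Unitization.inr_smul, Unitization.inr_mul]
    abel
  -- assemble the family
  set T : Finset ℂ := (sf.erase 0).filter (fun mu => E mu ≠ 0) with hT
  have hTsf : T ⊆ sf := fun mu hmu => Finset.erase_subset _ _ (Finset.mem_filter.mp hmu).1
  have hTprop : ∀ mu ∈ T, ∃ v : B,
      (v ∈ A ∧ (∃ c : ℂ, ∃ a ∈ A, v = c • b + b * a)) ∧ ((v : U) = E mu) := by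
    intro mu hmu
    have hmusf : mu ∈ sf := hTsf hmu
    have hmune : mu ≠ 0 := Finset.ne_of_mem_erase (Finset.mem_filter.mp hmu).1
    obtain ⟨c, a, ha, hca⟩ := hmemA mu hmusf hmune
    exact ⟨c • b + b * a, ⟨add_mem (SMulMemClass.smul_mem _ hb) (mul_mem hb ha),
      ⟨c, a, ha, rfl⟩⟩, hca.symm⟩
  choose! w hw using hTprop
  have hwE : ∀ mu ∈ T, ((w mu : B) : U) = E mu := fun mu hmu => (hw mu hmu).2
  have hfinal : (∀ mu ∈ T, w mu ∈ A ∧ star (w mu) = w mu ∧ w mu * w mu = w mu ∧ w mu ≠ 0 ∧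
        ∃ c : ℂ, ∃ a ∈ A, w mu = c • b + b * a) ∧
      (∀ mu ∈ T, ∀ nu ∈ T, mu ≠ nu → w mu * w nu = 0) ∧
      b = ∑ mu ∈ T, mu • w mu := by
    refine ⟨?_, ?_, ?_⟩
    · intro mu hmu
      have hmusf : mu ∈ sf := hTsf hmu
      have hEne : E mu ≠ 0 := (Finset.mem_filter.mp hmu).2
      refine ⟨(hw mu hmu).1.1, ?_, ?_, ?_, (hw mu hmu).1.2⟩
      · apply hinj
        show ((star (w mu) : B) : U) = _
        rw [Unitization.inr_star, hwE mu hmu, hEsa mu hmusf hEne]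
        exact (hwE mu hmu).symm
      · apply hinj
        show ((w mu * w mu : B) : U) = _
        rw [Unitization.inr_mul, hwE mu hmu, hidem mu hmusf]
        exact (hwE mu hmu).symm
      · intro h
        apply hEne
        rw [← hwE mu hmu, h]
        exact Unitization.inr_zero ℂ
    · intro mu hmu nu hnu hne
      apply hinj
      show ((w mu * w nu : B) : U) = ((0 : B) : U)
      rw [Unitization.inr_mul, hwE mu hmu, hwE nu hnu, horth mu (hTsf hmu) nu (hTsf hnu) hne,
        Unitization.inr_zero]
    · apply hinj
      show ((b : B) : U) = ((∑ mu ∈ T, mu • w mu : B) : U)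
      rw [hdecomp]
      let inrl2 : B →ₗ[ℂ] U :=
        { toFun := fun a => (a : U)
          map_add' := fun x y => by simp [Unitization.inr_add]
          map_smul' := fun c x => by simp [Unitization.inr_smul] }
      have : ((∑ mu ∈ T, mu • w mu : B) : U) = ∑ mu ∈ T, mu • E mu := by
        show inrl2 (∑ mu ∈ T, mu • w mu) = _
        rw [map_sum]
        refine Finset.sum_congr rfl fun mu hmu => ?_
        show ((mu • w mu : B) : U) = _
        rw [Unitization.inr_smul, hwE mu hmu]
      rw [this]
      refine (Finset.sum_subset hTsf ?_).symm
      intro mu hmusf hmuT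
      rcases eq_or_ne mu 0 with rfl | hmune
      · rw [zero_smul]
      · have : E mu = 0 := by
          by_contra hEne
          exact hmuT (Finset.mem_filter.mpr ⟨Finset.mem_erase.mpr ⟨hmune, hmusf⟩, hEne⟩)
        rw [this, smul_zero]
  exact ⟨T, w, hfinal.1, hfinal.2.1, hfinal.2.2⟩

private lemma exists_unit (A : NonUnitalStarSubalgebra ℂ B) (hfin : FiniteDimensional ℂ A)
    (hcomm : ∀ x ∈ A, ∀ y ∈ A, x * y = y * x) :
    ∃ e : B, e ∈ A ∧ star e = e ∧ e * e = e ∧ ∀ a ∈ A, e * a = a ∧ a * e = a := by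
  classical
  set Asub : Submodule ℂ B := A.toNonUnitalSubalgebra.toSubmodule with hAsub
  haveI : FiniteDimensional ℂ Asub := hfin
  set M : B → Submodule ℂ B := fun p => Submodule.map (LinearMap.mulRight ℂ p) Asub with hM
  have hmem : ∀ p x, x ∈ M p ↔ ∃ a ∈ A, a * p = x := by
    intro p x
    constructor
    · rintro ⟨a, ha, rfl⟩
      exact ⟨a, ha, rfl⟩
    · rintro ⟨a, ha, rfl⟩
      exact ⟨a, ha, rfl⟩
  have hMle : ∀ p, p ∈ A → M p ≤ Asub := by
    intro p hp x hx
    obtain ⟨a, ha, rfl⟩ := (hmem p x).mp hx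
    have : a * p ∈ A := mul_mem ha hp
    exact this
  have hMfin : ∀ p, p ∈ A → FiniteDimensional ℂ (M p) := fun p hp =>
    Submodule.finiteDimensional_of_le (hMle p hp)
  -- choose a projection with maximal corner dimension
  set S : Set ℕ := {n | ∃ p : B, (p ∈ A ∧ star p = p ∧ p * p = p) ∧
    n = Module.finrank ℂ (M p)} with hS
  have hSne : S.Nonempty := ⟨Module.finrank ℂ (M 0), 0, ⟨zero_mem A, star_zero _, by simp⟩, rfl⟩
  have hSbdd : BddAbove S := by
    refine ⟨Module.finrank ℂ Asub, ?_⟩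
    rintro n ⟨p, hp, rfl⟩
    exact Submodule.finrank_mono (hMle p hp.1)
  obtain ⟨e, ⟨heA, hestar, heidem⟩, hco⟩ := Nat.sSup_mem hSne hSbdd
  have hmaxim : ∀ p : B, p ∈ A → star p = p → p * p = p →
      Module.finrank ℂ (M p) ≤ Module.finrank ℂ (M e) := by
    intro p hp hps hpi
    rw [← hco]
    exact le_csSup hSbdd ⟨p, ⟨hp, hps, hpi⟩, rfl⟩
  refine ⟨e, heA, hestar, heidem, ?_⟩
  -- it suffices to handle selfadjoint elements
  suffices hsa : ∀ b ∈ A, star b = b → e * b = b by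
    intro a ha
    have hh : (a + star a) ∈ A := add_mem ha (star_mem ha)
    have hhsa : star (a + star a) = a + star a := by rw [star_add, star_star, add_comm]
    have hk : (Complex.I • (a - star a)) ∈ A := SMulMemClass.smul_mem _ (sub_mem ha (star_mem ha))
    have hksa : star (Complex.I • (a - star a)) = Complex.I • (a - star a) := by
      rw [star_smul, star_sub, star_star, Complex.star_def, Complex.conj_I, neg_smul, ← smul_neg,
        neg_sub]
    have h1 := hsa _ hh hhsa
    have h2 := hsa _ hk hksa
    have hrep : a = (2⁻¹ : ℂ) • ((a + star a) + (-Complex.I) • (Complex.I • (a - star a))) := by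
      rw [smul_smul]
      simp [Complex.I_mul_I]
      module
    have hea : e * a = a := by
      conv_lhs => rw [hrep]
      rw [mul_smul_comm, mul_add, h1, mul_smul_comm, h2, ← hrep]
    refine ⟨hea, ?_⟩
    rw [hcomm a ha e heA]
    exact hea
  -- selfadjoint case: maximality argument
  intro b hbA hbsa
  by_contra hne
  set b0 : B := b - e * b with hb0
  have hb0A : b0 ∈ A := sub_mem hbA (mul_mem heA hbA)
  have hb0ne : b0 ≠ 0 := fun h => hne (sub_eq_zero.mp h).symm
  have hbe : b * e = e * b := hcomm b hbA e heA
  have hb0sa : star b0 = b0 := by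
    rw [hb0, star_sub, hbsa, star_mul, hestar, hbsa, hbe]
  have heb0 : e * b0 = 0 := by
    rw [hb0, mul_sub, ← mul_assoc, heidem]
    simp
  have hb0e : b0 * e = 0 := by rw [hcomm b0 hb0A e heA]; exact heb0
  -- extract a nonzero projection orthogonal to e
  obtain ⟨T, w, hw1, _, hw3⟩ := spectral_decomp A hfin b0 hb0A hb0sa
  have hTne : T.Nonempty := by
    rcases Finset.eq_empty_or_nonempty T with rfl | h
    · exact absurd (by simpa using hw3) hb0ne
    · exact h
  obtain ⟨mu, hmu⟩ := hTne
  obtain ⟨hrA, hrsa, hridem, hrne, c, a', ha', hrform⟩ := hw1 mu hmu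
  have her : e * w mu = 0 := by
    rw [hrform, mul_add, mul_smul_comm, heb0, ← mul_assoc, heb0]
    simp
  have hre : w mu * e = 0 := by rw [hcomm _ hrA e heA]; exact her
  -- e + r is a strictly bigger projection
  have herA : e + w mu ∈ A := add_mem heA hrA
  have herstar : star (e + w mu) = e + w mu := by rw [star_add, hestar, hrsa]
  have heridem : (e + w mu) * (e + w mu) = e + w mu := by
    rw [add_mul, mul_add, mul_add, heidem, hridem, her, hre]
    simp
  have hlt : M e < M (e + w mu) := by
    constructor
    · intro x hx
      obtain ⟨a, ha, rfl⟩ := (hmem e x).mp hx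
      refine (hmem (e + w mu) (a * e)).mpr ⟨a * e, mul_mem ha heA, ?_⟩
      rw [mul_assoc, mul_add, heidem, her]
      simp
    · intro hle
      have hrmem : w mu ∈ M (e + w mu) :=
        (hmem _ _).mpr ⟨w mu, hrA, by rw [mul_add, hre, hridem]; simp⟩
      have := hle hrmem
      obtain ⟨a, ha, hae⟩ := (hmem e (w mu)).mp this
      apply hrne
      have h2 : w mu * e = w mu := by rw [← hae, mul_assoc, heidem]
      rw [hre] at h2
      exact h2.symm
  haveI := hMfin (e + w mu) herA
  have := Submodule.finrank_lt_finrank_of_lt hlt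
  exact absurd (hmaxim (e + w mu) herA herstar heridem) (by omega)

private lemma unit_of_B (A : NonUnitalStarSubalgebra ℂ B)
    (hcomm : ∀ x ∈ A, ∀ y ∈ A, x * y = y * x)
    (hmax : ∀ C : NonUnitalStarSubalgebra ℂ B, IsClosed (C : Set B) →
      (∀ x ∈ C, ∀ y ∈ C, x * y = y * x) → A ≤ C → C = A)
    (e : B) (heA : e ∈ A) (hestar : star e = e) (heidem : e * e = e)
    (hunitA : ∀ a ∈ A, e * a = a ∧ a * e = a) :
    ∀ x : B, e * x = x ∧ x * e = x := by
  -- selfadjoint elements killed by e on both sides vanish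
  have hkill : ∀ y : B, star y = y → e * y = 0 → y * e = 0 → y = 0 := by
    intro y hy h1 h2
    have hyA : y ∈ A := by
      apply key_commutant A hcomm hmax y hy
      intro a ha
      have ha1 : a * e = a := (hunitA a ha).2
      have ha2 : e * a = a := (hunitA a ha).1
      calc a * y = (a * e) * y := by rw [ha1]
        _ = a * (e * y) := by rw [mul_assoc]
        _ = 0 := by rw [h1, mul_zero]
        _ = (y * e) * a := by rw [h2, zero_mul]
        _ = y * (e * a) := by rw [mul_assoc]
        _ = y * a := by rw [ha2]
    have := (hunitA y hyA).1
    rw [h1] at this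
    exact this.symm
  intro x
  -- first: the (1-e)-corner of x vanishes
  have hucorner : ∀ u : B, e * u = 0 → u * e = 0 → e * star u = 0 → star u * e = 0 → u = 0 := by
    intro u h1 h2 h3 h4
    have hy1 : u + star u = 0 := by
      apply hkill _ (by rw [star_add, star_star, add_comm])
      · rw [mul_add, h1, h3, add_zero]
      · rw [add_mul, h2, h4, add_zero]
    have hy2 : Complex.I • (u - star u) = 0 := by
      apply hkill
      · rw [star_smul, star_sub, star_star, Complex.star_def, Complex.conj_I, neg_smul, ← smul_neg,
          neg_sub]
      · rw [mul_smul_comm, mul_sub, h1, h3, sub_zero, smul_zero]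
      · rw [smul_mul_assoc, sub_mul, h2, h4, sub_zero, smul_zero]
    have hy2' : u - star u = 0 := by
      have := smul_eq_zero.mp hy2
      rcases this with h | h
      · exact absurd h Complex.I_ne_zero
      · exact h
    have : (2 : ℂ) • u = 0 := by
      have hrw : (2 : ℂ) • u = (u + star u) + (u - star u) := by
        push_cast
        rw [two_smul]
        abel
      rw [hrw, hy1, hy2', add_zero]
    simpa using smul_eq_zero.mp this
  have hee : ∀ y : B, y * e * e = y * e := fun y => by rw [mul_assoc, heidem]
  have hu : x - e * x - x * e + e * x * e = 0 := by
    apply hucorner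
    · simp only [star_add, star_sub, star_mul, star_star, hestar, mul_sub, sub_mul, mul_add,
        add_mul, ← mul_assoc, heidem, hee]
      abel
    · simp only [star_add, star_sub, star_mul, star_star, hestar, mul_sub, sub_mul, mul_add,
        add_mul, ← mul_assoc, heidem, hee]
      abel
    · simp only [star_add, star_sub, star_mul, star_star, hestar, mul_sub, sub_mul, mul_add,
        add_mul, ← mul_assoc, heidem, hee]
      abel
    · simp only [star_add, star_sub, star_mul, star_star, hestar, mul_sub, sub_mul, mul_add,
        add_mul, ← mul_assoc, heidem, hee]
      abel
  -- next: the two off-diagonal corners vanish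
  have hz1 : e * x - e * x * e = 0 := by
    set z := e * x - e * x * e with hz
    have hez : e * z = z := by
      rw [hz]
      simp only [mul_sub, ← mul_assoc, heidem]
    have hze : z * e = 0 := by
      rw [hz]
      simp only [sub_mul, ← mul_assoc, heidem, hee]
      abel
    have hv : star z * z = 0 := by
      apply hkill
      · rw [star_mul, star_star]
      · have : e * star z = star (z * e) := by rw [star_mul, hestar]
        rw [← mul_assoc, this, hze, star_zero, zero_mul]
      · rw [mul_assoc, hze, mul_zero]
    exact star_mul_self_zero z hv
  have hz2 : x * e - e * x * e = 0 := by
    set z := x * e - e * x * e with hz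
    have hze : z * e = z := by
      rw [hz]
      simp only [sub_mul, mul_assoc, heidem]
    have hez : e * z = 0 := by
      rw [hz]
      simp only [mul_sub, ← mul_assoc, heidem, hee]
      abel
    have hv : z * star z = 0 := by
      apply hkill
      · rw [star_mul, star_star]
      · rw [← mul_assoc, hez, zero_mul]
      · have : star z * e = star (e * z) := by rw [star_mul, hestar]
        rw [mul_assoc, this, hez, star_zero, mul_zero]
    have : star (star z) * star z = 0 := by rw [star_star]; exact hv
    have hzz := star_mul_self_zero (star z) this
    rw [← star_star z, hzz, star_zero]
  -- combine
  have hxe : x * e = e * x * e := by rw [← sub_eq_zero]; exact hz2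
  have hex : e * x = e * x * e := by rw [← sub_eq_zero]; exact hz1
  have hxx : x = e * x * e := by
    have h := hu
    rw [hex, hxe] at h
    have h2 : e * x * e * e = e * x * e := by rw [mul_assoc, heidem]
    rw [h2] at h
    have h3 : x - e * x * e = 0 := by rw [← h]; abel
    rw [← sub_eq_zero]
    exact h3
  constructor
  · rw [hex, ← hxx]
  · rw [hxe, ← hxx]

private lemma minimal_decomp (A : NonUnitalStarSubalgebra ℂ B) (hfin : FiniteDimensional ℂ A)
    (hcomm : ∀ x ∈ A, ∀ y ∈ A, x * y = y * x) :
    ∀ n : ℕ, ∀ q : B, q ∈ A → star q = q → q * q = q →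
      Module.finrank ℂ
        (Submodule.map (LinearMap.mulRight ℂ q) A.toNonUnitalSubalgebra.toSubmodule) ≤ n →
      ∃ s : Finset B,
        (∀ p ∈ s, p ∈ A ∧ star p = p ∧ p * p = p ∧ p ≠ 0 ∧ p * q = p ∧
          (∀ a ∈ A, ∃ c : ℂ, a * p = c • p)) ∧
        (∀ p ∈ s, ∀ p' ∈ s, p ≠ p' → p * p' = 0) ∧
        q = ∑ p ∈ s, p := by
  classical
  set Asub : Submodule ℂ B := A.toNonUnitalSubalgebra.toSubmodule with hAsub
  haveI : FiniteDimensional ℂ Asub := hfin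
  set M : B → Submodule ℂ B := fun p => Submodule.map (LinearMap.mulRight ℂ p) Asub with hM
  have hmem : ∀ p x, x ∈ M p ↔ ∃ a ∈ A, a * p = x := by
    intro p x
    constructor
    · rintro ⟨a, ha, rfl⟩; exact ⟨a, ha, rfl⟩
    · rintro ⟨a, ha, rfl⟩; exact ⟨a, ha, rfl⟩
  have hMle : ∀ p, p ∈ A → M p ≤ Asub := by
    intro p hp x hx
    obtain ⟨a, ha, rfl⟩ := (hmem p x).mp hx
    have : a * p ∈ A := mul_mem ha hp
    exact this
  have hMfin : ∀ p, p ∈ A → FiniteDimensional ℂ (M p) := fun p hp =>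
    Submodule.finiteDimensional_of_le (hMle p hp)
  intro n
  induction n with
  | zero =>
    intro q hqA hqsa hqidem hrank
    refine ⟨∅, by simp, by simp, ?_⟩
    haveI := hMfin q hqA
    have hbot : M q = ⊥ := Submodule.finrank_eq_zero.mp (Nat.le_zero.mp hrank)
    have hqmem : q ∈ M q := (hmem q q).mpr ⟨q, hqA, hqidem⟩
    rw [hbot] at hqmem
    simpa using hqmem
  | succ n ih =>
    intro q hqA hqsa hqidem hrank
    by_cases hminq : ∀ a ∈ A, ∃ c : ℂ, a * q = c • q
    · rcases eq_or_ne q 0 with rfl | hq0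
      · exact ⟨∅, by simp, by simp, by simp⟩
      · refine ⟨{q}, ?_, ?_, by simp⟩
        · intro p hp
          rw [Finset.mem_singleton] at hp
          subst hp
          exact ⟨hqA, hqsa, hqidem, hq0, hqidem, hminq⟩
        · intro p hp p' hp' hne
          rw [Finset.mem_singleton] at hp hp'
          exact absurd (hp.trans hp'.symm) hne
    · push_neg at hminq
      obtain ⟨a, haA, hanc⟩ := hminq
      -- produce a selfadjoint witness
      have hconstr : ∀ g, g ∈ A → star g = g → (∀ c : ℂ, g * q ≠ c • q) →
          ∃ b, b ∈ A ∧ star b = b ∧ b * q = b ∧ (∀ c : ℂ, b ≠ c • q) ∧ b ≠ 0 := by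
        intro g hgA hgsa hgnc
        refine ⟨g * q, mul_mem hgA hqA, ?_, by rw [mul_assoc, hqidem], hgnc, ?_⟩
        · rw [star_mul, hgsa, hqsa]
          exact hcomm q hqA g hgA
        · intro h0
          exact hgnc 0 (by rw [h0, zero_smul])
      have hor : (∀ c : ℂ, (a + star a) * q ≠ c • q) ∨
          (∀ c : ℂ, (Complex.I • (a - star a)) * q ≠ c • q) := by
        by_contra hcon
        push_neg at hcon
        obtain ⟨⟨c₁, hc₁⟩, c₂, hc₂⟩ := hcon
        apply hanc ((2⁻¹ : ℂ) * (c₁ + (-Complex.I) * c₂))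
        have hrep : a = (2⁻¹ : ℂ) • ((a + star a) + (-Complex.I) • (Complex.I • (a - star a))) := by
          rw [smul_smul]
          simp [Complex.I_mul_I]
          module
        conv_lhs => rw [hrep]
        rw [smul_mul_assoc, add_mul, smul_mul_assoc, hc₁, hc₂, smul_smul]
        rw [← add_smul, smul_smul]
      have hb : ∃ b, b ∈ A ∧ star b = b ∧ b * q = b ∧ (∀ c : ℂ, b ≠ c • q) ∧ b ≠ 0 := by
        rcases hor with h | h
        · exact hconstr _ (add_mem haA (star_mem haA))
            (by rw [star_add, star_star, add_comm]) h
        · refine hconstr _ (SMulMemClass.smul_mem _ (sub_mem haA (star_mem haA))) ?_ h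
          rw [star_smul, star_sub, star_star, Complex.star_def, Complex.conj_I, neg_smul,
            ← smul_neg, neg_sub]
      obtain ⟨b, hbA, hbsa, hbq, hbnc, hbne⟩ := hb
      obtain ⟨T, w, hw1, hw2, hw3⟩ := spectral_decomp A hfin b hbA hbsa
      have hTne : T.Nonempty := by
        rcases Finset.eq_empty_or_nonempty T with rfl | h
        · exact absurd (by simpa using hw3) hbne
        · exact h
      obtain ⟨mu0, hmu0⟩ := hTne
      obtain ⟨hrA, hrsa, hridem, hrne, c, a', ha', hrform⟩ := hw1 mu0 hmu0
      have hwq : ∀ mu ∈ T, w mu * q = w mu := by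
        intro mu hmu
        obtain ⟨hA', _, _, _, c', a'', ha'', hform⟩ := hw1 mu hmu
        rw [hform, add_mul, smul_mul_assoc, hbq, mul_assoc, hcomm a'' ha'' q hqA, ← mul_assoc,
          hbq]
      have hqw : ∀ mu ∈ T, q * w mu = w mu := fun mu hmu => by
        rw [← hcomm _ (hw1 mu hmu).1 q hqA]; exact hwq mu hmu
      set r : B := w mu0 with hrdef
      have hrq : r * q = r := hwq mu0 hmu0
      have hqr : q * r = r := hqw mu0 hmu0
      set s' : B := q - r with hs'def
      have hs'A : s' ∈ A := sub_mem hqA hrA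
      have hs'sa : star s' = s' := by rw [hs'def, star_sub, hqsa, hrsa]
      have hrs' : r * s' = 0 := by rw [hs'def, mul_sub, hrq, hridem, sub_self]
      have hs'r : s' * r = 0 := by rw [hs'def, sub_mul, hqr, hridem, sub_self]
      have hs'idem : s' * s' = s' := by
        rw [hs'def, sub_mul, mul_sub, mul_sub, hqidem, hqr, hrq, hridem]
        abel
      have hs'q : s' * q = s' := by rw [hs'def, sub_mul, hqidem, hrq]
      have hs'ne : s' ≠ 0 := by
        intro h0
        have hqreq : q = r := by rwa [hs'def, sub_eq_zero] at h0
        by_cases hT1 : ∃ nu ∈ T, nu ≠ mu0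
        · obtain ⟨nu, hnu, hnune⟩ := hT1
          have hz : s' * w nu = w nu := by
            rw [hs'def, sub_mul, hqw nu hnu, hw2 mu0 hmu0 nu hnu (Ne.symm hnune), sub_zero]
          rw [h0, zero_mul] at hz
          exact (hw1 nu hnu).2.2.2.1 hz.symm
        · push_neg at hT1
          have hTeq : T = {mu0} :=
            Finset.Subset.antisymm (fun nu hnu => Finset.mem_singleton.mpr (hT1 nu hnu))
              (Finset.singleton_subset_iff.mpr hmu0)
          rw [hTeq, Finset.sum_singleton] at hw3
          exact hbnc mu0 (by rw [hw3, hqreq])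
      -- strict decrease of corner dimension
      have hdec : ∀ r1 s1 : B, r1 ∈ A → s1 ∈ A → r1 * q = r1 → r1 * r1 = r1 → s1 * q = s1 →
          s1 * r1 = 0 → s1 ≠ 0 → Module.finrank ℂ (M r1) < Module.finrank ℂ (M q) := by
        intro r1 s1 hr1A hs1A hr1q hr1idem hs1q hs1r1 hs1ne
        haveI := hMfin q hqA
        apply Submodule.finrank_lt_finrank_of_lt
        constructor
        · intro x hx
          obtain ⟨a2, ha2, rfl⟩ := (hmem r1 x).mp hx
          exact (hmem q _).mpr ⟨a2 * r1, mul_mem ha2 hr1A, by rw [mul_assoc, hr1q]⟩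
        · intro hle
          have hs1mem : s1 ∈ M q := (hmem q s1).mpr ⟨s1, hs1A, hs1q⟩
          obtain ⟨a2, ha2, hae⟩ := (hmem r1 s1).mp (hle hs1mem)
          apply hs1ne
          have h2 : s1 * r1 = s1 := by rw [← hae, mul_assoc, hr1idem]
          rw [hs1r1] at h2
          exact h2.symm
      have hrank' : Module.finrank ℂ (M q) ≤ n + 1 := hrank
      have hfr : Module.finrank ℂ (M r) ≤ n := by
        have := hdec r s' hrA hs'A hrq hridem hs'q hs'r hs'ne
        omega
      have hfs : Module.finrank ℂ (M s') ≤ n := by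
        have := hdec s' r hs'A hrA hs'q hs'idem hrq hrs' hrne
        omega
      obtain ⟨sr, hsr1, hsr2, hsr3⟩ := ih r hrA hrsa hridem hfr
      obtain ⟨ss, hss1, hss2, hss3⟩ := ih s' hs'A hs'sa hs'idem hfs
      have hdisj : Disjoint sr ss := by
        rw [Finset.disjoint_left]
        intro p hpr hps
        have hp1 := hsr1 p hpr
        have hp2 := hss1 p hps
        apply hp1.2.2.2.1
        calc p = p * r := hp1.2.2.2.2.1.symm
          _ = (p * s') * r := by rw [hp2.2.2.2.2.1]
          _ = p * (s' * r) := by rw [mul_assoc]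
          _ = 0 := by rw [hs'r, mul_zero]
      refine ⟨sr ∪ ss, ?_, ?_, ?_⟩
      · intro p hp
        rcases Finset.mem_union.mp hp with h | h
        · have hp1 := hsr1 p h
          refine ⟨hp1.1, hp1.2.1, hp1.2.2.1, hp1.2.2.2.1, ?_, hp1.2.2.2.2.2⟩
          rw [← hp1.2.2.2.2.1, mul_assoc, hrq]
        · have hp1 := hss1 p h
          refine ⟨hp1.1, hp1.2.1, hp1.2.2.1, hp1.2.2.2.1, ?_, hp1.2.2.2.2.2⟩
          rw [← hp1.2.2.2.2.1, mul_assoc, hs'q]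
      · intro p hp p' hp' hne
        rcases Finset.mem_union.mp hp with h | h <;> rcases Finset.mem_union.mp hp' with h' | h'
        · exact hsr2 p h p' h' hne
        · have hp1 := hsr1 p h
          have hp2 := hss1 p' h'
          have h2 : s' * p' = p' := by
            rw [hcomm s' hs'A p' hp2.1]; exact hp2.2.2.2.2.1
          calc p * p' = (p * r) * (s' * p') := by rw [hp1.2.2.2.2.1, h2]
            _ = p * ((r * s') * p') := by rw [mul_assoc, ← mul_assoc r s' p']
            _ = 0 := by rw [hrs', zero_mul, mul_zero]
        · have hp1 := hss1 p h
          have hp2 := hsr1 p' h'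
          have h2 : r * p' = p' := by
            rw [hcomm r hrA p' hp2.1]; exact hp2.2.2.2.2.1
          calc p * p' = (p * s') * (r * p') := by rw [hp1.2.2.2.2.1, h2]
            _ = p * ((s' * r) * p') := by rw [mul_assoc, ← mul_assoc s' r p']
            _ = 0 := by rw [hs'r, zero_mul, mul_zero]
        · exact hss2 p h p' h' hne
      · rw [Finset.sum_union hdisj, ← hsr3, ← hss3, hs'def]
        abel

private lemma corner_scalar (A : NonUnitalStarSubalgebra ℂ B)
    (hcomm : ∀ x ∈ A, ∀ y ∈ A, x * y = y * x)
    (hmax : ∀ C : NonUnitalStarSubalgebra ℂ B, IsClosed (C : Set B) →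
      (∀ x ∈ C, ∀ y ∈ C, x * y = y * x) → A ≤ C → C = A)
    (p : B) (hpA : p ∈ A) (hpsa : star p = p) (hpidem : p * p = p)
    (hpmin : ∀ a ∈ A, ∃ c : ℂ, a * p = c • p) :
    ∀ x : B, p * x * p = x → ∃ c : ℂ, x = c • p := by
  have hsa : ∀ x : B, star x = x → p * x * p = x → ∃ c : ℂ, x = c • p := by
    intro x hxsa hcor
    have hxA : x ∈ A := by
      apply key_commutant A hcomm hmax x hxsa
      intro a ha
      obtain ⟨c, hc⟩ := hpmin a ha
      have hpa : p * a = a * p := hcomm p hpA a ha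
      have h1 : a * x = c • x := by
        calc a * x = a * (p * x * p) := by rw [hcor]
          _ = ((a * p) * x) * p := by rw [← mul_assoc, ← mul_assoc]
          _ = ((c • p) * x) * p := by rw [hc]
          _ = c • (p * x * p) := by rw [smul_mul_assoc, smul_mul_assoc]
          _ = c • x := by rw [hcor]
      have h2 : x * a = c • x := by
        calc x * a = (p * x * p) * a := by rw [hcor]
          _ = (p * x) * (p * a) := by rw [mul_assoc (p * x) p a]
          _ = (p * x) * (a * p) := by rw [hpa]
          _ = (p * x) * (c • p) := by rw [hc]
          _ = c • ((p * x) * p) := by rw [mul_smul_comm]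
          _ = c • x := by rw [hcor]
      rw [h1, h2]
    obtain ⟨c, hc⟩ := hpmin x hxA
    refine ⟨c, ?_⟩
    calc x = p * x * p := hcor.symm
      _ = p * (c • p) := by rw [mul_assoc, hc]
      _ = c • (p * p) := by rw [mul_smul_comm]
      _ = c • p := by rw [hpidem]
  intro x hcor
  have hstarcor : p * star x * p = star x := by
    have h := congrArg star hcor
    rw [star_mul, star_mul, hpsa] at h
    rw [← mul_assoc] at h
    exact h
  have hh := hsa ((2⁻¹ : ℂ) • (x + star x))
    (by rw [star_smul, star_add, star_star, add_comm]; norm_num)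
    (by rw [mul_smul_comm, smul_mul_assoc, mul_add, add_mul, hcor, hstarcor])
  have hk := hsa ((2⁻¹ * Complex.I) • (star x - x))
    (by
      rw [star_smul, star_sub, star_star]
      rw [show star ((2⁻¹ : ℂ) * Complex.I) = -(2⁻¹ * Complex.I) from by
        simp [Complex.ext_iff]]
      rw [neg_smul, ← smul_neg, neg_sub])
    (by rw [mul_smul_comm, smul_mul_assoc, mul_sub, sub_mul, hcor, hstarcor])
  obtain ⟨c₁, hc₁⟩ := hh
  obtain ⟨c₂, hc₂⟩ := hk
  refine ⟨c₁ + Complex.I * c₂, ?_⟩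
  have hrep : x = (2⁻¹ : ℂ) • (x + star x) + Complex.I • ((2⁻¹ * Complex.I) • (star x - x)) := by
    rw [smul_smul, show Complex.I * (2⁻¹ * Complex.I) = -2⁻¹ from by
      rw [mul_comm (2⁻¹ : ℂ) Complex.I, ← mul_assoc, Complex.I_mul_I]; norm_num]
    module
  rw [hrep, hc₁, hc₂, smul_smul, ← add_smul]

private lemma corner_rank_one (A : NonUnitalStarSubalgebra ℂ B)
    (hcomm : ∀ x ∈ A, ∀ y ∈ A, x * y = y * x)
    (hmax : ∀ C : NonUnitalStarSubalgebra ℂ B, IsClosed (C : Set B) →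
      (∀ x ∈ C, ∀ y ∈ C, x * y = y * x) → A ≤ C → C = A)
    (p p' : B) (hpA : p ∈ A) (hpsa : star p = p) (hpidem : p * p = p)
    (hpmin : ∀ a ∈ A, ∃ c : ℂ, a * p = c • p)
    (hp'A : p' ∈ A) (hp'sa : star p' = p') (hp'idem : p' * p' = p')
    (hp'min : ∀ a ∈ A, ∃ c : ℂ, a * p' = c • p') :
    ∃ u : B, ∀ x : B, p * x * p' = x → ∃ c : ℂ, x = c • u := by
  by_cases hex : ∃ u : B, (p * u * p' = u ∧ u ≠ 0)
  · obtain ⟨u, hu, hune⟩ := hex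
    have hpu : p * u = u := by
      conv_lhs => rw [← hu]
      rw [← mul_assoc, ← mul_assoc, hpidem]
      exact hu
    have hup' : u * p' = u := by
      conv_lhs => rw [← hu]
      rw [mul_assoc, hp'idem]
      exact hu
    have hsup : star u * p = star u := by
      rw [← hpsa, ← star_mul, hpu]
    have hp'su : p' * star u = star u := by
      rw [← hp'sa, ← star_mul, hup']
    -- star u * u is a scalar multiple of p'
    have hsucor : p' * (star u * u) * p' = star u * u := by
      rw [← mul_assoc, hp'su, mul_assoc, hup']
    obtain ⟨al, hal⟩ := corner_scalar A hcomm hmax p' hp'A hp'sa hp'idem hp'min _ hsucor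
    have halne : al ≠ 0 := by
      intro h0
      rw [h0, zero_smul] at hal
      exact hune (star_mul_self_zero u hal)
    refine ⟨u, ?_⟩
    intro x hx
    have hpx : p * x = x := by
      conv_lhs => rw [← hx]
      rw [← mul_assoc, ← mul_assoc, hpidem]
      exact hx
    have hxp' : x * p' = x := by
      conv_lhs => rw [← hx]
      rw [mul_assoc, hp'idem]
      exact hx
    have hsxcor : p' * (star u * x) * p' = star u * x := by
      rw [← mul_assoc, hp'su, mul_assoc, hxp']
    obtain ⟨be, hbe⟩ := corner_scalar A hcomm hmax p' hp'A hp'sa hp'idem hp'min _ hsxcor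
    set y : B := x - (be / al) • u with hy
    have hsuy : star u * y = 0 := by
      rw [hy, mul_sub, mul_smul_comm, hal, hbe, smul_smul, div_mul_cancel₀ _ halne, sub_self]
    have hysucor : p * (y * star u) * p = y * star u := by
      have hpy : p * y = y := by rw [hy, mul_sub, hpx, mul_smul_comm, hpu]
      rw [← mul_assoc, hpy, mul_assoc, hsup]
    obtain ⟨de, hde⟩ := corner_scalar A hcomm hmax p hpA hpsa hpidem hpmin _ hysucor
    have hde0 : de = 0 := by
      by_contra hne0
      have h1 : star u * (y * star u) = 0 := by rw [← mul_assoc, hsuy, zero_mul]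
      rw [hde, mul_smul_comm, hsup] at h1
      rcases smul_eq_zero.mp h1 with h | h
      · exact hne0 h
      · exact hune (by rw [← star_star u, h, star_zero])
    have hysu : y * star u = 0 := by rw [hde, hde0, zero_smul]
    have hyp' : y * p' = y := by rw [hy, sub_mul, hxp', smul_mul_assoc, hup']
    have h2 : al • y = 0 := by
      have h3 : y * (star u * u) = 0 := by rw [← mul_assoc, hysu, zero_mul]
      rw [hal, mul_smul_comm, hyp'] at h3
      exact h3
    have hy0 : y = 0 := by
      rcases smul_eq_zero.mp h2 with h | h
      · exact absurd h halne
      · exact h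
    rw [hy] at hy0
    exact ⟨be / al, sub_eq_zero.mp hy0⟩
  · refine ⟨0, ?_⟩
    intro x hx
    refine ⟨0, ?_⟩
    rw [zero_smul]
    by_contra hxne
    exact hex ⟨x, hx, hxne⟩


end Aux

/-- Every maximal abelian *-subalgebra (MASA) of an infinite-dimensional C*-algebra is
infinite-dimensional. -/
theorem masa_of_infinite_dimensional_cstar_is_infinite_dimensional
    {B : Type*} [NonUnitalNormedRing B] [StarRing B] [CStarRing B] [NormedSpace ℂ B]
    [IsScalarTower ℂ B B] [SMulCommClass ℂ B B] [StarModule ℂ B] [CompleteSpace B]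
    (hB : ¬ FiniteDimensional ℂ B)
    (A : NonUnitalStarSubalgebra ℂ B)
    (hA : IsClosed (A : Set B))
    (hcomm : ∀ x ∈ A, ∀ y ∈ A, x * y = y * x)
    (hmax : ∀ C : NonUnitalStarSubalgebra ℂ B, IsClosed (C : Set B) →
      (∀ x ∈ C, ∀ y ∈ C, x * y = y * x) → A ≤ C → C = A) :
    ¬ FiniteDimensional ℂ A := by
  intro hfinA
  apply hB
  classical
  obtain ⟨e, heA, hesa, heidem, hunitA⟩ := exists_unit A hfinA hcomm
  have hunitB := unit_of_B A hcomm hmax e heA hesa heidem hunitA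
  obtain ⟨s, hs1, hs2, hs3⟩ := minimal_decomp A hfinA hcomm
    (Module.finrank ℂ
      (Submodule.map (LinearMap.mulRight ℂ e) A.toNonUnitalSubalgebra.toSubmodule))
    e heA hesa heidem le_rfl
  have hQ : ∀ p ∈ s, ∀ p' ∈ s, ∃ u : B, ∀ x : B, p * x * p' = x → ∃ c : ℂ, x = c • u := by
    intro p hp p' hp'
    obtain ⟨h1, h2, h3, _, _, h6⟩ := hs1 p hp
    obtain ⟨h1', h2', h3', _, _, h6'⟩ := hs1 p' hp'
    exact corner_rank_one A hcomm hmax p p' h1 h2 h3 h6 h1' h2' h3' h6'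
  choose! u hu using hQ
  set gens : Finset B := (s ×ˢ s).image (fun pp => u pp.1 pp.2) with hgens
  have htop : (⊤ : Submodule ℂ B) ≤ Submodule.span ℂ (gens : Set B) := by
    intro x _
    have hx : x = ∑ p ∈ s, ∑ p' ∈ s, p * x * p' := by
      calc x = (e * x) * e := by rw [(hunitB x).1, (hunitB x).2]
        _ = ((∑ p ∈ s, p) * x) * (∑ p' ∈ s, p') := by rw [← hs3]
        _ = ∑ p ∈ s, ∑ p' ∈ s, p * x * p' := by
            rw [Finset.sum_mul, Finset.sum_mul]
            exact Finset.sum_congr rfl fun p _ => Finset.mul_sum _ _ _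
    rw [hx]
    apply Submodule.sum_mem
    intro p hp
    apply Submodule.sum_mem
    intro p' hp'
    have hpidem := (hs1 p hp).2.2.1
    have hp'idem := (hs1 p' hp').2.2.1
    have hcor : p * (p * x * p') * p' = p * x * p' := by
      rw [← mul_assoc, ← mul_assoc, hpidem, mul_assoc (p * x) p' p', hp'idem]
    obtain ⟨c, hc⟩ := hu p hp p' hp' _ hcor
    rw [hc]
    refine Submodule.smul_mem _ _ (Submodule.subset_span ?_)
    exact Finset.mem_coe.mpr (Finset.mem_image.mpr
      ⟨(p, p'), Finset.mem_product.mpr ⟨hp, hp'⟩, rfl⟩)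
  exact Module.finite_def.mpr ⟨gens, eq_top_iff.mpr htop⟩
end

section
/- Let A be a SAW*-algebra and (\phi_n) a sequence of states on A. Suppose there is a sequence (a_n) of pairwise orthogonal positive elements in A with \|a_n\| = \phi_n(a_n) = 1 and \phi_n(a_m) = 0 for m \ne n. Then for every D \subseteq \mathbb{N}, the weak*-closures of \{\phi_n : n \in D\} and \{\phi_n : n \in D^c\} are disjoint. -/
open scoped ComplexOrder

/-- A C*-algebra is a SAW*-algebra if for any two orthogonal positive elements `x, y`
there is a positive `e` with `e x = x` and `e y = 0`. -/
def IsSAWStar (A : Type*) [NonUnitalRing A] [PartialOrder A] : Prop :=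
  ∀ x y : A, 0 ≤ x → 0 ≤ y → x * y = 0 → ∃ e : A, 0 ≤ e ∧ e * x = x ∧ e * y = 0

/-- A state, as an element of the weak* dual of a unital C*-algebra. -/
def IsState {A : Type*} [NormedRing A] [StarRing A] [NormedAlgebra ℂ A]
    (φ : WeakDual ℂ A) : Prop :=
  φ 1 = 1 ∧ ∀ x : A, 0 ≤ φ (star x * x)

section aux

variable {A : Type*} [CStarAlgebra A] [PartialOrder A] [StarOrderedRing A]

lemma smul_nonneg'' {r : ℝ} (hr : 0 ≤ r) {a : A} (ha : 0 ≤ a) : 0 ≤ (r : ℂ) • a := by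
  have hs : star (CFC.sqrt a) = CFC.sqrt a := (CFC.sqrt_nonneg (a := a)).isSelfAdjoint.star_eq
  have key : (r : ℂ) • a
      = star (((Real.sqrt r : ℝ) : ℂ) • CFC.sqrt a) * (((Real.sqrt r : ℝ) : ℂ) • CFC.sqrt a) := by
    rw [star_smul, hs, smul_mul_smul_comm, CFC.sqrt_mul_sqrt_self a ha]
    congr 1
    rw [RCLike.star_def, Complex.conj_ofReal, ← Complex.ofReal_mul, Real.mul_self_sqrt hr]
  rw [key]
  exact star_mul_self_nonneg _

variable {φ : WeakDual ℂ A}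

lemma state_nonneg (hφ : IsState φ) {p : A} (hp : 0 ≤ p) : 0 ≤ φ p := by
  have h := hφ.2 (CFC.sqrt p)
  rwa [(CFC.sqrt_nonneg (a := p)).isSelfAdjoint.star_eq, CFC.sqrt_mul_sqrt_self p hp] at h

lemma state_mono (hφ : IsState φ) {p q : A} (h : p ≤ q) : φ p ≤ φ q := by
  have h2 := state_nonneg hφ (sub_nonneg.2 h)
  rw [map_sub] at h2
  rw [Complex.nonneg_iff] at h2
  rw [Complex.le_def]
  constructor
  · have := h2.1; simp [Complex.sub_re] at this; linarith
  · have := h2.2; simp [Complex.sub_im] at this; linarith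

lemma state_star (hφ : IsState φ) (z : A) : φ (star z) = starRingEnd ℂ (φ z) := by
  -- selfadjoint elements have real values
  have hreal : ∀ x : A, IsSelfAdjoint x → (φ x).im = 0 := by
    intro x hx
    have h1 : 0 ≤ φ (x⁺) := state_nonneg hφ (CFC.posPart_nonneg x)
    have h2 : 0 ≤ φ (x⁻) := state_nonneg hφ (CFC.negPart_nonneg x)
    have h3 : φ x = φ (x⁺) - φ (x⁻) := by
      rw [← map_sub, CFC.posPart_sub_negPart x hx]
    rw [Complex.nonneg_iff] at h1 h2
    rw [h3, Complex.sub_im, ← h1.2, ← h2.2]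
    ring
  have e1 : (φ (z + star z)).im = 0 := by
    apply hreal
    simp [IsSelfAdjoint, star_add, add_comm]
  have e2 : (φ (Complex.I • (z - star z))).im = 0 := by
    apply hreal
    simp only [IsSelfAdjoint, star_smul, star_sub, star_star, RCLike.star_def,
      Complex.conj_I, neg_smul, smul_sub, neg_sub]
    abel
  rw [map_add] at e1
  rw [map_smul, smul_eq_mul, map_sub] at e2
  set u := φ z
  set v := φ (star z)
  rw [Complex.add_im] at e1
  rw [Complex.mul_im, Complex.I_re, Complex.I_im, Complex.sub_re, Complex.sub_im] at e2
  apply Complex.ext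
  · simpa using by linarith [e2]
  · simpa using by linarith [e1]

lemma state_re_zero_aux (hφ : IsState φ) {c : A} (hc : IsSelfAdjoint c)
    (hcc : φ (c * c) = 0) (b : A) : (φ (b * c)).re = 0 := by
  by_contra hne
  -- for every real t, 0 ≤ φ (b * star b) + 2 t Re φ (b c)
  have key : ∀ t : ℝ, 0 ≤ (φ (b * star b)).re + 2 * t * (φ (b * c)).re := by
    intro t
    have hpos := hφ.2 (star b + (t : ℂ) • c)
    have hexp : star (star b + (t : ℂ) • c) * (star b + (t : ℂ) • c)
        = b * star b + (t : ℂ) • (b * c) + (t : ℂ) • (c * star b)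
          + ((t : ℂ) * t) • (c * c) := by
      rw [star_add, star_star, star_smul, RCLike.star_def, Complex.conj_ofReal, hc.star_eq]
      rw [add_mul, mul_add, mul_add, smul_mul_assoc, smul_mul_assoc, mul_smul_comm,
        mul_smul_comm, smul_smul]
      abel
    rw [hexp, map_add, map_add, map_add, map_smul, map_smul, map_smul, smul_eq_mul,
      smul_eq_mul, smul_eq_mul, hcc, mul_zero, add_zero] at hpos
    have hcb : φ (c * star b) = starRingEnd ℂ (φ (b * c)) := by
      have : c * star b = star (b * c) := by rw [star_mul, hc.star_eq]
      rw [this, state_star hφ]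
    rw [hcb] at hpos
    rw [Complex.nonneg_iff] at hpos
    have := hpos.1
    simp only [Complex.add_re, Complex.mul_re, Complex.ofReal_re, Complex.ofReal_im,
      Complex.conj_re, Complex.conj_im, zero_mul, sub_zero, mul_neg, sub_neg_eq_add] at this
    linarith
  -- choose t making the expression negative
  set u := (φ (b * c)).re
  have := key (-(((φ (b * star b)).re + 1) / (2 * u)) )
  rw [mul_comm (2:ℝ) _, mul_assoc] at this
  have hu2 : (-(((φ (b * star b)).re + 1) / (2 * u))) * (2 * u) = -((φ (b * star b)).re + 1) := by
    field_simp
  nlinarith [this, hu2]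

lemma state_mul_cancel (hφ : IsState φ) {c : A} (hc : IsSelfAdjoint c)
    (hcc : φ (c * c) = 0) (b : A) : φ (b * c) = 0 := by
  have h1 := state_re_zero_aux hφ hc hcc b
  have h2 := state_re_zero_aux hφ hc hcc (Complex.I • b)
  rw [smul_mul_assoc, map_smul, smul_eq_mul, Complex.mul_re, Complex.I_re, Complex.I_im] at h2
  apply Complex.ext
  · exact h1
  · simpa using by linarith [h2]

lemma state_absorb (hφ : IsState φ) {a : A} (ha : 0 ≤ a) (hn : ‖a‖ ≤ 1)
    (h1 : φ a = 1) (b : A) : φ (b * a) = φ b := by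
  have hone : (0 : A) ≤ 1 := by simpa using star_mul_self_nonneg (1 : A)
  have ha1 : a ≤ 1 := by
    calc a ≤ algebraMap ℝ A ‖a‖ := IsSelfAdjoint.le_algebraMap_norm_self ha.isSelfAdjoint
    _ ≤ 1 := by
      have : (1 : A) - algebraMap ℝ A ‖a‖ = ((1 - ‖a‖ : ℝ) : ℂ) • 1 := by
        simp [Algebra.algebraMap_eq_smul_one, sub_smul]
      rw [← sub_nonneg, this]
      exact smul_nonneg'' (by linarith) hone
  set c : A := 1 - a with hcdef
  have hc0 : 0 ≤ c := sub_nonneg.2 ha1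
  have hcsa : IsSelfAdjoint c := hc0.isSelfAdjoint
  have hφc : φ c = 0 := by rw [hcdef, map_sub, hφ.1, h1, sub_self]
  -- c * c ≤ c
  have hca : (1 : A) - c = a := by rw [hcdef]; abel
  have hcc_le : c * c ≤ c := by
    obtain ⟨s, hs_sa, hss⟩ : ∃ s : A, star s = s ∧ s * s = c :=
      ⟨CFC.sqrt c, (CFC.sqrt_nonneg (a := c)).isSelfAdjoint.star_eq,
        CFC.sqrt_mul_sqrt_self c hc0⟩
    have hmid : s * c * s = c * c := by rw [← hss]; noncomm_ring
    have hkey : star s * a * s = c - c * c := by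
      calc star s * a * s = s * (1 - c) * s := by rw [hs_sa, hca]
        _ = c - c * c := by rw [mul_sub, mul_one, sub_mul, hss, hmid]
    rw [← sub_nonneg, ← hkey]
    exact star_left_conjugate_nonneg ha _
  have hcc0 : φ (c * c) = 0 := by
    have hle := state_mono hφ hcc_le
    rw [hφc] at hle
    have hge : 0 ≤ φ (c * c) := by
      have := hφ.2 c; rwa [hcsa.star_eq] at this
    exact le_antisymm hle hge
  have := state_mul_cancel hφ hcsa hcc0 b
  rw [hcdef, mul_sub, mul_one, map_sub, sub_eq_zero] at this
  exact this.symm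

end aux

/-- Let `A` be a unital SAW*-algebra, `(φₙ)` states and `(aₙ)` pairwise orthogonal
positive elements with `‖aₙ‖ = φₙ(aₙ) = 1` and `φₙ(aₘ) = 0` for `m ≠ n`.  Then for any
`D ⊆ ℕ` the weak*-closures of `{φₙ : n ∈ D}` and `{φₙ : n ∈ Dᶜ}` are disjoint. -/
theorem sawstar_disjoint_weakstar_closures
    {A : Type*} [NormedRing A] [StarRing A] [CStarRing A] [NormedAlgebra ℂ A]
    [StarModule ℂ A] [CompleteSpace A] [PartialOrder A] [StarOrderedRing A]
    (hA : IsSAWStar A)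
    (φ : ℕ → WeakDual ℂ A) (hφ : ∀ n, IsState (φ n))
    (a : ℕ → A) (hpos : ∀ n, 0 ≤ a n)
    (horth : ∀ m n, m ≠ n → a m * a n = 0)
    (hnorm : ∀ n, ‖a n‖ = 1)
    (heval : ∀ n, φ n (a n) = 1)
    (heval' : ∀ m n, m ≠ n → φ n (a m) = 0)
    (D : Set ℕ) :
    Disjoint (closure (φ '' D)) (closure (φ '' Dᶜ)) := by
  letI : CStarAlgebra A :=
    { ‹NormedRing A›, ‹StarRing A›, ‹CStarRing A›, ‹NormedAlgebra ℂ A›,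
      ‹StarModule ℂ A›, ‹CompleteSpace A› with }
  classical
  have hr0 : ∀ n : ℕ, (0 : ℝ) < (2 : ℝ)⁻¹ ^ n := fun n => pow_pos (by norm_num) n
  let c : ℕ → ℂ := fun n => (((2 : ℝ)⁻¹ ^ n : ℝ) : ℂ)
  have hc0 : ∀ n, c n ≠ 0 := fun n => by
    simp only [c, ne_eq, Complex.ofReal_eq_zero]
    exact (hr0 n).ne'
  let f : ℕ → A := fun n => if n ∈ D then c n • a n else 0
  let g : ℕ → A := fun n => if n ∉ D then c n • a n else 0
  have hfD : ∀ n ∈ D, f n = c n • a n := fun n hn => if_pos hn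
  have hfD' : ∀ n ∉ D, f n = 0 := fun n hn => if_neg hn
  have hgD : ∀ n ∉ D, g n = c n • a n := fun n hn => if_pos hn
  have hgD' : ∀ n ∈ D, g n = 0 := fun n hn => if_neg (by simpa using hn)
  have hcases : ∀ (u : ℕ → A), (∀ n, u n = 0 ∨ u n = c n • a n) → Summable u ∧ ∀ n, 0 ≤ u n := by
    intro u hu
    constructor
    · apply Summable.of_norm_bounded (g := fun n => (2 : ℝ)⁻¹ ^ n)
        (summable_geometric_of_lt_one (by norm_num) (by norm_num))
      intro n
      rcases hu n with h | h <;> rw [h]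
      · simpa using (hr0 n).le
      · rw [norm_smul, Complex.norm_real, hnorm n, mul_one, Real.norm_eq_abs,
          abs_of_pos (hr0 n)]
    · intro n
      rcases hu n with h | h
      · rw [h]
      · rw [h]; exact smul_nonneg'' (hr0 n).le (hpos n)
  have hfc : ∀ n, f n = 0 ∨ f n = c n • a n := fun n => by
    by_cases h : n ∈ D
    · exact Or.inr (hfD n h)
    · exact Or.inl (hfD' n h)
  have hgc : ∀ n, g n = 0 ∨ g n = c n • a n := fun n => by
    by_cases h : n ∈ D
    · exact Or.inl (hgD' n h)
    · exact Or.inr (hgD n h)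
  obtain ⟨hfs, hf0⟩ := hcases f hfc
  obtain ⟨hgs, hg0⟩ := hcases g hgc
  let x : A := ∑' n, f n
  let y : A := ∑' n, g n
  have hx0 : 0 ≤ x := tsum_nonneg hf0
  have hy0 : 0 ≤ y := tsum_nonneg hg0
  have hmulR : ∀ (z : A) (u : ℕ → A), Summable u → (∑' n, u n) * z = ∑' n, u n * z := by
    intro z u hu
    exact ((ContinuousLinearMap.mul ℂ A).flip z).map_tsum hu
  have hmulL : ∀ (z : A) (u : ℕ → A), Summable u → z * (∑' n, u n) = ∑' n, z * u n := by
    intro z u hu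
    exact (ContinuousLinearMap.mul ℂ A z).map_tsum hu
  have hterm : ∀ (u : ℕ → A), (∀ n, u n = 0 ∨ u n = c n • a n) → Summable u →
      ∀ m, (∑' n, u n) * a m = u m * a m := by
    intro u hu hus m
    rw [hmulR _ u hus]
    apply tsum_eq_single m
    intro n hnm
    rcases hu n with h | h <;> rw [h]
    · rw [zero_mul]
    · rw [smul_mul_assoc, horth n m hnm, smul_zero]
  have hxa : ∀ m, x * a m = f m * a m := hterm f hfc hfs
  have hya : ∀ m, y * a m = g m * a m := hterm g hgc hgs
  have hxy : x * y = 0 := by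
    show x * (∑' n, g n) = 0
    rw [hmulL x g hgs]
    have hz : ∀ n, x * g n = 0 := by
      intro n
      rcases hgc n with h | h
      · rw [h, mul_zero]
      · by_cases hn : n ∈ D
        · rw [hgD' n hn, mul_zero]
        · rw [h, mul_smul_comm, hxa n, hfD' n hn, zero_mul, smul_zero]
    simp only [hz, tsum_zero]
  obtain ⟨e, he0, hex, hey⟩ := hA x y hx0 hy0 hxy
  have key1 : ∀ m ∈ D, e * (a m * a m) = a m * a m := by
    intro m hm
    have h1 : e * (x * a m) = x * a m := by rw [← mul_assoc, hex]
    rw [hxa m, hfD m hm, smul_mul_assoc, mul_smul_comm] at h1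
    exact smul_right_injective A (hc0 m) h1
  have key2 : ∀ m ∉ D, e * (a m * a m) = 0 := by
    intro m hm
    have h1 : e * (y * a m) = 0 := by rw [← mul_assoc, hey, zero_mul]
    rw [hya m, hgD m hm, smul_mul_assoc, mul_smul_comm] at h1
    rcases smul_eq_zero.mp h1 with h | h
    · exact absurd h (hc0 m)
    · exact h
  have habs : ∀ m (b : A), φ m (b * a m) = φ m b := fun m b =>
    state_absorb (hφ m) (hpos m) (hnorm m).le (heval m) b
  have heval_e1 : ∀ m ∈ D, φ m e = 1 := by
    intro m hm
    calc φ m e = φ m (e * a m) := (habs m e).symm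
      _ = φ m (e * a m * a m) := (habs m (e * a m)).symm
      _ = φ m (a m * a m) := by rw [mul_assoc, key1 m hm]
      _ = φ m (a m) := habs m (a m)
      _ = 1 := heval m
  have heval_e0 : ∀ m ∉ D, φ m e = 0 := by
    intro m hm
    calc φ m e = φ m (e * a m) := (habs m e).symm
      _ = φ m (e * a m * a m) := (habs m (e * a m)).symm
      _ = φ m 0 := by rw [mul_assoc, key2 m hm]
      _ = 0 := map_zero _
  rw [Set.disjoint_left]
  rintro ψ h1 h2
  have hc1 : ψ e = 1 := by
    have hsub : closure (φ '' D) ⊆ {χ : WeakDual ℂ A | χ e = 1} := by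
      apply closure_minimal _ (isClosed_eq (WeakDual.eval_continuous e) continuous_const)
      rintro _ ⟨m, hm, rfl⟩
      exact heval_e1 m hm
    exact hsub h1
  have hc2 : ψ e = 0 := by
    have hsub : closure (φ '' Dᶜ) ⊆ {χ : WeakDual ℂ A | χ e = 0} := by
      apply closure_minimal _ (isClosed_eq (WeakDual.eval_continuous e) continuous_const)
      rintro _ ⟨m, hm, rfl⟩
      exact heval_e0 m hm
    exact hsub h2
  exact one_ne_zero (hc1 ▸ hc2)
end

section
/- Let A be a SAW*-algebra and (\phi_n) a sequence of states on A for which there exists a sequence (a_n) of pairwise orthogonal positive elements with \|a_n\| = \phi_n(a_n) = 1 and \phi_n(a_m) = 0 for m \ne n. Then the weak*-closure of \{\phi_n : n \in \mathbb{N}\} in the dual of A is homeomorphic to \beta\mathbb{N}, the Stone-Cech compactification of \mathbb{N}. -/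
open scoped ComplexOrder

open scoped ComplexStarModule

section Aux
variable {A : Type*} [CStarAlgebra A] [PartialOrder A] [StarOrderedRing A]


lemma state_nonneg_s7 (φ : WeakDual ℂ A) (hφ : ∀ x : A, 0 ≤ φ (star x * x)) {x : A} (hx : 0 ≤ x) :
    0 ≤ φ x := by
  rw [StarOrderedRing.nonneg_iff] at hx
  induction hx using AddSubmonoid.closure_induction with
  | mem z hz => obtain ⟨s, rfl⟩ := hz; exact hφ s
  | zero => simp
  | add x y _ _ hx hy => rw [map_add]; exact add_nonneg hx hy

lemma state_apply_algebraMap (φ : WeakDual ℂ A) (r : ℝ) :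
    φ (algebraMap ℝ A r) = (r : ℂ) * φ 1 := by
  rw [Algebra.algebraMap_eq_smul_one, ← algebraMap_smul ℂ r (1 : A), map_smul]
  simp [Algebra.algebraMap_eq_smul_one, smul_eq_mul]

lemma state_real_of_selfAdjoint (φ : WeakDual ℂ A) (h1 : φ 1 = 1)
    (hφ : ∀ x : A, 0 ≤ φ (star x * x)) {h : A} (hh : IsSelfAdjoint h) :
    (φ h).im = 0 ∧ |(φ h).re| ≤ ‖h‖ := by
  have hub : 0 ≤ φ (algebraMap ℝ A ‖h‖ - h) := by
    refine state_nonneg_s7 φ hφ ?_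
    rw [sub_nonneg]
    exact hh.le_algebraMap_norm_self
  have hlb : 0 ≤ φ (h + algebraMap ℝ A ‖h‖) := by
    refine state_nonneg_s7 φ hφ ?_
    have := hh.neg_algebraMap_norm_le_self
    rw [← sub_nonneg] at this
    rwa [sub_neg_eq_add] at this
  rw [map_sub, state_apply_algebraMap, h1, mul_one] at hub
  rw [map_add, state_apply_algebraMap, h1, mul_one] at hlb
  rw [Complex.le_def] at hub hlb
  simp only [Complex.sub_re, Complex.sub_im, Complex.add_re, Complex.add_im, Complex.zero_re,
    Complex.zero_im, Complex.ofReal_re, Complex.ofReal_im] at hub hlb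
  constructor
  · linarith [hub.2, hlb.2]
  · rw [abs_le]; constructor <;> linarith [hub.1, hlb.1]




lemma state_star_apply (φ : WeakDual ℂ A) (h1 : φ 1 = 1)
    (hφ : ∀ x : A, 0 ≤ φ (star x * x)) (x : A) :
    φ (star x) = starRingEnd ℂ (φ x) := by
  have hre : starRingEnd ℂ (φ (ℜ x : A)) = φ (ℜ x : A) := by
    have := (state_real_of_selfAdjoint φ h1 hφ (ℜ x).2).1
    exact Complex.conj_eq_iff_im.mpr this
  have him : starRingEnd ℂ (φ (ℑ x : A)) = φ (ℑ x : A) := by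
    have := (state_real_of_selfAdjoint φ h1 hφ (ℑ x).2).1
    exact Complex.conj_eq_iff_im.mpr this
  have hx : (ℜ x : A) + Complex.I • (ℑ x : A) = x := realPart_add_I_smul_imaginaryPart x
  have hxs : star x = (ℜ x : A) - Complex.I • (ℑ x : A) := by
    rw [← hx]
    rw [star_add, star_smul]
    rw [(ℜ x).2.star_eq, (ℑ x).2.star_eq]
    simp [sub_eq_add_neg, Complex.conj_I, neg_smul]
  have e1 : φ (star x) = φ (ℜ x : A) - Complex.I * φ (ℑ x : A) := by
    rw [hxs, map_sub, map_smul, smul_eq_mul]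
  have e2 : φ x = φ (ℜ x : A) + Complex.I * φ (ℑ x : A) := by
    conv_lhs => rw [← hx]
    rw [map_add, map_smul, smul_eq_mul]
  rw [e1, e2, map_add, map_mul, hre, him, Complex.conj_I]
  ring




lemma state_cs_zero (φ : WeakDual ℂ A) (h1 : φ 1 = 1)
    (hφ : ∀ x : A, 0 ≤ φ (star x * x)) {y : A} (hy : φ (star y * y) = 0) (x : A) :
    φ (star x * y) = 0 := by
  by_contra hB
  set B : ℂ := φ (star x * y) with hBdef
  set P : ℂ := φ (star x * x) with hPdef
  have hP : 0 ≤ P := hφ x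
  have hPre : 0 ≤ P.re ∧ 0 = P.im := by
    rw [Complex.le_def] at hP; simpa using hP
  have hPr : P = ((P.re : ℝ) : ℂ) := by
    apply Complex.ext <;> simp [← hPre.2]
  have hyx : φ (star y * x) = starRingEnd ℂ B := by
    have : star y * x = star (star x * y) := by simp [star_mul]
    rw [this, state_star_apply φ h1 hφ]
  have key : ∀ t : ℝ, 0 ≤ φ (star ((-(t : ℂ) * B) • x + y) * ((-(t : ℂ) * B) • x + y)) :=
    fun t => hφ _
  have expand : ∀ t : ℝ, φ (star ((-(t : ℂ) * B) • x + y) * ((-(t : ℂ) * B) • x + y))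
      = (((t ^ 2 * Complex.normSq B * P.re - 2 * t * Complex.normSq B : ℝ)) : ℂ) := by
    intro t
    set c : ℂ := -(t : ℂ) * B with hc
    have hstar : star (c • x + y) = starRingEnd ℂ c • star x + star y := by
      rw [star_add, star_smul]; rfl
    rw [hstar, add_mul, mul_add, mul_add, smul_mul_assoc, smul_mul_assoc,
      mul_smul_comm, mul_smul_comm]
    rw [map_add, map_add, map_add, map_smul, map_smul, map_smul, map_smul]
    rw [← hPdef, ← hBdef, hyx, hy]
    simp only [smul_eq_mul, hc, map_mul, map_neg, Complex.conj_ofReal]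
    have hBB : B * starRingEnd ℂ B = (Complex.normSq B : ℂ) := Complex.mul_conj B
    push_cast
    linear_combination ((t:ℂ)^2 * P - 2*t) * hBB + (t:ℂ)^2 * (Complex.normSq B : ℂ) * hPr
  have hfin : ∀ t : ℝ, 0 ≤ t ^ 2 * Complex.normSq B * P.re - 2 * t * Complex.normSq B := by
    intro t
    have := key t
    rw [expand t] at this
    exact_mod_cast Complex.zero_le_real.mp this
  have hn : 0 < Complex.normSq B := Complex.normSq_pos.mpr hB
  have ht := hfin (P.re + 1)⁻¹
  have hp1 : (0:ℝ) < P.re + 1 := by linarith [hPre.1]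
  have h2 : (P.re + 1)⁻¹ * (P.re + 1) = 1 := inv_mul_cancel₀ hp1.ne'
  nlinarith [hPre.1, mul_pos (inv_pos.mpr hp1) hn, sq_nonneg ((P.re+1)⁻¹)]




lemma conj_zero_of (f b : A) (hf : IsSelfAdjoint f) (hb : 0 ≤ b) (h : f * b * f = 0) :
    b * f = 0 ∧ f * b = 0 := by
  obtain ⟨s, hs0, hss⟩ : ∃ s : A, 0 ≤ s ∧ s * s = b :=
    ⟨CFC.sqrt b, CFC.sqrt_nonneg _, CFC.sqrt_mul_sqrt_self b hb⟩
  have h1 : star (s * f) * (s * f) = 0 := by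
    rw [star_mul, hf.star_eq, (IsSelfAdjoint.of_nonneg hs0).star_eq]
    have e : f * s * (s * f) = f * (s * s) * f := by noncomm_ring
    rw [e, hss, h]
  have h2 : s * f = 0 := (CStarRing.star_mul_self_eq_zero_iff _).mp h1
  have h3 : b * f = 0 := by rw [← hss, mul_assoc, h2, mul_zero]
  refine ⟨h3, ?_⟩
  have := congrArg star h3
  rwa [star_mul, hf.star_eq, (IsSelfAdjoint.of_nonneg hb).star_eq, star_zero] at this

lemma sq_le_self_of {y : A} (hy0 : 0 ≤ y) (hy1 : y ≤ 1) : y * y ≤ y := by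
  obtain ⟨s, hs0, hss⟩ : ∃ s : A, 0 ≤ s ∧ s * s = y :=
    ⟨CFC.sqrt y, CFC.sqrt_nonneg _, CFC.sqrt_mul_sqrt_self y hy0⟩
  have e1 : s * (1 - y) * s = s * s - s * y * s := by noncomm_ring
  have e2 : s * y * s = y * y := by rw [← hss]; noncomm_ring
  have key : y - y * y = s * (1 - y) * s := by rw [e1, e2, hss]
  have h0 : 0 ≤ s * (1 - y) * s := by
    have := star_left_conjugate_nonneg (sub_nonneg.mpr hy1) s
    rwa [(IsSelfAdjoint.of_nonneg hs0).star_eq] at this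
  rw [← sub_nonneg, key]
  exact h0

lemma state_mul_of_eq_one (φ : WeakDual ℂ A) (h1 : φ 1 = 1)
    (hφ : ∀ x : A, 0 ≤ φ (star x * x)) {a : A} (ha : 0 ≤ a) (han : ‖a‖ ≤ 1)
    (hφa : φ a = 1) (x : A) : φ (x * a) = φ x := by
  have ha1 : a ≤ 1 := (CStarAlgebra.norm_le_one_iff_of_nonneg a ha).mp han
  have hy0 : 0 ≤ 1 - a := sub_nonneg.mpr ha1
  have hy1 : 1 - a ≤ 1 := by
    calc 1 - a ≤ 1 - 0 := by exact sub_le_sub_left ha 1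
    _ = 1 := sub_zero 1
  have hysa : IsSelfAdjoint (1 - a) := IsSelfAdjoint.of_nonneg hy0
  have hyy : (1 - a) * (1 - a) ≤ 1 - a := sq_le_self_of hy0 hy1
  have hyval : φ (1 - a) = 0 := by rw [map_sub, h1, hφa, sub_self]
  have hyyz : φ (star (1 - a) * (1 - a)) = 0 := by
    rw [hysa.star_eq]
    refine le_antisymm ?_ ?_
    · have := state_nonneg_s7 φ hφ (sub_nonneg.mpr hyy)
      rw [map_sub, hyval, zero_sub] at this
      rwa [← neg_nonneg]
    · have := hφ (1 - a)
      rwa [hysa.star_eq] at this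
  have hxy : φ (x * (1 - a)) = 0 := by
    have := state_cs_zero φ h1 hφ hyyz (star x)
    rwa [star_star] at this
  have e : x * a = x - x * (1 - a) := by noncomm_ring
  rw [e, map_sub, hxy, sub_zero]




lemma state_norm_bound (φ : WeakDual ℂ A) (h1 : φ 1 = 1)
    (hφ : ∀ x : A, 0 ≤ φ (star x * x)) (x : A) : ‖φ x‖ ≤ 2 * ‖x‖ := by
  have hre := state_real_of_selfAdjoint φ h1 hφ (ℜ x).2
  have him := state_real_of_selfAdjoint φ h1 hφ (ℑ x).2
  have hxeq : φ x = φ (ℜ x : A) + Complex.I * φ (ℑ x : A) := by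
    conv_lhs => rw [← realPart_add_I_smul_imaginaryPart x]
    rw [map_add, map_smul, smul_eq_mul]
  have hnre : ‖(ℜ x : A)‖ ≤ ‖x‖ := by
    rw [realPart_apply_coe]
    calc ‖(2:ℝ)⁻¹ • (x + star x)‖ ≤ 2⁻¹ * (‖x‖ + ‖star x‖) := by
          rw [norm_smul]
          gcongr
          · simp
          · exact norm_add_le _ _
    _ = ‖x‖ := by rw [norm_star]; ring
  have hnim : ‖(ℑ x : A)‖ ≤ ‖x‖ := by
    rw [imaginaryPart_apply_coe]
    calc ‖-Complex.I • (2:ℝ)⁻¹ • (x - star x)‖ = ‖(2:ℝ)⁻¹ • (x - star x)‖ := by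
          rw [norm_smul]; simp
    _ ≤ 2⁻¹ * (‖x‖ + ‖star x‖) := by
          rw [norm_smul]
          gcongr
          · simp
          · exact norm_sub_le _ _
    _ = ‖x‖ := by rw [norm_star]; ring
  have hb1 : ‖φ (ℜ x : A)‖ ≤ ‖x‖ := by
    rw [Complex.norm_def, Complex.normSq_apply, hre.1]
    simpa [Real.sqrt_mul_self_eq_abs] using hre.2.trans hnre
  have hb2 : ‖φ (ℑ x : A)‖ ≤ ‖x‖ := by
    rw [Complex.norm_def, Complex.normSq_apply, him.1]
    simpa [Real.sqrt_mul_self_eq_abs] using him.2.trans hnim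
  calc ‖φ x‖ ≤ ‖φ (ℜ x : A)‖ + ‖Complex.I * φ (ℑ x : A)‖ := hxeq ▸ norm_add_le _ _
  _ = ‖φ (ℜ x : A)‖ + ‖φ (ℑ x : A)‖ := by rw [norm_mul, Complex.norm_I, one_mul]
  _ ≤ ‖x‖ + ‖x‖ := add_le_add hb1 hb2
  _ = 2 * ‖x‖ := by ring




lemma exists_separating_element
    (hA : ∀ x y : A, 0 ≤ x → 0 ≤ y → x * y = 0 → ∃ e : A, 0 ≤ e ∧ e * x = x ∧ e * y = 0)
    (φ : ℕ → WeakDual ℂ A) (hφ1 : ∀ n, φ n 1 = 1) (hφ2 : ∀ n x, 0 ≤ φ n (star x * x))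
    (a : ℕ → A) (hpos : ∀ n, 0 ≤ a n) (horth : ∀ m n, m ≠ n → a m * a n = 0)
    (hnorm : ∀ n, ‖a n‖ = 1) (heval : ∀ n, φ n (a n) = 1) (S : Set ℕ) :
    ∃ e : A, (∀ n ∈ S, φ n e = 1) ∧ (∀ n ∉ S, φ n e = 0) := by
  classical
  set c : ℕ → ℂ := fun n => (2:ℂ)⁻¹ ^ n with hc
  have hcn : ∀ n, c n ≠ 0 := fun n => pow_ne_zero n (by norm_num)
  set γ : ℂ := ((Real.sqrt 2⁻¹ : ℝ) : ℂ) with hγ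
  have hγγ : γ * γ = 2⁻¹ := by
    rw [hγ, ← Complex.ofReal_mul, Real.mul_self_sqrt (by norm_num)]
    norm_num
  have hterm : ∀ n, 0 ≤ c n • a n := by
    intro n
    obtain ⟨s, hs0, hss⟩ : ∃ s : A, 0 ≤ s ∧ s * s = a n :=
      ⟨CFC.sqrt (a n), CFC.sqrt_nonneg _, CFC.sqrt_mul_sqrt_self (a n) (hpos n)⟩
    have : c n • a n = star (γ ^ n • s) * (γ ^ n • s) := by
      rw [star_smul, (IsSelfAdjoint.of_nonneg hs0).star_eq, smul_mul_smul_comm, hss]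
      congr 1
      rw [star_pow]
      have : star γ = γ := by rw [hγ]; exact Complex.conj_ofReal _
      rw [this, ← mul_pow, hγγ]
    rw [this]
    exact star_mul_self_nonneg _
  have hf_nonneg : ∀ (T : Set ℕ) n, 0 ≤ T.indicator (fun n => c n • a n) n :=
    fun T n => Set.indicator_nonneg (fun m _ => hterm m) n
  have hsum : ∀ T : Set ℕ, Summable (T.indicator (fun n => c n • a n)) := by
    intro T
    refine Summable.of_norm_bounded (g := fun n => (2:ℝ)⁻¹ ^ n)
      (summable_geometric_of_lt_one (by norm_num) (by norm_num)) ?_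
    intro n
    simp only [Set.indicator_apply]
    split_ifs
    · rw [norm_smul, hnorm n, mul_one, hc]
      simp
    · simp [pow_nonneg]
  have hx0 : ∀ T : Set ℕ, 0 ≤ ∑' n, T.indicator (fun n => c n • a n) n :=
    fun T => tsum_nonneg (hf_nonneg T)
  have hle : ∀ T : Set ℕ, ∀ n ∈ T, c n • a n ≤ ∑' n, T.indicator (fun n => c n • a n) n := by
    intro T n hn
    have := Summable.le_tsum (hsum T) n (fun m _ => hf_nonneg T m)
    rwa [Set.indicator_of_mem hn] at this
  have hmulz : ∀ T T' : Set ℕ, (∀ m ∈ T, ∀ n ∈ T', m ≠ n) →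
      (∑' n, T.indicator (fun n => c n • a n) n) * (∑' n, T'.indicator (fun n => c n • a n) n)
        = 0 := by
    intro T T' hd
    have hterm0 : ∀ m, T.indicator (fun n => c n • a n) m
        * (∑' n, T'.indicator (fun n => c n • a n) n) = 0 := by
      intro m
      rcases Classical.em (m ∈ T) with hm | hm
      · rw [Set.indicator_of_mem hm, smul_mul_assoc]
        have hz : a m * (∑' n, T'.indicator (fun n => c n • a n) n) = 0 := by
          have hmap := (ContinuousLinearMap.mul ℂ A (a m)).map_tsum (hsum T')
          have : a m * (∑' n, T'.indicator (fun n => c n • a n) n)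
              = ∑' n, a m * T'.indicator (fun n => c n • a n) n := hmap
          rw [this]
          refine (tsum_congr fun n => ?_).trans tsum_zero
          rcases Classical.em (n ∈ T') with hn | hn
          · rw [Set.indicator_of_mem hn, mul_smul_comm, horth m n (hd m hm n hn), smul_zero]
          · rw [Set.indicator_of_notMem hn, mul_zero]
        rw [hz, smul_zero]
      · rw [Set.indicator_of_notMem hm, zero_mul]
    have hmap := (((ContinuousLinearMap.mul ℂ A).flip
      (∑' n, T'.indicator (fun n => c n • a n) n))).map_tsum (hsum T)
    have : (∑' n, T.indicator (fun n => c n • a n) n)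
          * (∑' n, T'.indicator (fun n => c n • a n) n)
        = ∑' m, T.indicator (fun n => c n • a n) m
          * (∑' n, T'.indicator (fun n => c n • a n) n) := hmap
    rw [this]
    exact (tsum_congr fun m => hterm0 m).trans tsum_zero
  obtain ⟨e, he0, heS, heC⟩ := hA _ _ (hx0 S) (hx0 Sᶜ)
    (hmulz S Sᶜ (fun m hm n hn => fun h => hn (h ▸ hm)))
  have hesa : IsSelfAdjoint e := .of_nonneg he0
  have key : ∀ (T : Set ℕ) (g : A), IsSelfAdjoint g →
      g * (∑' n, T.indicator (fun n => c n • a n) n) = 0 →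
      ∀ n ∈ T, g * a n = 0 ∧ a n * g = 0 := by
    intro T g hgsa hg n hn
    have h1 : g * (c n • a n) * g = 0 := by
      refine le_antisymm ?_ ?_
      · have h2 := star_left_conjugate_le_conjugate (hle T n hn) g
        rw [hgsa.star_eq] at h2
        calc g * (c n • a n) * g
            ≤ g * (∑' n, T.indicator (fun n => c n • a n) n) * g := h2
        _ = 0 := by rw [hg, zero_mul]
      · have := star_left_conjugate_nonneg (hterm n) g
        rwa [hgsa.star_eq] at this
    have h3 : g * a n * g = 0 := by
      have : g * (c n • a n) * g = c n • (g * a n * g) := by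
        rw [mul_smul_comm, smul_mul_assoc]
      rw [this] at h1
      exact (smul_eq_zero.mp h1).resolve_left (hcn n)
    obtain ⟨h4, h5⟩ := conj_zero_of g (a n) hgsa (hpos n) h3
    exact ⟨h5, h4⟩
  refine ⟨e, ?_, ?_⟩
  · intro n hn
    set g : A := 1 - e with hgdef
    have hgsa : IsSelfAdjoint g := by
      rw [hgdef]
      exact (IsSelfAdjoint.one A).sub hesa
    have hg : g * (∑' n, S.indicator (fun n => c n • a n) n) = 0 := by
      rw [hgdef, sub_mul, one_mul, heS, sub_self]
    obtain ⟨h5, _⟩ := key S g hgsa hg n hn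
    have hea : e * a n = a n := by
      rw [hgdef, sub_mul, one_mul] at h5
      rw [← sub_eq_zero]
      rw [← neg_sub, h5, neg_zero]
    have := state_mul_of_eq_one (φ n) (hφ1 n) (hφ2 n) (hpos n) (le_of_eq (hnorm n))
      (heval n) e
    rw [hea, heval n] at this
    exact this.symm
  · intro n hn
    have hg : e * (∑' n, Sᶜ.indicator (fun n => c n • a n) n) = 0 := heC
    obtain ⟨h5, _⟩ := key Sᶜ e hesa hg n hn
    have := state_mul_of_eq_one (φ n) (hφ1 n) (hφ2 n) (hpos n) (le_of_eq (hnorm n))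
      (heval n) e
    rw [h5, map_zero] at this
    exact this.symm

end Aux

/-- Let `A` be a unital SAW*-algebra, `(φₙ)` states and `(aₙ)` pairwise orthogonal
positive elements with `‖aₙ‖ = φₙ(aₙ) = 1` and `φₙ(aₘ) = 0` for `m ≠ n`.  Then the
weak*-closure of `{φₙ : n ∈ ℕ}` is homeomorphic to `βℕ`. -/
theorem sawstar_closure_homeomorphic_stoneCech
    {A : Type*} [NormedRing A] [StarRing A] [CStarRing A] [NormedAlgebra ℂ A]
    [StarModule ℂ A] [CompleteSpace A] [PartialOrder A] [StarOrderedRing A]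
    (hA : IsSAWStar A)
    (φ : ℕ → WeakDual ℂ A) (hφ : ∀ n, IsState (φ n))
    (a : ℕ → A) (hpos : ∀ n, 0 ≤ a n)
    (horth : ∀ m n, m ≠ n → a m * a n = 0)
    (hnorm : ∀ n, ‖a n‖ = 1)
    (heval : ∀ n, φ n (a n) = 1)
    (heval' : ∀ m n, m ≠ n → φ n (a m) = 0) :
    Nonempty (StoneCech ℕ ≃ₜ closure (Set.range φ)) := by
  letI : CStarAlgebra A :=
    { ‹NormedRing A›, ‹StarRing A›, ‹CompleteSpace A›, ‹CStarRing A›,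
      ‹NormedAlgebra ℂ A›, ‹StarModule ℂ A› with }
  -- the compact ambient set
  set C : Set (WeakDual ℂ A) := {ψ | ∀ x : A, ‖ψ x‖ ≤ 2 * ‖x‖} with hC
  have hC_closed : IsClosed C := by
    have : C = ⋂ x : A, {ψ : WeakDual ℂ A | ‖ψ x‖ ≤ 2 * ‖x‖} := by
      ext ψ; simp [hC]
    rw [this]
    exact isClosed_iInter fun x =>
      isClosed_le ((WeakDual.eval_continuous x).norm) continuous_const
  have hC_bdd : Bornology.IsBounded (StrongDual.toWeakDual ⁻¹' C) := by
    refine Metric.isBounded_closedBall (x := (0 : StrongDual ℂ A)) (r := 2) |>.subset ?_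
    intro ψ hψ
    rw [Metric.mem_closedBall, dist_zero_right]
    exact ContinuousLinearMap.opNorm_le_bound _ (by norm_num) fun x => hψ x
  have hC_cpt : IsCompact C := WeakDual.isCompact_of_bounded_of_closed hC_bdd hC_closed
  have hrange : Set.range φ ⊆ C := by
    rintro _ ⟨n, rfl⟩
    exact fun x => state_norm_bound (φ n) (hφ n).1 (hφ n).2 x
  set K : Set (WeakDual ℂ A) := closure (Set.range φ) with hK
  have hK_cpt : IsCompact K := hC_cpt.of_isClosed_subset isClosed_closure
    (closure_minimal hrange hC_closed)
  haveI : CompactSpace K := isCompact_iff_compactSpace.mp hK_cpt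
  set f0 : ℕ → K := fun n => ⟨φ n, subset_closure ⟨n, rfl⟩⟩ with hf0
  have hf0c : Continuous f0 := continuous_of_discreteTopology
  set g : StoneCech ℕ → K := stoneCechExtend hf0c with hg
  have hgc : Continuous g := continuous_stoneCechExtend hf0c
  have hgunit : ∀ n, g (stoneCechUnit n) = f0 n := fun n =>
    congrFun (stoneCechExtend_extends hf0c) n
  -- surjectivity
  have hdense : DenseRange f0 := by
    rw [DenseRange, dense_iff_closure_eq, Topology.IsInducing.subtypeVal.closure_eq_preimage_closure_image]
    have himg : Subtype.val '' Set.range f0 = Set.range φ := by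
      ext ψ
      constructor
      · rintro ⟨_, ⟨n, rfl⟩, rfl⟩; exact ⟨n, rfl⟩
      · rintro ⟨n, rfl⟩; exact ⟨f0 n, ⟨n, rfl⟩, rfl⟩
    rw [himg]
    ext ⟨ψ, hψ⟩
    simpa using hψ
  have hgsurj : Function.Surjective g := by
    rw [← Set.range_eq_univ]
    have h1 : IsClosed (Set.range g) := (isCompact_range hgc).isClosed
    have h2 : Set.range f0 ⊆ Set.range g := by
      rintro _ ⟨n, rfl⟩; exact ⟨stoneCechUnit n, hgunit n⟩
    have := closure_mono h2
    rw [h1.closure_eq, hdense.closure_range] at this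
    exact Set.eq_univ_of_univ_subset this
  -- injectivity
  have hginj : Function.Injective g := by
    intro p q hpq
    by_contra hne
    obtain ⟨G, hG0, hG1, hG01⟩ := exists_continuous_zero_one_of_isClosed
      (isClosed_singleton (x := p)) (isClosed_singleton (x := q))
      (Set.disjoint_singleton.mpr hne)
    set S : Set ℕ := {n | G (stoneCechUnit n) < 2⁻¹} with hS
    obtain ⟨e, heS, heC⟩ := exists_separating_element hA φ (fun n => (hφ n).1)
      (fun n => (hφ n).2) a hpos horth hnorm heval S
    set h : StoneCech ℕ → ℂ := fun z => (g z : WeakDual ℂ A) e with hh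
    have hhc : Continuous h :=
      (WeakDual.eval_continuous e).comp (continuous_subtype_val.comp hgc)
    have hsplit : ∀ z : StoneCech ℕ,
        z ∈ closure (stoneCechUnit '' S) ∪ closure (stoneCechUnit '' Sᶜ) := by
      intro z
      have : z ∈ closure (Set.range (stoneCechUnit : ℕ → StoneCech ℕ)) :=
        denseRange_stoneCechUnit z
      rw [← Set.image_univ, ← Set.union_compl_self S, Set.image_union,
        closure_union] at this
      exact this
    have hp : p ∈ closure (stoneCechUnit '' S) := by
      rcases hsplit p with hmem | hmem
      · exact hmem
      · exfalso
        have hclosed : IsClosed {z : StoneCech ℕ | 2⁻¹ ≤ G z} :=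
          isClosed_le continuous_const G.continuous
        have hsub : stoneCechUnit '' Sᶜ ⊆ {z | 2⁻¹ ≤ G z} := by
          rintro _ ⟨n, hn, rfl⟩
          simp only [hS, Set.mem_compl_iff, Set.mem_setOf_eq, not_lt] at hn
          exact hn
        have h2 := (closure_minimal hsub hclosed) hmem
        simp only [Set.mem_setOf_eq] at h2
        have hGp : G p = 0 := hG0 rfl
        rw [hGp] at h2
        norm_num at h2
    have hq : q ∈ closure (stoneCechUnit '' Sᶜ) := by
      rcases hsplit q with hmem | hmem
      · exfalso
        have hclosed : IsClosed {z : StoneCech ℕ | G z ≤ 2⁻¹} :=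
          isClosed_le G.continuous continuous_const
        have hsub : stoneCechUnit '' S ⊆ {z | G z ≤ 2⁻¹} := by
          rintro _ ⟨n, hn, rfl⟩
          simp only [hS, Set.mem_setOf_eq] at hn
          exact le_of_lt hn
        have h2 := (closure_minimal hsub hclosed) hmem
        simp only [Set.mem_setOf_eq] at h2
        have hGq : G q = 1 := hG1 rfl
        rw [hGq] at h2
        norm_num at h2
      · exact hmem
    have hhp : h p = 1 := by
      have hclosed : IsClosed {z : StoneCech ℕ | h z = 1} :=
        isClosed_eq hhc continuous_const
      have hsub : stoneCechUnit '' S ⊆ {z | h z = 1} := by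
        rintro _ ⟨n, hn, rfl⟩
        show (g (stoneCechUnit n) : WeakDual ℂ A) e = 1
        rw [hgunit n]
        exact heS n hn
      exact (closure_minimal hsub hclosed) hp
    have hhq : h q = 0 := by
      have hclosed : IsClosed {z : StoneCech ℕ | h z = 0} :=
        isClosed_eq hhc continuous_const
      have hsub : stoneCechUnit '' Sᶜ ⊆ {z | h z = 0} := by
        rintro _ ⟨n, hn, rfl⟩
        show (g (stoneCechUnit n) : WeakDual ℂ A) e = 0
        rw [hgunit n]
        exact heC n hn
      exact (closure_minimal hsub hclosed) hq
    have : h p = h q := by rw [hh]; simp [hpq]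
    rw [hhp, hhq] at this
    norm_num at this
  exact ⟨Continuous.homeoOfEquivCompactToT2
    (f := Equiv.ofBijective g ⟨hginj, hgsurj⟩) hgc⟩
end

section
/- Let X, Y, Z be sets and \rho : X \times Y \to Z a map. Then exactly one of the following holds: (1) X \times Y can be covered by finitely many mutually disjoint rectangles A \times B on each of which \rho depends on at most one coordinate; (2) there exist sequences (x_i) in X and (y_i) in Y such that \rho(x_i, y_i) \ne \rho(x_j, y_k) for all i and all j < k. -/
/-- `ρ` depends on at most one coordinate on the rectangle `A ×ˢ B`. -/
def DependsOnAtMostOneCoord {X Y Z : Type*} (ρ : X × Y → Z) (A : Set X) (B : Set Y) : Prop :=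
  (∀ x ∈ A, ∀ y ∈ B, ∀ y' ∈ B, ρ (x, y) = ρ (x, y')) ∨
  (∀ x ∈ A, ∀ x' ∈ A, ∀ y ∈ B, ρ (x, y) = ρ (x', y))

namespace RCD

open Set Filter
open scoped Classical

lemma exists_fiber_mem {α : Type*} [Finite α] (U : Ultrafilter ℕ) (f : ℕ → α) :
    ∃ a, {n | f n = a} ∈ U := by
  by_contra h
  push_neg at h
  have h2 : ∀ a, {n | f n = a}ᶜ ∈ U := fun a => Ultrafilter.compl_mem_iff_notMem.2 (h a)
  have h3 : (⋂ a, {n | f n = a}ᶜ) ∈ U := iInter_mem.2 h2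
  have h4 : (⋂ a, {n | f n = a}ᶜ : Set ℕ) = ∅ := by ext n; simp
  rw [h4] at h3
  exact Ultrafilter.empty_notMem h3

lemma Ioi_mem_hyper (y : ℕ) : Set.Ioi y ∈ hyperfilter ℕ := by
  have : Set.Ioi y ∈ (cofinite : Filter ℕ) := by
    rw [Filter.mem_cofinite]
    simpa using Set.finite_Iic y
  exact hyperfilter_le_cofinite this

lemma ramsey2 {α : Type*} [Finite α] (c : ℕ → ℕ → α) :
    ∃ (g : ℕ → ℕ) (a : α), StrictMono g ∧ ∀ i j, i < j → c (g i) (g j) = a := by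
  set U : Ultrafilter ℕ := hyperfilter ℕ with hUdef
  obtain ⟨c1, hc1⟩ : ∃ c1 : ℕ → α, ∀ i, {j | c i j = c1 i} ∈ U := by
    have hrow : ∀ i, ∃ a, {j | c i j = a} ∈ U := fun i => exists_fiber_mem U (c i)
    choose c1 h using hrow; exact ⟨c1, h⟩
  obtain ⟨a, ha⟩ := exists_fiber_mem U c1
  let St := ℕ × {A : Set ℕ // A ∈ U}
  let pick : {A : Set ℕ // A ∈ U} → ℕ := fun A => (U.nonempty_of_mem A.2).choose
  have hpick : ∀ A : {A : Set ℕ // A ∈ U}, pick A ∈ A.1 :=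
    fun A => (U.nonempty_of_mem A.2).choose_spec
  let step : St → St := fun p =>
    let y := pick p.2
    (y, ⟨p.2.1 ∩ {j | c y j = c1 y} ∩ Set.Ioi y,
         inter_mem (inter_mem p.2.2 (hc1 y)) (Ioi_mem_hyper y)⟩)
  let f : ℕ → St := fun n => Nat.rec (step (0, ⟨{i | c1 i = a}, ha⟩)) (fun _ p => step p) n
  have hf : ∀ n, f (n + 1) = step (f n) := fun n => rfl
  set g : ℕ → ℕ := fun n => (f n).1 with hg
  -- basic step facts
  have F1 : ∀ p : St, (step p).1 ∈ p.2.1 := fun p => hpick p.2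
  have F2 : ∀ p : St, ((step p).2.1 : Set ℕ) ⊆ p.2.1 := fun p x hx => hx.1.1
  have F3 : ∀ p : St, ((step p).2.1 : Set ℕ) ⊆ {j | c (step p).1 j = c1 (step p).1} :=
    fun p x hx => hx.1.2
  have F4 : ∀ p : St, ((step p).2.1 : Set ℕ) ⊆ Set.Ioi (step p).1 := fun p x hx => hx.2
  have hchain : ∀ n, ((f (n+1)).2.1 : Set ℕ) ⊆ (f n).2.1 := by
    intro n; rw [hf n]; exact F2 (f n)
  have hchain' : ∀ m n, m ≤ n → ((f n).2.1 : Set ℕ) ⊆ (f m).2.1 := by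
    intro m n h
    induction n with
    | zero => cases Nat.le_zero.1 h; exact fun x hx => hx
    | succ k ih =>
      rcases Nat.lt_or_ge m (k+1) with h' | h'
      · exact (hchain k).trans (ih (Nat.lt_succ_iff.1 h'))
      · cases Nat.le_antisymm h h'; exact fun x hx => hx
  have hmemA : ∀ n, g (n+1) ∈ ((f n).2.1 : Set ℕ) := fun n => F1 (f n)
  have hAS : ∀ n, ((f n).2.1 : Set ℕ) ⊆ {j | c (g n) j = c1 (g n)} := by
    intro n
    cases n with
    | zero => exact F3 _
    | succ k => rw [hf k]; exact F3 (f k)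
  have hAI : ∀ n, ((f n).2.1 : Set ℕ) ⊆ Set.Ioi (g n) := by
    intro n
    cases n with
    | zero => exact F4 _
    | succ k => rw [hf k]; exact F4 (f k)
  have hmono : StrictMono g := by
    apply strictMono_nat_of_lt_succ
    intro n
    exact hAI n (hmemA n)
  have hT : ∀ n, g n ∈ {i | c1 i = a} := by
    intro n
    have hsubT : ∀ m, ((f m).2.1 : Set ℕ) ⊆ {i | c1 i = a} := by
      intro m
      refine (hchain' 0 m (Nat.zero_le m)).trans ?_
      exact fun x hx => hx.1.1
    cases n with
    | zero => exact F1 (0, ⟨{i | c1 i = a}, ha⟩)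
    | succ k => exact hsubT k (hmemA k)
  refine ⟨g, a, hmono, ?_⟩
  intro i j hij
  obtain ⟨m, rfl⟩ : ∃ m, j = m + 1 := ⟨j - 1, by omega⟩
  have h1 : g (m+1) ∈ ((f i).2.1 : Set ℕ) := hchain' i m (by omega) (hmemA m)
  have h2 : c (g i) (g (m+1)) = c1 (g i) := hAS i h1
  rw [h2]; exact hT i

lemma ramsey3 {α : Type*} [Finite α] (c : ℕ → ℕ → ℕ → α) :
    ∃ (g : ℕ → ℕ) (a : α), StrictMono g ∧ ∀ i j k, i < j → j < k → c (g i) (g j) (g k) = a := by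
  set U : Ultrafilter ℕ := hyperfilter ℕ with hUdef
  obtain ⟨c2, hc2⟩ : ∃ c2 : ℕ → ℕ → α, ∀ i j, {k | c i j k = c2 i j} ∈ U := by
    have h : ∀ i j, ∃ a, {k | c i j k = a} ∈ U := fun i j => exists_fiber_mem U (c i j)
    choose c2 h using h; exact ⟨c2, h⟩
  obtain ⟨c1, hc1⟩ : ∃ c1 : ℕ → α, ∀ i, {j | c2 i j = c1 i} ∈ U := by
    have h : ∀ i, ∃ a, {j | c2 i j = a} ∈ U := fun i => exists_fiber_mem U (c2 i)
    choose c1 h using h; exact ⟨c1, h⟩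
  obtain ⟨a, ha⟩ := exists_fiber_mem U c1
  let St := ℕ × List ℕ × {A : Set ℕ // A ∈ U}
  let pick : {A : Set ℕ // A ∈ U} → ℕ := fun A => (U.nonempty_of_mem A.2).choose
  have hpick : ∀ A : {A : Set ℕ // A ∈ U}, pick A ∈ A.1 :=
    fun A => (U.nonempty_of_mem A.2).choose_spec
  let step : St → St := fun p =>
    let y := pick p.2.2
    (y, y :: p.2.1,
      ⟨p.2.2.1 ∩ {j | c2 y j = c1 y} ∩ (⋂ x ∈ p.2.1.toFinset, {k | c x y k = c2 x y})
        ∩ Set.Ioi y,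
       inter_mem (inter_mem (inter_mem p.2.2.2 (hc1 y))
         ((Filter.biInter_finset_mem _).2 (fun x _ => hc2 x y))) (Ioi_mem_hyper y)⟩)
  let f : ℕ → St := fun n => Nat.rec (step (0, [], ⟨{i | c1 i = a}, ha⟩)) (fun _ p => step p) n
  have hf : ∀ n, f (n + 1) = step (f n) := fun n => rfl
  set g : ℕ → ℕ := fun n => (f n).1 with hg
  have F1 : ∀ p : St, (step p).1 ∈ p.2.2.1 := fun p => hpick p.2.2
  have F2 : ∀ p : St, ((step p).2.2.1 : Set ℕ) ⊆ p.2.2.1 := fun p x hx => hx.1.1.1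
  have F3 : ∀ p : St, ((step p).2.2.1 : Set ℕ) ⊆ {j | c2 (step p).1 j = c1 (step p).1} :=
    fun p x hx => hx.1.1.2
  have F4 : ∀ p : St, ((step p).2.2.1 : Set ℕ) ⊆ Set.Ioi (step p).1 := fun p x hx => hx.2
  have F5 : ∀ p : St, ∀ x ∈ p.2.1, ((step p).2.2.1 : Set ℕ) ⊆ {k | c x (step p).1 k = c2 x (step p).1} := by
    intro p x hxl z hz
    have := hz.1.2
    simp only [Set.mem_iInter] at this
    exact this x (List.mem_toFinset.2 hxl)
  have F6 : ∀ p : St, (step p).2.1 = (step p).1 :: p.2.1 := fun p => rfl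
  have hchain : ∀ n, ((f (n+1)).2.2.1 : Set ℕ) ⊆ (f n).2.2.1 := by
    intro n; rw [hf n]; exact F2 (f n)
  have hchain' : ∀ m n, m ≤ n → ((f n).2.2.1 : Set ℕ) ⊆ (f m).2.2.1 := by
    intro m n h
    induction n with
    | zero => cases Nat.le_zero.1 h; exact fun x hx => hx
    | succ k ih =>
      rcases Nat.lt_or_ge m (k+1) with h' | h'
      · exact (hchain k).trans (ih (Nat.lt_succ_iff.1 h'))
      · cases Nat.le_antisymm h h'; exact fun x hx => hx
  have hmemA : ∀ n, g (n+1) ∈ ((f n).2.2.1 : Set ℕ) := fun n => F1 (f n)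
  have hlist : ∀ n, ∀ i, i ≤ n → g i ∈ (f n).2.1 := by
    intro n
    induction n with
    | zero =>
      intro i hi
      cases Nat.le_zero.1 hi
      show g 0 ∈ (f 0).2.1
      have : (f 0).2.1 = (f 0).1 :: [] := rfl
      rw [this]
      exact List.mem_singleton.2 rfl
    | succ k ih =>
      intro i hi
      have hl : (f (k+1)).2.1 = g (k+1) :: (f k).2.1 := rfl
      rw [hl]
      rcases Nat.lt_or_ge i (k+1) with h' | h'
      · exact List.mem_cons_of_mem _ (ih i (Nat.lt_succ_iff.1 h'))
      · cases Nat.le_antisymm hi h'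
        exact List.mem_cons_self
  have hAS : ∀ n, ((f n).2.2.1 : Set ℕ) ⊆ {j | c2 (g n) j = c1 (g n)} := by
    intro n
    cases n with
    | zero => exact F3 _
    | succ k => rw [hf k]; exact F3 (f k)
  have hAI : ∀ n, ((f n).2.2.1 : Set ℕ) ⊆ Set.Ioi (g n) := by
    intro n
    cases n with
    | zero => exact F4 _
    | succ k => rw [hf k]; exact F4 (f k)
  have hAS2 : ∀ j i, i < j → ((f j).2.2.1 : Set ℕ) ⊆ {k | c (g i) (g j) k = c2 (g i) (g j)} := by
    intro j i hij
    obtain ⟨m, rfl⟩ : ∃ m, j = m + 1 := ⟨j - 1, by omega⟩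
    have hx : g i ∈ (f m).2.1 := hlist m i (by omega)
    rw [hf m]
    exact F5 (f m) (g i) hx
  have hmono : StrictMono g := by
    apply strictMono_nat_of_lt_succ
    intro n
    exact hAI n (hmemA n)
  have hT : ∀ n, g n ∈ {i | c1 i = a} := by
    intro n
    have hsubT : ∀ m, ((f m).2.2.1 : Set ℕ) ⊆ {i | c1 i = a} := by
      intro m
      refine (hchain' 0 m (Nat.zero_le m)).trans ?_
      exact fun x hx => hx.1.1.1
    cases n with
    | zero => exact F1 (0, [], ⟨{i | c1 i = a}, ha⟩)
    | succ k => exact hsubT k (hmemA k)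
  refine ⟨g, a, hmono, ?_⟩
  intro i j k hij hjk
  obtain ⟨m, rfl⟩ : ∃ m, k = m + 1 := ⟨k - 1, by omega⟩
  have h1 : g (m+1) ∈ ((f j).2.2.1 : Set ℕ) := hchain' j m (by omega) (hmemA m)
  have h2 : c (g i) (g j) (g (m+1)) = c2 (g i) (g j) := hAS2 j i hij h1
  obtain ⟨m', rfl⟩ : ∃ m', j = m' + 1 := ⟨j - 1, by omega⟩
  have h3 : g (m'+1) ∈ ((f i).2.2.1 : Set ℕ) := hchain' i m' (by omega) (hmemA m')
  have h4 : c2 (g i) (g (m'+1)) = c1 (g i) := hAS i h3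
  rw [h2, h4]
  exact hT i

lemma decide_eq_iff {P : Prop} [Decidable P] {b : Bool} (h : decide P = b) : P ↔ b = true := by
  cases b <;> simp_all

variable {X Y Z : Type*} (ρ : X × Y → Z)

def UpLadder (x : ℕ → X) (y : ℕ → Y) : Prop :=
  ∀ i j k : ℕ, j < k → ρ (x i, y i) ≠ ρ (x j, y k)

def NoLad : Prop := ∀ x y, ¬ UpLadder ρ x y

def Red (A : Set X) (B : Set Y) : Prop :=
  ∃ (n : ℕ) (As : Fin n → Set X) (Bs : Fin n → Set Y),
    (⋃ i, As i ×ˢ Bs i) = A ×ˢ B ∧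
    (∀ i j, i ≠ j → Disjoint (As i ×ˢ Bs i) (As j ×ˢ Bs j)) ∧
    ∀ i, DependsOnAtMostOneCoord ρ (As i) (Bs i)

def VP (f : ℕ → X × Y) (n : ℕ) : Prop :=
  ∀ i j k, i < n → k < n → j < k → ρ (f i) ≠ ρ ((f j).1, (f k).2)

lemma red_of_family {ι : Type*} [Finite ι] {A : Set X} {B : Set Y}
    (As : ι → Set X) (Bs : ι → Set Y)
    (hcov : (⋃ i, As i ×ˢ Bs i) = A ×ˢ B)
    (hdisj : ∀ i j, i ≠ j → Disjoint (As i ×ˢ Bs i) (As j ×ˢ Bs j))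
    (hdep : ∀ i, DependsOnAtMostOneCoord ρ (As i) (Bs i)) : Red ρ A B := by
  have := Fintype.ofFinite ι
  let e := Fintype.equivFin ι
  refine ⟨Fintype.card ι, fun i => As (e.symm i), fun i => Bs (e.symm i), ?_, ?_, ?_⟩
  · rw [← hcov]
    ext p
    simp only [Set.mem_iUnion]
    constructor
    · rintro ⟨i, hi⟩; exact ⟨e.symm i, hi⟩
    · rintro ⟨i, hi⟩; exact ⟨e i, by simpa using hi⟩
  · intro i j hij
    exact hdisj _ _ (fun h => hij (by simpa using congrArg e h))
  · intro i; exact hdep _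

lemma red_empty {A : Set X} {B : Set Y} (h : A ×ˢ B = ∅) : Red ρ A B :=
  ⟨0, Fin.elim0, Fin.elim0, by rw [h]; simp, fun i => Fin.elim0 i, fun i => Fin.elim0 i⟩

lemma red_single {A : Set X} {B : Set Y} (h : DependsOnAtMostOneCoord ρ A B) : Red ρ A B :=
  ⟨1, fun _ => A, fun _ => B, Set.iUnion_const _, fun i j hij => absurd (Subsingleton.elim i j) hij,
    fun _ => h⟩

lemma red_cols {ι : Type*} [Finite ι] {A : Set X} {B : Set Y} (Bs : ι → Set Y)
    (hdisj : ∀ i j, i ≠ j → Disjoint (Bs i) (Bs j))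
    (hunion : (⋃ i, Bs i) = B)
    (h : ∀ i, Red ρ A (Bs i)) : Red ρ A B := by
  choose n Cs Ds hcov hdj hdep using h
  refine red_of_family ρ (ι := Σ i, Fin (n i)) (fun p => Cs p.1 p.2) (fun p => Ds p.1 p.2)
    ?_ ?_ (fun p => hdep p.1 p.2)
  · ext q
    simp only [Set.mem_iUnion, Sigma.exists]
    constructor
    · rintro ⟨i, t, hq⟩
      have : q ∈ A ×ˢ Bs i := by rw [← hcov i]; exact Set.mem_iUnion.2 ⟨t, hq⟩
      exact ⟨this.1, by rw [← hunion]; exact Set.mem_iUnion.2 ⟨i, this.2⟩⟩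
    · rintro ⟨hqA, hqB⟩
      rw [← hunion] at hqB
      obtain ⟨i, hi⟩ := Set.mem_iUnion.1 hqB
      have : q ∈ ⋃ t, Cs i t ×ˢ Ds i t := by rw [hcov i]; exact ⟨hqA, hi⟩
      obtain ⟨t, ht⟩ := Set.mem_iUnion.1 this
      exact ⟨i, t, ht⟩
  · rintro ⟨i, t⟩ ⟨j, s⟩ hne
    by_cases hij : i = j
    · subst hij
      refine hdj i t s (fun h => hne ?_)
      simp [h]
    · rw [Set.disjoint_left]
      rintro q hq1 hq2
      have m1 : q ∈ A ×ˢ Bs i := by rw [← hcov i]; exact Set.mem_iUnion.2 ⟨t, hq1⟩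
      have m2 : q ∈ A ×ˢ Bs j := by rw [← hcov j]; exact Set.mem_iUnion.2 ⟨s, hq2⟩
      exact Set.disjoint_left.1 (hdisj i j hij) m1.2 m2.2

lemma red_rows2 {A₁ A₂ : Set X} {B : Set Y} (hdisj : Disjoint A₁ A₂)
    (h1 : Red ρ A₁ B) (h2 : Red ρ A₂ B) : Red ρ (A₁ ∪ A₂) B := by
  obtain ⟨n₁, Cs₁, Ds₁, hcov₁, hdj₁, hdep₁⟩ := h1
  obtain ⟨n₂, Cs₂, Ds₂, hcov₂, hdj₂, hdep₂⟩ := h2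
  refine red_of_family ρ (ι := Fin n₁ ⊕ Fin n₂) (Sum.elim Cs₁ Cs₂) (Sum.elim Ds₁ Ds₂) ?_ ?_ ?_
  · ext q
    simp only [Set.mem_iUnion, Sum.exists, Sum.elim_inl, Sum.elim_inr]
    rw [Set.union_prod] at *
    constructor
    · rintro (⟨i, hi⟩ | ⟨i, hi⟩)
      · exact Or.inl (by rw [← hcov₁]; exact Set.mem_iUnion.2 ⟨i, hi⟩)
      · exact Or.inr (by rw [← hcov₂]; exact Set.mem_iUnion.2 ⟨i, hi⟩)
    · rintro (hq | hq)
      · rw [← hcov₁] at hq; obtain ⟨i, hi⟩ := Set.mem_iUnion.1 hq; exact Or.inl ⟨i, hi⟩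
      · rw [← hcov₂] at hq; obtain ⟨i, hi⟩ := Set.mem_iUnion.1 hq; exact Or.inr ⟨i, hi⟩
  · rintro (i | i) (j | j) hne
    · exact hdj₁ i j (fun h => hne (by rw [h]))
    · rw [Set.disjoint_left]
      rintro q hq1 hq2
      have m1 : q ∈ A₁ ×ˢ B := by rw [← hcov₁]; exact Set.mem_iUnion.2 ⟨i, hq1⟩
      have m2 : q ∈ A₂ ×ˢ B := by rw [← hcov₂]; exact Set.mem_iUnion.2 ⟨j, hq2⟩
      exact Set.disjoint_left.1 hdisj m1.1 m2.1
    · rw [Set.disjoint_left]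
      rintro q hq1 hq2
      have m1 : q ∈ A₂ ×ˢ B := by rw [← hcov₂]; exact Set.mem_iUnion.2 ⟨i, hq1⟩
      have m2 : q ∈ A₁ ×ˢ B := by rw [← hcov₁]; exact Set.mem_iUnion.2 ⟨j, hq2⟩
      exact Set.disjoint_left.1 hdisj m2.1 m1.1
    · exact hdj₂ i j (fun h => hne (by rw [h]))
  · rintro (i | i) <;> simp only [Sum.elim_inl, Sum.elim_inr] <;> [exact hdep₁ i; exact hdep₂ i]


lemma cu (hU : NoLad ρ) (u : ℕ → X) (w : ℕ → Y) :
    ∃ g : ℕ → ℕ, StrictMono g ∧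
      ((∀ a b, a < b → ρ (u (g a), w (g b)) = ρ (u (g a), w (g a))) ∨
       (∀ a b, a < b → ρ (u (g a), w (g b)) = ρ (u (g b), w (g b))) ∨
       (∃ δ, (∀ i, ρ (u (g i), w (g i)) = δ) ∧ ∀ a b, a < b → ρ (u (g a), w (g b)) = δ)) := by
  set d : ℕ → Z := fun i => ρ (u i, w i) with hd
  set cr : ℕ → ℕ → Z := fun i j => ρ (u i, w j) with hcr
  obtain ⟨g1, ⟨b1, b2⟩, hm1, hc1⟩ :=
    ramsey2 (fun i j => ((decide (cr i j = d i), decide (cr i j = d j)) : Bool × Bool))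
  obtain ⟨g2, ⟨t1, t2, t3⟩, hm2, hc2⟩ :=
    ramsey3 (fun i j k =>
      ((decide (cr (g1 j) (g1 k) = d (g1 i)), decide (cr (g1 i) (g1 k) = d (g1 j)),
        decide (cr (g1 i) (g1 j) = d (g1 k))) : Bool × Bool × Bool))
  set h : ℕ → ℕ := g1 ∘ g2 with hh
  have hmh : StrictMono h := hm1.comp hm2
  have key1 : ∀ i j, i < j → ((cr (h i) (h j) = d (h i)) ↔ b1 = true) := by
    intro i j hij
    have := congrArg Prod.fst (hc1 (g2 i) (g2 j) (hm2 hij))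
    exact decide_eq_iff this
  have key2 : ∀ i j, i < j → ((cr (h i) (h j) = d (h j)) ↔ b2 = true) := by
    intro i j hij
    have := congrArg Prod.snd (hc1 (g2 i) (g2 j) (hm2 hij))
    exact decide_eq_iff this
  have keyt1 : ∀ i j k, i < j → j < k → ((cr (h j) (h k) = d (h i)) ↔ t1 = true) := by
    intro i j k hij hjk
    have := congrArg Prod.fst (hc2 i j k hij hjk)
    exact decide_eq_iff this
  have keyt2 : ∀ i j k, i < j → j < k → ((cr (h i) (h k) = d (h j)) ↔ t2 = true) := by
    intro i j k hij hjk
    have := congrArg (fun p => p.2.1) (hc2 i j k hij hjk)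
    exact decide_eq_iff this
  have keyt3 : ∀ i j k, i < j → j < k → ((cr (h i) (h j) = d (h k)) ↔ t3 = true) := by
    intro i j k hij hjk
    have := congrArg (fun p => p.2.2) (hc2 i j k hij hjk)
    exact decide_eq_iff this
  by_cases hb1 : b1 = true
  · exact ⟨h, hmh, Or.inl (fun a b hab => (key1 a b hab).2 hb1)⟩
  by_cases hb2 : b2 = true
  · exact ⟨h, hmh, Or.inr (Or.inl (fun a b hab => (key2 a b hab).2 hb2))⟩
  by_cases ht1 : t1 = true
  · refine ⟨fun n => h (n + 1), fun a b hab => hmh (by omega : a + 1 < b + 1),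
      Or.inr (Or.inr ⟨d (h 0), ?_, ?_⟩)⟩
    · intro i
      have e1 : cr (h (i+2)) (h (i+3)) = d (h (i+1)) :=
        (keyt1 (i+1) (i+2) (i+3) (by omega) (by omega)).2 ht1
      have e2 : cr (h (i+2)) (h (i+3)) = d (h 0) :=
        (keyt1 0 (i+2) (i+3) (by omega) (by omega)).2 ht1
      show d (h (i+1)) = d (h 0)
      rw [← e1, e2]
    · intro a b hab
      exact (keyt1 0 (a+1) (b+1) (by omega) (by omega)).2 ht1
  by_cases ht2 : t2 = true
  · have hdc : ∀ j, 1 ≤ j → d (h j) = d (h 1) := by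
      intro j hj
      have e1 : cr (h 0) (h (j+2)) = d (h j) := (keyt2 0 j (j+2) (by omega) (by omega)).2 ht2
      have e2 : cr (h 0) (h (j+2)) = d (h 1) := (keyt2 0 1 (j+2) (by omega) (by omega)).2 ht2
      rw [← e1, e2]
    refine ⟨fun n => h (2*n + 1), fun a b hab => hmh (by omega : 2*a + 1 < 2*b + 1),
      Or.inr (Or.inr ⟨d (h 1), ?_, ?_⟩)⟩
    · intro i
      exact hdc (2*i+1) (by omega)
    · intro a b hab
      have e1 : cr (h (2*a+1)) (h (2*b+1)) = d (h (2*a+2)) :=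
        (keyt2 (2*a+1) (2*a+2) (2*b+1) (by omega) (by omega)).2 ht2
      show cr (h (2*a+1)) (h (2*b+1)) = d (h 1)
      rw [e1]
      exact hdc (2*a+2) (by omega)
  by_cases ht3 : t3 = true
  · have hdc : ∀ j, 2 ≤ j → d (h j) = d (h 2) := by
      intro j hj
      have e1 : cr (h 0) (h 1) = d (h j) := (keyt3 0 1 j (by omega) (by omega)).2 ht3
      have e2 : cr (h 0) (h 1) = d (h 2) := (keyt3 0 1 2 (by omega) (by omega)).2 ht3
      rw [← e1, e2]
    refine ⟨fun n => h (n + 2), fun a b hab => hmh (by omega : a + 2 < b + 2),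
      Or.inr (Or.inr ⟨d (h 2), ?_, ?_⟩)⟩
    · intro i
      exact hdc (i+2) (by omega)
    · intro a b hab
      have e1 : cr (h (a+2)) (h (b+2)) = d (h (b+3)) :=
        (keyt3 (a+2) (b+2) (b+3) (by omega) (by omega)).2 ht3
      show cr (h (a+2)) (h (b+2)) = d (h 2)
      rw [e1]
      exact hdc (b+3) (by omega)
  · exfalso
    apply hU (u ∘ h) (w ∘ h)
    intro i j k hjk heq
    have heq' : cr (h j) (h k) = d (h i) := heq.symm
    rcases lt_trichotomy i j with hij | hij | hij
    · exact ht1 ((keyt1 i j k hij hjk).1 heq')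
    · subst hij
      exact hb1 ((key1 i k hjk).1 heq')
    · rcases lt_trichotomy i k with hik | hik | hik
      · exact ht2 ((keyt2 j i k hij hik).1 heq')
      · subst hik
        exact hb2 ((key2 j i hij).1 heq')
      · exact ht3 ((keyt3 j k i hjk hik).1 heq')
lemma machine {S : Type*} (hU : NoLad ρ) {A : Set X} {B : Set Y} (σ : X → Y → S)
    (hdet : ∀ x ∈ A, ∀ x' ∈ A, ∀ y ∈ B, σ x y = σ x' y → ρ (x, y) = ρ (x', y))
    (hinj : ∀ x ∈ A, ∀ x' ∈ A, ∀ y ∈ B, ρ (x, y) = ρ (x', y) → σ x y = σ x' y)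
    (u : ℕ → X) (w : ℕ → Y) (hu : ∀ i, u i ∈ A) (hw : ∀ i, w i ∈ B)
    (c₁ c₂ : S) (hne : c₁ ≠ c₂) (hd : ∀ i, σ (u i) (w i) = c₁)
    (hc : ∀ i j, i < j → σ (u i) (w j) = c₂) : False := by
  obtain ⟨g, hg, hcase⟩ := cu ρ hU u w
  have key : ρ (u (g 0), w (g 1)) = ρ (u (g 1), w (g 1)) := by
    rcases hcase with hP1 | hP2 | ⟨δ, hδd, hδc⟩
    · -- P1 : cross(a,b) = d(a) ; first show d (g 0) = d (g 1)
      have h1 : ρ (u (g 0), w (g 2)) = ρ (u (g 0), w (g 0)) := hP1 0 2 (by omega)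
      have h2 : ρ (u (g 1), w (g 2)) = ρ (u (g 1), w (g 1)) := hP1 1 2 (by omega)
      have hσ1 : σ (u (g 0)) (w (g 2)) = c₂ := hc _ _ (hg (by omega))
      have hσ2 : σ (u (g 1)) (w (g 2)) = c₂ := hc _ _ (hg (by omega))
      have hvv := hdet _ (hu _) _ (hu _) _ (hw _) (hσ1.trans hσ2.symm)
      rw [h1, h2] at hvv
      have h01 : ρ (u (g 0), w (g 1)) = ρ (u (g 0), w (g 0)) := hP1 0 1 (by omega)
      rw [h01, hvv]
    · exact hP2 0 1 (by omega)
    · rw [hδc 0 1 (by omega), hδd 1]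
  have hσ := hinj _ (hu _) _ (hu _) _ (hw _) key
  rw [hc (g 0) (g 1) (hg (by omega)), hd (g 1)] at hσ
  exact hne hσ.symm

lemma fintypes {S : Type*} [Finite S] (hU : NoLad ρ) {A : Set X} {B : Set Y} (σ : X → Y → S)
    (hdet : ∀ x ∈ A, ∀ x' ∈ A, ∀ y ∈ B, σ x y = σ x' y → ρ (x, y) = ρ (x', y))
    (hinj : ∀ x ∈ A, ∀ x' ∈ A, ∀ y ∈ B, ρ (x, y) = ρ (x', y) → σ x y = σ x' y) :
    ((fun y => (fun x => if x ∈ A then some (σ x y) else none : X → Option S)) '' B).Finite := by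
  set Φ : Y → (X → Option S) := fun y x => if x ∈ A then some (σ x y) else none with hΦ
  by_contra hinf
  have hinf' : (Φ '' B).Infinite := hinf
  have e := hinf'.natEmbedding
  have hy : ∀ n : ℕ, ∃ yb, yb ∈ B ∧ Φ yb = (e n : X → Option S) := by
    intro n; obtain ⟨yb, hyb, heq⟩ := (e n).2; exact ⟨yb, hyb, heq⟩
  choose y hyB hyΦ using hy
  have hΦne : ∀ m n, m ≠ n → Φ (y m) ≠ Φ (y n) := by
    intro m n hmn hcontra
    apply hmn
    have hh : (e m : X → Option S) = e n := by rw [← hyΦ m, ← hyΦ n, hcontra]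
    exact e.injective (Subtype.ext hh)
  have hwit : ∀ i j, i < j → ∃ x, x ∈ A ∧ σ x (y i) ≠ σ x (y j) := by
    intro i j hij
    by_contra hcon
    push_neg at hcon
    apply hΦne i j (by omega)
    funext x
    by_cases hx : x ∈ A
    · simp only [hΦ, if_pos hx]
      rw [hcon x hx]
    · simp only [hΦ, if_neg hx]
  choose xw hxwA hxwne using hwit
  set xt : ℕ → ℕ → X := fun i j => if h : i < j then xw i j h else xw 0 1 (by omega) with hxt
  have hxtA : ∀ i j, xt i j ∈ A := by
    intro i j
    by_cases h : i < j
    · simp only [hxt, dif_pos h]; exact hxwA i j h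
    · simp only [hxt, dif_neg h]; exact hxwA 0 1 (by omega)
  have hxtne : ∀ i j (h : i < j), σ (xt i j) (y i) ≠ σ (xt i j) (y j) := by
    intro i j h
    simp only [hxt, dif_pos h]
    exact hxwne i j h
  obtain ⟨g1, ⟨c₁, c₂⟩, hm1, hcol⟩ :=
    ramsey2 (fun i j => ((σ (xt i j) (y i), σ (xt i j) (y j)) : S × S))
  obtain ⟨g2, c₃, hm2, hcol3⟩ :=
    ramsey3 (fun i j k => σ (xt (g1 i) (g1 j)) (y (g1 k)))
  set h : ℕ → ℕ := g1 ∘ g2 with hhdef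
  have hmh : StrictMono h := hm1.comp hm2
  have hk1 : ∀ i j, i < j → σ (xt (h i) (h j)) (y (h i)) = c₁ := by
    intro i j hij
    exact congrArg Prod.fst (hcol (g2 i) (g2 j) (hm2 hij))
  have hk2 : ∀ i j, i < j → σ (xt (h i) (h j)) (y (h j)) = c₂ := by
    intro i j hij
    exact congrArg Prod.snd (hcol (g2 i) (g2 j) (hm2 hij))
  have hk3 : ∀ i j k, i < j → j < k → σ (xt (h i) (h j)) (y (h k)) = c₃ := by
    intro i j k hij hjk
    exact hcol3 i j k hij hjk
  have hc12 : c₁ ≠ c₂ := by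
    intro hcc
    apply hxtne (h 0) (h 1) (hmh (by omega))
    rw [hk1 0 1 (by omega), hk2 0 1 (by omega), hcc]
  by_cases hc3 : c₃ = c₁
  · refine machine ρ hU σ hdet hinj
      (fun a => xt (h (2*a)) (h (2*a+1))) (fun a => y (h (2*a+1)))
      (fun a => hxtA _ _) (fun a => hyB _) c₂ c₃ (fun hcc => hc12 (hcc.trans hc3).symm) ?_ ?_
    · intro a
      exact hk2 (2*a) (2*a+1) (by omega)
    · intro a b hab
      exact hk3 (2*a) (2*a+1) (2*b+1) (by omega) (by omega)
  · refine machine ρ hU σ hdet hinj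
      (fun a => xt (h (2*a)) (h (2*a+1))) (fun a => y (h (2*a)))
      (fun a => hxtA _ _) (fun a => hyB _) c₁ c₃ (fun hcc => hc3 hcc.symm) ?_ ?_
    · intro a
      exact hk1 (2*a) (2*a+1) (by omega)
    · intro a b hab
      exact hk3 (2*a) (2*a+1) (2*b) (by omega) (by omega)
lemma ml (hU : NoLad ρ) {A : Set X} {B : Set Y} {n : ℕ} (pt : Fin n → X × Y)
    (hyp : ∀ x ∈ A, ∀ y ∈ B,
      (∃ j : Fin n, ρ (x, y) = ρ ((pt j).1, y)) ∨
      (∃ j k : Fin n, (j : ℕ) < (k : ℕ) ∧ ρ (x, y) = ρ ((pt j).1, (pt k).2))) :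
    Red ρ A B := by
  classical
  -- the selector alphabet
  let S := (Fin n) ⊕ ((Fin n × Fin n) ⊕ Unit)
  haveI : Finite S := by infer_instance
  -- selector on values
  have hfind : ∀ (v : Z) (y : Y), (∃ j : Fin n, v = ρ ((pt j).1, y)) →
      ∃ m : ℕ, ∃ hm : m < n, v = ρ ((pt ⟨m, hm⟩).1, y) := by
    rintro v y ⟨j, hj⟩
    exact ⟨j.1, j.2, by rwa [Fin.eta]⟩
  let σv : Z → Y → S := fun v y =>
    if h : ∃ j : Fin n, v = ρ ((pt j).1, y) then
      Sum.inl ⟨Nat.find (hfind v y h), (Nat.find_spec (hfind v y h)).choose⟩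
    else if h2 : ∃ c : Fin n × Fin n, (c.1 : ℕ) < (c.2 : ℕ) ∧ v = ρ ((pt c.1).1, (pt c.2).2) then
      Sum.inr (Sum.inl h2.choose)
    else Sum.inr (Sum.inr ())
  have unfold1 : ∀ (v : Z) (y : Y) (h : ∃ j : Fin n, v = ρ ((pt j).1, y)),
      σv v y = Sum.inl ⟨Nat.find (hfind v y h), (Nat.find_spec (hfind v y h)).choose⟩ :=
    fun v y h => dif_pos h
  have unfold2 : ∀ (v : Z) (y : Y) (h : ¬ ∃ j : Fin n, v = ρ ((pt j).1, y))
      (h2 : ∃ c : Fin n × Fin n, (c.1 : ℕ) < (c.2 : ℕ) ∧ v = ρ ((pt c.1).1, (pt c.2).2)),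
      σv v y = Sum.inr (Sum.inl h2.choose) :=
    fun v y h h2 => (dif_neg h).trans (dif_pos h2)
  have unfold3 : ∀ (v : Z) (y : Y) (h : ¬ ∃ j : Fin n, v = ρ ((pt j).1, y))
      (h2 : ¬ ∃ c : Fin n × Fin n, (c.1 : ℕ) < (c.2 : ℕ) ∧ v = ρ ((pt c.1).1, (pt c.2).2)),
      σv v y = Sum.inr (Sum.inr ()) :=
    fun v y h h2 => (dif_neg h).trans (dif_neg h2)
  have s_inl : ∀ (v : Z) (y : Y) (j : Fin n), σv v y = Sum.inl j → v = ρ ((pt j).1, y) := by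
    intro v y j hσ
    by_cases h : ∃ j : Fin n, v = ρ ((pt j).1, y)
    · rw [unfold1 v y h] at hσ
      have hj := Sum.inl.inj hσ
      rw [← hj]
      exact (Nat.find_spec (hfind v y h)).choose_spec
    · by_cases h2 : ∃ c : Fin n × Fin n, (c.1 : ℕ) < (c.2 : ℕ) ∧ v = ρ ((pt c.1).1, (pt c.2).2)
      · rw [unfold2 v y h h2] at hσ; cases hσ
      · rw [unfold3 v y h h2] at hσ; cases hσ
  have s_inr : ∀ (v : Z) (y : Y) (c : Fin n × Fin n), σv v y = Sum.inr (Sum.inl c) →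
      v = ρ ((pt c.1).1, (pt c.2).2) := by
    intro v y c hσ
    by_cases h : ∃ j : Fin n, v = ρ ((pt j).1, y)
    · rw [unfold1 v y h] at hσ; cases hσ
    · by_cases h2 : ∃ c : Fin n × Fin n, (c.1 : ℕ) < (c.2 : ℕ) ∧ v = ρ ((pt c.1).1, (pt c.2).2)
      · rw [unfold2 v y h h2] at hσ
        have hc := Sum.inl.inj (Sum.inr.inj hσ)
        rw [← hc]
        exact h2.choose_spec.2
      · rw [unfold3 v y h h2] at hσ
        cases hσ
  have s_junk : ∀ x ∈ A, ∀ y ∈ B, σv (ρ (x, y)) y ≠ Sum.inr (Sum.inr ()) := by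
    intro x hx y hy hσ
    by_cases h : ∃ j : Fin n, ρ (x, y) = ρ ((pt j).1, y)
    · rw [unfold1 _ _ h] at hσ; cases hσ
    · rcases hyp x hx y hy with hm | ⟨j, k, hjk, hv⟩
      · exact h hm
      · have h2 : ∃ c : Fin n × Fin n, (c.1 : ℕ) < (c.2 : ℕ) ∧
            ρ (x, y) = ρ ((pt c.1).1, (pt c.2).2) := ⟨(j, k), hjk, hv⟩
        rw [unfold2 _ _ h h2] at hσ
        cases hσ
  let σ : X → Y → S := fun x y => σv (ρ (x, y)) y
  have hinj : ∀ x ∈ A, ∀ x' ∈ A, ∀ y ∈ B, ρ (x, y) = ρ (x', y) → σ x y = σ x' y := by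
    intro x _ x' _ y _ hvv
    show σv (ρ (x, y)) y = σv (ρ (x', y)) y
    rw [hvv]
  have hdet : ∀ x ∈ A, ∀ x' ∈ A, ∀ y ∈ B, σ x y = σ x' y → ρ (x, y) = ρ (x', y) := by
    intro x hx x' hx' y hy hσσ
    rcases hs : σ x y with j | c | u
    · rw [hs] at hσσ
      rw [s_inl _ _ _ hs, s_inl _ _ _ hσσ.symm]
    · rw [hs] at hσσ
      rw [s_inr _ _ _ hs, s_inr _ _ _ hσσ.symm]
    · exact absurd hs (s_junk x hx y hy)
  have hfin := fintypes ρ hU σ hdet hinj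
  set Φ : Y → (X → Option S) := fun y x => if x ∈ A then some (σ x y) else none with hΦ
  haveI : Finite ↥(Φ '' B) := hfin.to_subtype
  -- the partition
  let ι := ↥(Φ '' B) × S
  let As : ι → Set X := fun p => {x ∈ A | p.1.1 x = some p.2}
  let Bs : ι → Set Y := fun p => {y ∈ B | Φ y = p.1.1}
  refine red_of_family ρ As Bs ?_ ?_ ?_
  · ext q
    simp only [Set.mem_iUnion]
    constructor
    · rintro ⟨p, hq⟩
      exact ⟨hq.1.1, hq.2.1⟩
    · rintro ⟨hqA, hqB⟩
      refine ⟨⟨⟨Φ q.2, ⟨q.2, hqB, rfl⟩⟩, σ q.1 q.2⟩, ⟨hqA, ?_⟩, hqB, rfl⟩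
      show Φ q.2 q.1 = some (σ q.1 q.2)
      simp only [hΦ, if_pos hqA]
  · rintro ⟨t, c⟩ ⟨t', c'⟩ hne
    rw [Set.disjoint_left]
    rintro q ⟨⟨hqA, hqc⟩, ⟨hqB, hqt⟩⟩ ⟨⟨hqA', hqc'⟩, ⟨hqB', hqt'⟩⟩
    apply hne
    have ht : t = t' := Subtype.ext (hqt ▸ hqt')
    subst ht
    have : some c = some c' := by rw [← hqc, ← hqc']
    rw [Prod.mk.injEq]
    exact ⟨rfl, Option.some.inj this⟩
  · rintro ⟨t, c⟩
    have hval : ∀ x ∈ As (t, c), ∀ y ∈ Bs (t, c), σ x y = c := by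
      rintro x ⟨hxA, hxc⟩ y ⟨hyB, hyt⟩
      have : Φ y x = some c := by rw [hyt]; exact hxc
      rw [show Φ y x = if x ∈ A then some (σ x y) else none from rfl, if_pos hxA] at this
      exact Option.some.inj this
    rcases c with j | c | u
    · refine Or.inr ?_
      intro x hx x' hx' y hy
      have h1 := s_inl _ _ _ (hval x hx y hy)
      have h2 := s_inl _ _ _ (hval x' hx' y hy)
      rw [h1, h2]
    · refine Or.inr ?_
      intro x hx x' hx' y hy
      have h1 := s_inr _ _ _ (hval x hx y hy)
      have h2 := s_inr _ _ _ (hval x' hx' y hy)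
      rw [h1, h2]
    · refine Or.inr ?_
      intro x hx x' hx' y hy
      exact absurd (hval x hx y hy) (s_junk x hx.1 y hy.1)
lemma exists_stuck (hU : NoLad ρ) (A : Set X) (B : Set Y) (z : X × Y) :
    ∃ (n : ℕ) (f : ℕ → X × Y), (∀ i < n, (f i).1 ∈ A ∧ (f i).2 ∈ B) ∧ VP ρ f n ∧
      ∀ x ∈ A, ∀ y ∈ B, ¬ VP ρ (Function.update f n (x, y)) (n + 1) := by
  by_contra hno
  push_neg at hno
  have hstep : ∀ n (f : ℕ → X × Y), ((∀ i < n, (f i).1 ∈ A ∧ (f i).2 ∈ B) ∧ VP ρ f n) →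
      ∃ f', ((∀ i < n + 1, (f' i).1 ∈ A ∧ (f' i).2 ∈ B) ∧ VP ρ f' (n + 1)) ∧
        ∀ i < n, f' i = f i := by
    intro n f hf
    obtain ⟨x, hx, y, hy, hVP⟩ := hno n f hf.1 hf.2
    refine ⟨Function.update f n (x, y), ⟨?_, hVP⟩, ?_⟩
    · intro i hi
      rcases Nat.lt_or_ge i n with h' | h'
      · rw [Function.update_of_ne (by omega)]
        exact hf.1 i h'
      · have hin : i = n := by omega
        subst hin
        rw [Function.update_self]
        exact ⟨hx, hy⟩
    · intro i hi
      exact Function.update_of_ne (by omega) _ f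
  choose stepf hstep1 hstep2 using hstep
  have hbase : (∀ i < 0, ((fun _ => z) i).1 ∈ A ∧ ((fun _ => z) i).2 ∈ B) ∧
      VP ρ (fun _ => z) 0 := ⟨fun i hi => absurd hi (by omega), fun i j k hi hk _ => absurd hk (by omega)⟩
  let s : (m : ℕ) → {f : ℕ → X × Y // (∀ i < m, (f i).1 ∈ A ∧ (f i).2 ∈ B) ∧ VP ρ f m} :=
    fun m => Nat.rec ⟨fun _ => z, hbase⟩ (fun m prev => ⟨stepf m prev.1 prev.2, hstep1 m prev.1 prev.2⟩) m
  have hs : ∀ m, (s (m + 1)).1 = stepf m (s m).1 (s m).2 := fun m => rfl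
  set q : ℕ → X × Y := fun i => (s (i + 1)).1 i with hq
  have agree : ∀ m i, i < m → (s m).1 i = q i := by
    intro m
    induction m with
    | zero => intro i hi; omega
    | succ k ih =>
      intro i hi
      rcases Nat.lt_or_ge i k with h' | h'
      · rw [hs k, hstep2 k (s k).1 (s k).2 i h']
        exact ih i h'
      · have : i = k := by omega
        subst this
        rfl
  have hVPq : ∀ m, VP ρ q m := by
    intro m i j k hi hk hjk
    have h0 := (s m).2.2 i j k hi hk hjk
    rw [agree m i hi, agree m j (by omega), agree m k hk] at h0
    exact h0
  apply hU (fun i => (q i).1) (fun i => (q i).2)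
  intro i j k hjk
  exact hVPq (max i k + 1) i j k (by omega) (by omega) hjk
lemma step_lemma (hU : NoLad ρ) {A : Set X} {B : Set Y} (hnr : ¬ Red ρ A B) :
    ∃ (A' : Set X) (C : Set Y) (r : X) (w : Z) (yd : Y),
      ¬ Red ρ A' C ∧ C ⊆ B ∧ (∀ y ∈ C, ρ (r, y) = w) ∧ yd ∈ B ∧ ρ (r, yd) ≠ w := by
  have hne : (A ×ˢ B).Nonempty := by
    by_contra h
    exact hnr (red_empty ρ (Set.not_nonempty_iff_eq_empty.1 h))
  obtain ⟨z, hz⟩ := hne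
  set A₁ : Set X := {x ∈ A | ∃ y₁ ∈ B, ∃ y₂ ∈ B, ρ (x, y₁) ≠ ρ (x, y₂)} with hA₁
  have hconst : Red ρ (A \ A₁) B := by
    apply red_single
    left
    intro x hx y hy y' hy'
    by_contra hne'
    exact hx.2 ⟨hx.1, y, hy, y', hy', hne'⟩
  have hnr1 : ¬ Red ρ A₁ B := by
    intro h
    apply hnr
    have hAeq : A₁ ∪ (A \ A₁) = A := Set.union_diff_cancel (Set.sep_subset _ _)
    rw [← hAeq]
    exact red_rows2 ρ disjoint_sdiff_self_right h hconst
  obtain ⟨n, f, hreg, hvp, hstuck⟩ := exists_stuck ρ hU A₁ B z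
  set compat : Set Y := {y ∈ B | ∀ i j, i < n → j < n → ρ ((f j).1, y) ≠ ρ (f i)} with hcompat
  have hml : Red ρ A₁ compat := by
    apply ml ρ hU (fun i : Fin n => f i)
    intro x hx y hy
    have hnv := hstuck x hx y hy.1
    simp only [VP] at hnv
    push_neg at hnv
    obtain ⟨i, j, k, hi, hk, hjk, heq⟩ := hnv
    have hjn : j < n := by omega
    rw [Function.update_of_ne (show j ≠ n by omega)] at heq
    rcases Nat.lt_or_ge i n with hin | hin
    · rw [Function.update_of_ne (show i ≠ n by omega)] at heq
      rcases Nat.lt_or_ge k n with hkn | hkn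
      · rw [Function.update_of_ne (show k ≠ n by omega)] at heq
        exact absurd heq (hvp i j k hin hkn hjk)
      · have hkeq : k = n := by omega
        rw [hkeq, Function.update_self] at heq
        exact absurd heq.symm (hy.2 i j hin hjn)
    · have hieq : i = n := by omega
      rw [hieq, Function.update_self] at heq
      rcases Nat.lt_or_ge k n with hkn | hkn
      · rw [Function.update_of_ne (show k ≠ n by omega)] at heq
        exact Or.inr ⟨⟨j, hjn⟩, ⟨k, hkn⟩, hjk, heq⟩
      · have hkeq : k = n := by omega
        rw [hkeq, Function.update_self] at heq
        exact Or.inl ⟨⟨j, hjn⟩, heq⟩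
  set pred : Y → ℕ → Prop :=
    fun y m => ∃ j i, j < n ∧ i < n ∧ m = j * n + i ∧ ρ ((f j).1, y) = ρ (f i) with hpred
  set piece : ℕ → Set Y := fun t => {y ∈ B | ∃ h : ∃ m, pred y m, Nat.find h = t} with hpiece
  have hdecomp : ∀ t j i, j < n → i < n → t = j * n + i → j = t / n ∧ i = t % n := by
    intro t j i hj hi ht
    have hn : 0 < n := by omega
    have h1 : t = i + n * j := by rw [ht]; ring
    constructor
    · rw [h1, Nat.add_mul_div_left _ _ hn, Nat.div_eq_of_lt hi]
      omega
    · rw [h1, Nat.add_mul_mod_self_left, Nat.mod_eq_of_lt hi]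
  have hpieceval : ∀ t : ℕ, ∀ y ∈ piece t,
      ρ ((f (t / n)).1, y) = ρ (f (t % n)) ∧ t / n < n ∧ t % n < n := by
    intro t y hy
    obtain ⟨hyB, hex, hfind⟩ := hy
    have hspec := Nat.find_spec hex
    rw [hfind] at hspec
    obtain ⟨j, i, hj, hi, hdec, heq⟩ := hspec
    obtain ⟨hj2, hi2⟩ := hdecomp t j i hj hi hdec
    rw [← hj2, ← hi2]
    exact ⟨heq, hj2 ▸ hj, hi2 ▸ hi⟩
  by_cases hall : ∀ t : Fin (n * n), Red ρ A₁ (piece (t : ℕ))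
  · exfalso
    apply hnr1
    refine red_cols ρ (ι := Option (Fin (n * n)))
      (fun o => Option.elim o compat (fun t => piece (t : ℕ))) ?_ ?_ ?_
    · rintro (_|t) (_|t') hne'
      · exact absurd rfl hne'
      · rw [Set.disjoint_left]
        rintro y hyc hyp'
        obtain ⟨hyB, hex, hfind⟩ := hyp'
        have hspec := Nat.find_spec hex
        obtain ⟨j, i, hj, hi, hdec, heq⟩ := hspec
        exact hyc.2 i j hi hj heq
      · rw [Set.disjoint_left]
        rintro y hyp' hyc
        obtain ⟨hyB, hex, hfind⟩ := hyp'
        have hspec := Nat.find_spec hex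
        obtain ⟨j, i, hj, hi, hdec, heq⟩ := hspec
        exact hyc.2 i j hi hj heq
      · rw [Set.disjoint_left]
        rintro y hyt hyt'
        obtain ⟨hyB, hex, hfind⟩ := hyt
        obtain ⟨hyB', hex', hfind'⟩ := hyt'
        apply hne'
        have hee : hex = hex' := Subsingleton.elim _ _
        rw [hee] at hfind
        have : (t : ℕ) = (t' : ℕ) := by rw [← hfind, ← hfind']
        simp only [Option.some.injEq]
        exact Fin.ext this
    · ext y
      simp only [Set.mem_iUnion]
      constructor
      · rintro ⟨o, ho⟩
        cases o with
        | none => exact ho.1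
        | some t => exact ho.1
      · intro hyB
        by_cases hcomp : ∀ i j, i < n → j < n → ρ ((f j).1, y) ≠ ρ (f i)
        · exact ⟨none, hyB, hcomp⟩
        · push_neg at hcomp
          obtain ⟨i, j, hi, hj, heq⟩ := hcomp
          have hex : ∃ m, pred y m := ⟨j * n + i, j, i, hj, hi, rfl, heq⟩
          have hb : Nat.find hex < n * n := by
            have hspec := Nat.find_spec hex
            obtain ⟨j', i', hj', hi', hdec, _⟩ := hspec
            have hlt : j' * n + i' < n * n := by
              calc j' * n + i' < j' * n + n := by omega
              _ = (j' + 1) * n := by ring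
              _ ≤ n * n := Nat.mul_le_mul_right n (by omega)
            omega
          exact ⟨some ⟨Nat.find hex, hb⟩, hyB, hex, rfl⟩
    · rintro (_|t)
      · exact hml
      · exact hall t
  · push_neg at hall
    obtain ⟨t, ht⟩ := hall
    have hpne : (piece (t : ℕ)).Nonempty := by
      by_contra hemp
      apply ht
      apply red_empty
      rw [Set.not_nonempty_iff_eq_empty.1 hemp]
      exact Set.prod_empty
    obtain ⟨y₀, hy₀⟩ := hpne
    obtain ⟨hval₀, hjn, hin⟩ := hpieceval (t : ℕ) y₀ hy₀
    have hrA₁ : (f ((t : ℕ) / n)).1 ∈ A₁ := (hreg _ hjn).1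
    obtain ⟨-, y₁, hy₁, y₂, hy₂, hneq⟩ := hrA₁
    set r := (f ((t : ℕ) / n)).1 with hr
    set w := ρ (f ((t : ℕ) % n)) with hw
    by_cases hcase : ρ (r, y₁) = w
    · refine ⟨A₁, piece (t : ℕ), r, w, y₂, ht, fun y hy => hy.1,
        fun y hy => (hpieceval (t : ℕ) y hy).1, hy₂, ?_⟩
      intro h2
      exact hneq (hcase.trans h2.symm)
    · exact ⟨A₁, piece (t : ℕ), r, w, y₁, ht, fun y hy => hy.1,
        fun y hy => (hpieceval (t : ℕ) y hy).1, hy₁, hcase⟩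
lemma main1 (hU : NoLad ρ) : Red ρ (univ : Set X) (univ : Set Y) := by
  by_contra hnr
  let St := {p : Set X × Set Y // ¬ Red ρ p.1 p.2}
  have hstep : ∀ s : St, ∃ q : St × (X × Z × Y),
      q.1.1.2 ⊆ s.1.2 ∧ (∀ y ∈ q.1.1.2, ρ (q.2.1, y) = q.2.2.1) ∧
      q.2.2.2 ∈ s.1.2 ∧ ρ (q.2.1, q.2.2.2) ≠ q.2.2.1 := by
    rintro ⟨⟨A, B⟩, hs⟩
    obtain ⟨A', C, r, w, yd, hnr', hCB, hconst, hydB, hydne⟩ := step_lemma ρ hU hs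
    exact ⟨⟨⟨(A', C), hnr'⟩, (r, w, yd)⟩, hCB, hconst, hydB, hydne⟩
  choose stepf hsub hconst hydB hydne using hstep
  let seq : ℕ → St := fun m => Nat.rec ⟨(univ, univ), hnr⟩ (fun _ s => (stepf s).1) m
  have hseq : ∀ m, seq (m+1) = (stepf (seq m)).1 := fun m => rfl
  set r : ℕ → X := fun m => (stepf (seq m)).2.1 with hr
  set w : ℕ → Z := fun m => (stepf (seq m)).2.2.1 with hw
  set yd : ℕ → Y := fun m => (stepf (seq m)).2.2.2 with hyd
  set Bs : ℕ → Set Y := fun m => (seq m).1.2 with hBs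
  have hchain : ∀ m, Bs (m+1) ⊆ Bs m := fun m => hsub (seq m)
  have hmono : ∀ a b, a ≤ b → Bs b ⊆ Bs a := by
    intro a b hab
    induction b with
    | zero => cases Nat.le_zero.1 hab; exact fun y hy => hy
    | succ k ih =>
      rcases Nat.lt_or_ge a (k+1) with h' | h'
      · exact (hchain k).trans (ih (by omega))
      · cases Nat.le_antisymm hab h'; exact fun y hy => hy
  have hcross : ∀ a b, a < b → ρ (r a, yd b) = w a := by
    intro a b hab
    apply hconst (seq a)
    exact hmono (a+1) b hab (hydB (seq b))
  have hdne : ∀ m, ρ (r m, yd m) ≠ w m := fun m => hydne (seq m)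
  obtain ⟨g, ⟨b₁, b₂⟩, hg, hcol⟩ := ramsey2 (fun i j =>
    ((decide (ρ (r i, yd i) = w j), decide (ρ (r j, yd j) = w i)) : Bool × Bool))
  have k1 : ∀ i j, i < j → ((ρ (r (g i), yd (g i)) = w (g j)) ↔ b₁ = true) := by
    intro i j hij
    exact decide_eq_iff (congrArg Prod.fst (hcol i j hij))
  have k2 : ∀ i j, i < j → ((ρ (r (g j), yd (g j)) = w (g i)) ↔ b₂ = true) := by
    intro i j hij
    exact decide_eq_iff (congrArg Prod.snd (hcol i j hij))
  by_cases hb1 : b₁ = true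
  · have e1 : ρ (r (g 0), yd (g 0)) = w (g 2) := (k1 0 2 (by omega)).2 hb1
    have e2 : ρ (r (g 1), yd (g 1)) = w (g 2) := (k1 1 2 (by omega)).2 hb1
    have e3 : ρ (r (g 0), yd (g 0)) = w (g 1) := (k1 0 1 (by omega)).2 hb1
    exact hdne (g 1) ((e2.trans e1.symm).trans e3)
  by_cases hb2 : b₂ = true
  · have e1 : ρ (r (g 1), yd (g 1)) = w (g 0) := (k2 0 1 (by omega)).2 hb2
    have e2 : ρ (r (g 2), yd (g 2)) = w (g 0) := (k2 0 2 (by omega)).2 hb2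
    have e3 : ρ (r (g 2), yd (g 2)) = w (g 1) := (k2 1 2 (by omega)).2 hb2
    exact hdne (g 1) (e1.trans (e2.symm.trans e3))
  · apply hU (fun i => r (g i)) (fun i => yd (g i))
    intro i j k hjk heq
    rw [hcross (g j) (g k) (hg hjk)] at heq
    rcases lt_trichotomy i j with hij | hij | hij
    · exact hb1 ((k1 i j hij).1 heq)
    · subst hij; exact hdne (g i) heq
    · exact hb2 ((k2 j i hij).1 heq)
lemma not_both
    (h1 : ∃ (n : ℕ) (As : Fin n → Set X) (Bs : Fin n → Set Y),
        (⋃ i, As i ×ˢ Bs i) = Set.univ ∧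
        (∀ i j, i ≠ j → Disjoint (As i ×ˢ Bs i) (As j ×ˢ Bs j)) ∧
        ∀ i, DependsOnAtMostOneCoord ρ (As i) (Bs i))
    (h2 : ∃ (x : ℕ → X) (y : ℕ → Y),
        ∀ i j k : ℕ, j < k → ρ (x i, y i) ≠ ρ (x j, y k)) : False := by
  obtain ⟨n, As, Bs, hcov, hdisj, hdep⟩ := h1
  obtain ⟨x, y, hxy⟩ := h2
  have hmem : ∀ m : ℕ, ∃ i : Fin n, (x m, y m) ∈ As i ×ˢ Bs i := by
    intro m
    have : (x m, y m) ∈ ⋃ i, As i ×ˢ Bs i := by rw [hcov]; trivial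
    exact Set.mem_iUnion.1 this
  choose F hF using hmem
  have : ∃ a b : ℕ, a ≠ b ∧ F a = F b := by
    have hn : n ≠ 0 := by
      rintro rfl; exact (F 0).elim0
    exact Finite.exists_ne_map_eq_of_infinite F
  obtain ⟨a, b, hab, hFab⟩ := this
  -- wlog a < b
  rcases lt_or_gt_of_ne hab with hlt | hlt
  case _ =>
    rcases hdep (F a) with hdepA | hdepB
    · have hb := hF b; rw [← hFab] at hb
      exact hxy a a b hlt (hdepA _ (hF a).1 _ (hF a).2 _ hb.2)
    · have hb := hF b; rw [← hFab] at hb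
      exact hxy b a b hlt ((hdepB _ (hF a).1 _ hb.1 _ hb.2).symm)
  case _ =>
    rcases hdep (F b) with hdepA | hdepB
    · have ha := hF a; rw [hFab] at ha
      exact hxy b b a hlt (hdepA _ (hF b).1 _ (hF b).2 _ ha.2)
    · have ha := hF a; rw [hFab] at ha
      exact hxy a b a hlt ((hdepB _ (hF b).1 _ ha.1 _ ha.2).symm)
end RCD

/-- For any map `ρ : X × Y → Z`, exactly one of the following holds: either `X × Y` is
covered by finitely many mutually disjoint rectangles on each of which `ρ` depends on at
most one coordinate, or there are sequences `(xᵢ)`, `(yᵢ)` with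
`ρ(xᵢ, yᵢ) ≠ ρ(xⱼ, yₖ)` for all `i` and all `j < k`. -/
theorem rectangle_cover_dichotomy {X Y Z : Type*} (ρ : X × Y → Z) :
    Xor'
      (∃ (n : ℕ) (As : Fin n → Set X) (Bs : Fin n → Set Y),
        (⋃ i, As i ×ˢ Bs i) = Set.univ ∧
        (∀ i j, i ≠ j → Disjoint (As i ×ˢ Bs i) (As j ×ˢ Bs j)) ∧
        ∀ i, DependsOnAtMostOneCoord ρ (As i) (Bs i))
      (∃ (x : ℕ → X) (y : ℕ → Y),
        ∀ i j k : ℕ, j < k → ρ (x i, y i) ≠ ρ (x j, y k)) := by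
  by_cases h2 : ∃ (x : ℕ → X) (y : ℕ → Y), ∀ i j k : ℕ, j < k → ρ (x i, y i) ≠ ρ (x j, y k)
  · exact Or.inr ⟨h2, fun h1 => RCD.not_both ρ h1 h2⟩
  · refine Or.inl ⟨?_, h2⟩
    have hU : RCD.NoLad ρ := by
      intro x y hxy; exact h2 ⟨x, y, hxy⟩
    obtain ⟨n, As, Bs, hcov, hdisj, hdep⟩ := RCD.main1 ρ hU
    exact ⟨n, As, Bs, by rw [hcov, Set.univ_prod_univ], hdisj, hdep⟩
end

section
/- Let X and Y be infinite compact Hausdorff spaces and Z a sub-Stonean space. Then there is no injective continuous map \rho : X \times Y \to Z. In particular, X \times Y is never homeomorphic to a sub-Stonean space when X and Y are infinite compact Hausdorff spaces. -/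
open Set Filter Topology

/-- A space is sub-Stonean (an F-space) if any two disjoint open σ-compact subsets have
disjoint compact closures. -/
def SubStonean (Z : Type*) [TopologicalSpace Z] : Prop :=
  ∀ U V : Set Z, IsOpen U → IsOpen V → IsSigmaCompact U → IsSigmaCompact V →
    Disjoint U V → Disjoint (closure U) (closure V) ∧
      IsCompact (closure U) ∧ IsCompact (closure V)

lemma subStonean_aux_step {X : Type*} [TopologicalSpace X] [T25Space X]
    {S : Set X} (hS : S.Infinite) :
    ∃ a u, a ∈ S ∧ IsOpen u ∧ a ∈ u ∧ (S \ closure u).Infinite := by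
  obtain ⟨a, haS, b, hbS, hab⟩ := hS.nontrivial
  obtain ⟨u, hau, hu, v, hbv, hv, hdis⟩ := exists_open_nhds_disjoint_closure hab
  by_cases h : (S \ closure u).Infinite
  · exact ⟨a, u, haS, hu, hau, h⟩
  · refine ⟨b, v, hbS, hv, hbv, ?_⟩
    rw [Set.not_infinite] at h
    have h1 : (S ∩ closure u).Infinite := by
      intro hfin
      exact hS ((hfin.union h).subset (fun z hz => by
        by_cases hc : z ∈ closure u
        · exact Or.inl ⟨hz, hc⟩
        · exact Or.inr ⟨hz, hc⟩))
    exact h1.mono (fun z hz => ⟨hz.1, fun hzc =>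
      (Set.disjoint_left.mp hdis hz.2 hzc)⟩)

/-- In an infinite compact Hausdorff space there is a sequence of points with pairwise
disjoint open neighborhoods. -/
lemma exists_disjoint_open_seq (X : Type*) [TopologicalSpace X] [CompactSpace X]
    [T2Space X] [Infinite X] :
    ∃ (x : ℕ → X) (U : ℕ → Set X), (∀ n, IsOpen (U n)) ∧ (∀ n, x n ∈ U n) ∧
      ∀ m n, m ≠ n → Disjoint (U m) (U n) := by
  choose pt op hmemS hop hmem hinf using
    fun (S : Set X) (hS : S.Infinite) => subStonean_aux_step hS
  let st : ℕ → {S : Set X // S.Infinite} := fun n =>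
    Nat.rec ⟨Set.univ, Set.infinite_univ⟩
      (fun _ p => ⟨p.1 \ closure (op p.1 p.2), hinf p.1 p.2⟩) n
  set xs : ℕ → X := fun n => pt (st n).1 (st n).2 with hxs
  set U' : ℕ → Set X := fun n => op (st n).1 (st n).2 with hU'
  have hstep : ∀ n, (st (n + 1)).1 = (st n).1 \ closure (U' n) := fun n => rfl
  have hanti : ∀ m n, m ≤ n → (st n).1 ⊆ (st m).1 := by
    intro m n hmn
    induction n with
    | zero => simp_all
    | succ k ih =>
      rcases Nat.lt_or_ge m (k + 1) with h | h
      · have h' : (st (k + 1)).1 ⊆ (st k).1 := by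
          rw [hstep k]; exact Set.diff_subset
        exact h'.trans (ih (Nat.lt_succ_iff.mp h))
      · have : m = k + 1 := le_antisymm hmn h
        subst this; exact subset_rfl
  have hnotcl : ∀ m n, m < n → xs n ∉ closure (U' m) := by
    intro m n hmn hmem'
    have h1 : xs n ∈ (st n).1 := hmemS _ _
    have h2 : (st n).1 ⊆ (st (m + 1)).1 := hanti _ _ hmn
    rw [hstep m] at h2
    exact (h2 h1).2 hmem'
  refine ⟨xs, fun n => U' n \ ⋃ m ∈ Set.Iio n, closure (U' m), ?_, ?_, ?_⟩
  · intro n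
    exact (hop _ _).sdiff ((Set.finite_Iio n).isClosed_biUnion
      (fun m _ => isClosed_closure))
  · intro n
    refine ⟨hmem _ _, ?_⟩
    simp only [Set.mem_iUnion, not_exists]
    intro m hm
    exact hnotcl m n hm
  · intro m n hmn
    rcases hmn.lt_or_gt with h | h
    · rw [Set.disjoint_left]
      intro z hz hz'
      exact hz'.2 (Set.mem_biUnion h (subset_closure hz.1))
    · rw [Set.disjoint_right]
      intro z hz hz'
      exact hz'.2 (Set.mem_biUnion h (subset_closure hz.1))

/-- If `X` and `Y` are infinite compact Hausdorff spaces and `Z` is sub-Stonean, then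
there is no injective continuous map `X × Y → Z`; in particular `X × Y` is never
homeomorphic to a sub-Stonean space. -/
theorem no_injective_continuous_map_into_subStonean
    {X Y Z : Type*} [TopologicalSpace X] [CompactSpace X] [T2Space X] [Infinite X]
    [TopologicalSpace Y] [CompactSpace Y] [T2Space Y] [Infinite Y]
    [TopologicalSpace Z] [CompactSpace Z] [T2Space Z] (hZ : SubStonean Z) :
    (∀ ρ : X × Y → Z, Continuous ρ → ¬ Function.Injective ρ) ∧
    ¬ Nonempty ((X × Y) ≃ₜ Z) := by
  have main : ∀ ρ : X × Y → Z, Continuous ρ → ¬ Function.Injective ρ := by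
    intro ρ hcont hinj
    obtain ⟨xs, U, hUo, hxU, hUd⟩ := exists_disjoint_open_seq X
    obtain ⟨ys, V, hVo, hyV, hVd⟩ := exists_disjoint_open_seq Y
    have hxinj : Function.Injective xs := fun m n h => by
      by_contra hne
      exact Set.disjoint_left.mp (hUd m n hne) (hxU m) (h ▸ hxU n)
    have hyinj : Function.Injective ys := fun m n h => by
      by_contra hne
      exact Set.disjoint_left.mp (hVd m n hne) (hyV m) (h ▸ hyV n)
    -- the two grids
    set S₁ : Set (X × Y) := {w | ∃ n m : ℕ, m < n ∧ w = (xs n, ys m)} with hS₁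
    set S₂ : Set (X × Y) := {w | ∃ n m : ℕ, n < m ∧ w = (xs n, ys m)} with hS₂
    -- cluster points
    obtain ⟨px, hpx⟩ := exists_clusterPt_of_compactSpace (Filter.map xs Filter.atTop)
    obtain ⟨py, hpy⟩ := exists_clusterPt_of_compactSpace (Filter.map ys Filter.atTop)
    have hfx : ∀ N ∈ 𝓝 px, ∀ b : ℕ, ∃ n, b ≤ n ∧ xs n ∈ N := by
      intro N hN b
      exact Filter.frequently_atTop.mp (mapClusterPt_iff_frequently.mp hpx N hN) b
    have hfy : ∀ N ∈ 𝓝 py, ∀ b : ℕ, ∃ n, b ≤ n ∧ ys n ∈ N := by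
      intro N hN b
      exact Filter.frequently_atTop.mp (mapClusterPt_iff_frequently.mp hpy N hN) b
    -- the common closure point
    have hP1 : (px, py) ∈ closure S₁ := by
      rw [mem_closure_iff_nhds]
      intro t ht
      obtain ⟨A, hA, B, hB, hAB⟩ := mem_nhds_prod_iff.mp ht
      obtain ⟨m, -, hmB⟩ := hfy B hB 0
      obtain ⟨n, hn, hnA⟩ := hfx A hA (m + 1)
      exact ⟨(xs n, ys m), hAB ⟨hnA, hmB⟩, n, m, Nat.lt_of_succ_le hn, rfl⟩
    have hP2 : (px, py) ∈ closure S₂ := by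
      rw [mem_closure_iff_nhds]
      intro t ht
      obtain ⟨A, hA, B, hB, hAB⟩ := mem_nhds_prod_iff.mp ht
      obtain ⟨n, -, hnA⟩ := hfx A hA 0
      obtain ⟨m, hm, hmB⟩ := hfy B hB (n + 1)
      exact ⟨(xs n, ys m), hAB ⟨hnA, hmB⟩, n, m, Nat.lt_of_succ_le hm, rfl⟩
    -- points of S₁ are not in the closure of S₂ and vice versa
    have hsep : ∀ s ∈ S₁, s ∉ closure S₂ := by
      rintro s ⟨n, m, hmn, rfl⟩ hcl
      rw [mem_closure_iff] at hcl
      obtain ⟨w, ⟨hw1, hw2⟩, n', m', hn'm', hw⟩ :=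
        hcl (U n ×ˢ V m) ((hUo n).prod (hVo m)) ⟨hxU n, hyV m⟩
      subst hw
      have hn : n' = n := by
        by_contra hne
        exact Set.disjoint_left.mp (hUd n' n hne) (hxU n') hw1
      have hm : m' = m := by
        by_contra hne
        exact Set.disjoint_left.mp (hVd m' m hne) (hyV m') hw2
      omega
    have hsep' : ∀ s ∈ S₂, s ∉ closure S₁ := by
      rintro s ⟨n, m, hmn, rfl⟩ hcl
      rw [mem_closure_iff] at hcl
      obtain ⟨w, ⟨hw1, hw2⟩, n', m', hn'm', hw⟩ :=
        hcl (U n ×ˢ V m) ((hUo n).prod (hVo m)) ⟨hxU n, hyV m⟩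
      subst hw
      have hn : n' = n := by
        by_contra hne
        exact Set.disjoint_left.mp (hUd n' n hne) (hxU n') hw1
      have hm : m' = m := by
        by_contra hne
        exact Set.disjoint_left.mp (hVd m' m hne) (hyV m') hw2
      omega
    -- ρ is a closed embedding
    have hemb : IsClosedEmbedding ρ := hcont.isClosedEmbedding hinj
    have hnot1 : ∀ s ∈ S₁, ρ s ∉ closure (ρ '' S₂) := by
      intro s hs h
      rw [hemb.closure_image_eq] at h
      obtain ⟨w, hw, hws⟩ := h
      exact hsep s hs (hinj hws ▸ hw)
    have hnot2 : ∀ s ∈ S₂, ρ s ∉ closure (ρ '' S₁) := by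
      intro s hs h
      rw [hemb.closure_image_eq] at h
      obtain ⟨w, hw, hws⟩ := h
      exact hsep' s hs (hinj hws ▸ hw)
    -- enumerate S₁ and S₂
    have hc1 : S₁.Countable :=
      (Set.countable_range (fun p : ℕ × ℕ => (xs p.1, ys p.2))).mono
        (by rintro w ⟨n, m, -, rfl⟩; exact ⟨(n, m), rfl⟩)
    have hc2 : S₂.Countable :=
      (Set.countable_range (fun p : ℕ × ℕ => (xs p.1, ys p.2))).mono
        (by rintro w ⟨n, m, -, rfl⟩; exact ⟨(n, m), rfl⟩)
    obtain ⟨σ₁, hσ₁⟩ := hc1.exists_eq_range ⟨(xs 1, ys 0), 1, 0, one_pos, rfl⟩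
    obtain ⟨σ₂, hσ₂⟩ := hc2.exists_eq_range ⟨(xs 0, ys 1), 0, 1, one_pos, rfl⟩
    have hσ₁mem : ∀ k, σ₁ k ∈ S₁ := fun k => hσ₁ ▸ Set.mem_range_self k
    have hσ₂mem : ∀ k, σ₂ k ∈ S₂ := fun k => hσ₂ ▸ Set.mem_range_self k
    -- Urysohn functions
    have hU1 : ∀ k : ℕ, ∃ F : C(Z, ℝ), Set.EqOn F 0 (closure (ρ '' S₂)) ∧
        Set.EqOn F 1 {ρ (σ₁ k)} ∧ ∀ z, F z ∈ Set.Icc (0 : ℝ) 1 := by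
      intro k
      exact exists_continuous_zero_one_of_isClosed isClosed_closure isClosed_singleton
        (Set.disjoint_singleton_right.mpr (hnot1 _ (hσ₁mem k)))
    have hU2 : ∀ k : ℕ, ∃ G : C(Z, ℝ), Set.EqOn G 0 (closure (ρ '' S₁)) ∧
        Set.EqOn G 1 {ρ (σ₂ k)} ∧ ∀ z, G z ∈ Set.Icc (0 : ℝ) 1 := by
      intro k
      exact exists_continuous_zero_one_of_isClosed isClosed_closure isClosed_singleton
        (Set.disjoint_singleton_right.mpr (hnot2 _ (hσ₂mem k)))
    choose F hF0 hF1 hFmem using hU1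
    choose G hG0 hG1 hGmem using hU2
    have hgeom : Summable fun k : ℕ => (1 / 2 : ℝ) ^ k :=
      summable_geometric_of_lt_one (by norm_num) (by norm_num)
    have hbound : ∀ (H : ℕ → C(Z, ℝ)), (∀ k z, H k z ∈ Set.Icc (0:ℝ) 1) →
        ∀ (k : ℕ) (z : Z), ‖(1 / 2 : ℝ) ^ k * H k z‖ ≤ (1 / 2 : ℝ) ^ k := by
      intro H hH k z
      rw [norm_mul, norm_pow]
      calc ‖(1/2 : ℝ)‖ ^ k * ‖H k z‖ ≤ ‖(1/2 : ℝ)‖ ^ k * 1 := by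
            apply mul_le_mul_of_nonneg_left _ (by positivity)
            rw [Real.norm_eq_abs, abs_le]
            exact ⟨by linarith [(hH k z).1], (hH k z).2⟩
        _ = (1/2 : ℝ) ^ k := by rw [mul_one, Real.norm_eq_abs, abs_of_pos]; norm_num
    set f : Z → ℝ := fun z => ∑' k, (1 / 2 : ℝ) ^ k * F k z with hf
    set g : Z → ℝ := fun z => ∑' k, (1 / 2 : ℝ) ^ k * G k z with hg
    have hfc : Continuous f := continuous_tsum
      (fun k => continuous_const.mul (F k).continuous) hgeom (hbound F hFmem)
    have hgc : Continuous g := continuous_tsum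
      (fun k => continuous_const.mul (G k).continuous) hgeom (hbound G hGmem)
    have hsumf : ∀ z, Summable fun k => (1 / 2 : ℝ) ^ k * F k z := fun z =>
      Summable.of_nonneg_of_le
        (fun k => mul_nonneg (by positivity) (hFmem k z).1)
        (fun k => by
          calc (1/2 : ℝ) ^ k * F k z ≤ (1/2 : ℝ) ^ k * 1 :=
                mul_le_mul_of_nonneg_left (hFmem k z).2 (by positivity)
            _ = (1/2 : ℝ) ^ k := mul_one _) hgeom
    have hsumg : ∀ z, Summable fun k => (1 / 2 : ℝ) ^ k * G k z := fun z =>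
      Summable.of_nonneg_of_le
        (fun k => mul_nonneg (by positivity) (hGmem k z).1)
        (fun k => by
          calc (1/2 : ℝ) ^ k * G k z ≤ (1/2 : ℝ) ^ k * 1 :=
                mul_le_mul_of_nonneg_left (hGmem k z).2 (by positivity)
            _ = (1/2 : ℝ) ^ k := mul_one _) hgeom
    -- values
    have hfzero : ∀ z ∈ closure (ρ '' S₂), f z = 0 := by
      intro z hz
      have h0 : f z = ∑' _ : ℕ, (0 : ℝ) :=
        tsum_congr fun k => by rw [hF0 k hz]; simp
      rw [h0, tsum_zero]
    have hgzero : ∀ z ∈ closure (ρ '' S₁), g z = 0 := by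
      intro z hz
      have h0 : g z = ∑' _ : ℕ, (0 : ℝ) :=
        tsum_congr fun k => by rw [hG0 k hz]; simp
      rw [h0, tsum_zero]
    have hfpos : ∀ s ∈ S₁, 0 < f (ρ s) := by
      intro s hs
      obtain ⟨k, hk⟩ : ∃ k, σ₁ k = s := by
        have : s ∈ Set.range σ₁ := hσ₁ ▸ hs
        exact this
      have h1 : F k (ρ s) = 1 := by
        have := hF1 k (show ρ (σ₁ k) ∈ {ρ (σ₁ k)} from rfl)
        rw [hk] at this
        simpa using this
      calc (0 : ℝ) < (1/2 : ℝ) ^ k * F k (ρ s) := by rw [h1]; positivity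
        _ ≤ f (ρ s) := Summable.le_tsum (hsumf (ρ s)) k
            (fun j _ => mul_nonneg (by positivity) (hFmem j (ρ s)).1)
    have hgpos : ∀ s ∈ S₂, 0 < g (ρ s) := by
      intro s hs
      obtain ⟨k, hk⟩ : ∃ k, σ₂ k = s := by
        have : s ∈ Set.range σ₂ := hσ₂ ▸ hs
        exact this
      have h1 : G k (ρ s) = 1 := by
        have := hG1 k (show ρ (σ₂ k) ∈ {ρ (σ₂ k)} from rfl)
        rw [hk] at this
        simpa using this
      calc (0 : ℝ) < (1/2 : ℝ) ^ k * G k (ρ s) := by rw [h1]; positivity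
        _ ≤ g (ρ s) := Summable.le_tsum (hsumg (ρ s)) k
            (fun j _ => mul_nonneg (by positivity) (hGmem j (ρ s)).1)
    -- the two disjoint open σ-compact sets in Z
    set Uz : Set Z := {z | g z < f z} with hUz
    set Vz : Set Z := {z | f z < g z} with hVz
    have hUzo : IsOpen Uz := isOpen_lt hgc hfc
    have hVzo : IsOpen Vz := isOpen_lt hfc hgc
    have hUzsc : IsSigmaCompact Uz := by
      refine ⟨fun k => {z | g z + 1 / (k + 1) ≤ f z}, fun k =>
        ((isClosed_le (hgc.add continuous_const) hfc)).isCompact, ?_⟩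
      ext z
      simp only [Set.mem_iUnion, Set.mem_setOf_eq, hUz]
      constructor
      · rintro ⟨k, hk⟩
        have : (0 : ℝ) < 1 / (k + 1) := by positivity
        linarith
      · intro hzlt
        obtain ⟨k, hk⟩ := exists_nat_one_div_lt (sub_pos.mpr hzlt)
        exact ⟨k, by linarith⟩
    have hVzsc : IsSigmaCompact Vz := by
      refine ⟨fun k => {z | f z + 1 / (k + 1) ≤ g z}, fun k =>
        ((isClosed_le (hfc.add continuous_const) hgc)).isCompact, ?_⟩
      ext z
      simp only [Set.mem_iUnion, Set.mem_setOf_eq, hVz]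
      constructor
      · rintro ⟨k, hk⟩
        have : (0 : ℝ) < 1 / (k + 1) := by positivity
        linarith
      · intro hzlt
        obtain ⟨k, hk⟩ := exists_nat_one_div_lt (sub_pos.mpr hzlt)
        exact ⟨k, by linarith⟩
    have hdisj : Disjoint Uz Vz := by
      rw [Set.disjoint_left]
      intro z hz hz'
      simp only [hUz, Set.mem_setOf_eq] at hz
      simp only [hVz, Set.mem_setOf_eq] at hz'
      exact lt_asymm hz hz'
    have himg1 : ρ '' S₁ ⊆ Uz := by
      rintro z ⟨s, hs, rfl⟩
      have h0 : g (ρ s) = 0 := hgzero _ (subset_closure ⟨s, hs, rfl⟩)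
      rw [hUz, Set.mem_setOf_eq, h0]
      exact hfpos s hs
    have himg2 : ρ '' S₂ ⊆ Vz := by
      rintro z ⟨s, hs, rfl⟩
      have h0 : f (ρ s) = 0 := hfzero _ (subset_closure ⟨s, hs, rfl⟩)
      rw [hVz, Set.mem_setOf_eq, h0]
      exact hgpos s hs
    have hPU : ρ (px, py) ∈ closure Uz :=
      closure_mono himg1 ((image_closure_subset_closure_image hcont) ⟨(px, py), hP1, rfl⟩)
    have hPV : ρ (px, py) ∈ closure Vz :=
      closure_mono himg2 ((image_closure_subset_closure_image hcont) ⟨(px, py), hP2, rfl⟩)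
    exact Set.disjoint_left.mp (hZ Uz Vz hUzo hVzo hUzsc hVzsc hdisj).1 hPU hPV
  exact ⟨main, fun h => h.elim fun e => main e e.continuous e.injective⟩
end

section
/- \beta\mathbb{N} is not homeomorphic to X \times Y for any infinite compact Hausdorff spaces X and Y. -/
open Set Filter Topology

/-- Step lemma: inside an infinite open set of a regular Hausdorff space we can find a point
with an open neighborhood, together with an infinite open set disjoint from that
neighborhood, both inside the original set. -/
lemma exists_step_aux {X : Type*} [TopologicalSpace X] [T2Space X] [RegularSpace X]
    (V : Set X) (hV : IsOpen V) (hVi : V.Infinite) :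
    ∃ (x : X) (U V' : Set X), x ∈ U ∧ IsOpen U ∧ U ⊆ V ∧ IsOpen V' ∧ V' ⊆ V ∧
      V'.Infinite ∧ Disjoint U V' := by
  obtain ⟨a, ha, b, hb, hab⟩ := hVi.nontrivial
  obtain ⟨Oa, Ob, hOa, hOb, haOa, hbOb, hd⟩ := t2_separation hab
  have h1 : Oa ∩ V ∈ 𝓝 a := Filter.inter_mem (hOa.mem_nhds haOa) (hV.mem_nhds ha)
  have h2 : Ob ∩ V ∈ 𝓝 b := Filter.inter_mem (hOb.mem_nhds hbOb) (hV.mem_nhds hb)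
  obtain ⟨Ca, hCan, hCac, hCas⟩ := exists_mem_nhds_isClosed_subset h1
  obtain ⟨Cb, hCbn, hCbc, hCbs⟩ := exists_mem_nhds_isClosed_subset h2
  by_cases hfin : (V \ Ca).Infinite
  · refine ⟨a, interior Ca, V \ Ca, mem_interior_iff_mem_nhds.mpr hCan, isOpen_interior,
      interior_subset.trans (hCas.trans inter_subset_right), hV.sdiff hCac, diff_subset,
      hfin, ?_⟩
    exact (disjoint_sdiff_self_right).mono_left interior_subset
  · have hVCa : (V ∩ Ca).Infinite := by
      rw [Set.not_infinite] at hfin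
      have : V ⊆ (V \ Ca) ∪ (V ∩ Ca) := by
        intro z hz
        by_cases hzc : z ∈ Ca
        · exact Or.inr ⟨hz, hzc⟩
        · exact Or.inl ⟨hz, hzc⟩
      have := hVi.mono this
      rcases Set.infinite_union.mp this with h | h
      · exact absurd h hfin.not_infinite
      · exact h
    have hsub : V ∩ Ca ⊆ V \ Cb := by
      intro z hz
      refine ⟨hz.1, fun hzb => ?_⟩
      have hza : z ∈ Oa := (hCas hz.2).1
      have hzb' : z ∈ Ob := (hCbs hzb).1
      exact hd.le_bot ⟨hza, hzb'⟩
    refine ⟨b, interior Cb, V \ Cb, mem_interior_iff_mem_nhds.mpr hCbn, isOpen_interior,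
      interior_subset.trans (hCbs.trans inter_subset_right), hV.sdiff hCbc, diff_subset,
      hVCa.mono hsub, ?_⟩
    exact (disjoint_sdiff_self_right).mono_left interior_subset

/-- In an infinite regular Hausdorff space there is a sequence of points with pairwise
disjoint open neighborhoods. -/
lemma exists_disjoint_family {X : Type*} [TopologicalSpace X] [T2Space X] [RegularSpace X]
    [Infinite X] :
    ∃ (x : ℕ → X) (U : ℕ → Set X), (∀ n, x n ∈ U n) ∧ (∀ n, IsOpen (U n)) ∧
      ∀ m n, m < n → Disjoint (U m) (U n) := by
  classical
  let St := {V : Set X // IsOpen V ∧ V.Infinite}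
  have step : ∀ s : St, ∃ (x : X) (U V' : Set X), x ∈ U ∧ IsOpen U ∧ U ⊆ s.1 ∧ IsOpen V' ∧
      V' ⊆ s.1 ∧ V'.Infinite ∧ Disjoint U V' :=
    fun s => exists_step_aux s.1 s.2.1 s.2.2
  choose f U V' hmem hUo hUs hV'o hV's hV'i hdisj using step
  let s : ℕ → St := fun n => Nat.rec
    (⟨Set.univ, isOpen_univ, Set.infinite_univ⟩ : St)
    (fun _ prev => ⟨V' prev, hV'o prev, hV'i prev⟩) n
  have hs_succ : ∀ n, (s (n + 1)).1 = V' (s n) := fun n => rfl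
  have hmono : ∀ m n, m ≤ n → (s n).1 ⊆ (s m).1 := by
    intro m n hmn
    induction n with
    | zero => simp_all
    | succ k ih =>
      rcases Nat.lt_or_ge m (k + 1) with h | h
      · have : (s (k + 1)).1 ⊆ (s k).1 := by rw [hs_succ]; exact hV's (s k)
        exact this.trans (ih (Nat.lt_succ_iff.mp h))
      · have : m = k + 1 := le_antisymm hmn h
        subst this; exact subset_rfl
  refine ⟨fun n => f (s n), fun n => U (s n), fun n => hmem (s n), fun n => hUo (s n), ?_⟩
  intro m n hmn
  have h1 : U (s n) ⊆ V' (s m) := by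
    have : U (s n) ⊆ (s n).1 := hUs (s n)
    have h2 : (s n).1 ⊆ (s (m + 1)).1 := hmono (m + 1) n hmn
    rw [hs_succ] at h2
    exact this.trans h2
  exact (hdisj (s m)).mono_right h1

/-- `βℕ` is not homeomorphic to `X × Y` for any infinite compact Hausdorff spaces
`X` and `Y`. -/
theorem stoneCech_nat_not_product
    {X Y : Type*} [TopologicalSpace X] [CompactSpace X] [T2Space X] [Infinite X]
    [TopologicalSpace Y] [CompactSpace Y] [T2Space Y] [Infinite Y] :
    ¬ Nonempty (StoneCech ℕ ≃ₜ (X × Y)) := by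
  rintro ⟨e⟩
  haveI : ExtremallyDisconnected (StoneCech ℕ) :=
    CompactT2.Projective.extremallyDisconnected StoneCech.projective
  haveI hED : ExtremallyDisconnected (X × Y) := extremallyDisconnected_of_homeo e
  obtain ⟨x, U, hxU, hUo, hUd⟩ := exists_disjoint_family (X := X)
  obtain ⟨y, V, hyV, hVo, hVd⟩ := exists_disjoint_family (X := Y)
  -- a free ultrafilter on ℕ
  let F : Ultrafilter ℕ := Ultrafilter.of Filter.atTop
  have hFle : (F : Filter ℕ) ≤ Filter.atTop := Ultrafilter.of_le _
  have hFinf : ∀ S ∈ F, S.Infinite := by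
    intro S hS
    by_contra h
    rw [Set.not_infinite] at h
    have hc : Sᶜ ∈ (Filter.atTop : Filter ℕ) := by
      rw [← Nat.cofinite_eq_atTop]
      exact h.compl_mem_cofinite
    exact (Ultrafilter.compl_mem_iff_notMem.mp (hFle hc)) hS
  -- ultrafilter limits
  obtain ⟨xl, -, hxl⟩ := isCompact_univ.ultrafilter_le_nhds (F.map x)
    (le_principal_iff.mpr Filter.univ_mem)
  obtain ⟨yl, -, hyl⟩ := isCompact_univ.ultrafilter_le_nhds (F.map y)
    (le_principal_iff.mpr Filter.univ_mem)
  have hxF : ∀ O : Set X, O ∈ 𝓝 xl → x ⁻¹' O ∈ F := fun O hO =>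
    Ultrafilter.mem_map.mp (hxl hO)
  have hyF : ∀ O : Set Y, O ∈ 𝓝 yl → y ⁻¹' O ∈ F := fun O hO =>
    Ultrafilter.mem_map.mp (hyl hO)
  -- the two disjoint open sets
  set A : Set (X × Y) := ⋃ n, U n ×ˢ V n with hA
  set B : Set (X × Y) := ⋃ n, ⋃ m, ⋃ (_ : n < m), U n ×ˢ V m with hB
  have hAo : IsOpen A := isOpen_iUnion fun n => (hUo n).prod (hVo n)
  have hBo : IsOpen B := isOpen_iUnion fun n => isOpen_iUnion fun m =>
    isOpen_iUnion fun _ => (hUo n).prod (hVo m)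
  have hAB : Disjoint A B := by
    rw [Set.disjoint_left]
    rintro ⟨a, b⟩ hpA hpB
    simp only [hA, hB, Set.mem_iUnion, Set.mem_prod] at hpA hpB
    obtain ⟨n, han, hbn⟩ := hpA
    obtain ⟨k, m, hkm, hak, hbm⟩ := hpB
    have hnm : n = m := by
      by_contra hne
      rcases Nat.lt_or_ge n m with h | h
      · exact (hVd n m h).le_bot ⟨hbn, hbm⟩
      · exact (hVd m n (lt_of_le_of_ne h (Ne.symm hne))).le_bot ⟨hbm, hbn⟩
    subst hnm
    exact (hUd k n hkm).le_bot ⟨hak, han⟩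
  -- the common closure point
  have hpA : (xl, yl) ∈ closure A := by
    rw [mem_closure_iff]
    intro O hO hpO
    obtain ⟨u, v, hu, hv, hxu, hyv, huv⟩ := isOpen_prod_iff.mp hO xl yl hpO
    have hI : x ⁻¹' u ∈ F := hxF u (hu.mem_nhds hxu)
    have hJ : y ⁻¹' v ∈ F := hyF v (hv.mem_nhds hyv)
    obtain ⟨n, hnI, hnJ⟩ := Ultrafilter.nonempty_of_mem (F.inter_mem hI hJ)
    refine ⟨(x n, y n), huv ⟨hnI, hnJ⟩, ?_⟩
    exact Set.mem_iUnion.mpr ⟨n, hxU n, hyV n⟩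
  have hpB : (xl, yl) ∈ closure B := by
    rw [mem_closure_iff]
    intro O hO hpO
    obtain ⟨u, v, hu, hv, hxu, hyv, huv⟩ := isOpen_prod_iff.mp hO xl yl hpO
    have hI : x ⁻¹' u ∈ F := hxF u (hu.mem_nhds hxu)
    have hJ : y ⁻¹' v ∈ F := hyF v (hv.mem_nhds hyv)
    have hIJ : (x ⁻¹' u ∩ y ⁻¹' v) ∈ F := F.inter_mem hI hJ
    obtain ⟨n, hnI, hnJ⟩ := Ultrafilter.nonempty_of_mem hIJ
    obtain ⟨m, hm, hnm⟩ := (hFinf _ hIJ).exists_gt n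
    refine ⟨(x n, y m), huv ⟨hnI, hm.2⟩, ?_⟩
    simp only [hB, Set.mem_iUnion, Set.mem_prod]
    exact ⟨n, m, hnm, hxU n, hyV m⟩
  -- contradiction with extremal disconnectedness
  have hCo : IsOpen (closure A) := ExtremallyDisconnected.open_closure A hAo
  obtain ⟨q, hqA, hqB⟩ := mem_closure_iff.mp hpB (closure A) hCo hpA
  obtain ⟨r, hrB, hrA⟩ := mem_closure_iff.mp hqA B hBo hqB
  exact hAB.le_bot ⟨hrA, hrB⟩
end

section
/- A commutative C*-algebra C_0(X), for X a locally compact Hausdorff space, is a SAW*-algebra if and only if X is a sub-Stonean space (i.e., any two disjoint open \sigma-compact subsets of X have disjoint compact closures). -/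
open scoped ZeroAtInfty ComplexOrder
open Set Filter Topology

section Aux

variable {X : Type*} [TopologicalSpace X]

/-- Evaluation at a point as a continuous linear map on `C₀(X, ℝ)`. -/
noncomputable def evC0 (x : X) : C₀(X, ℝ) →L[ℝ] ℝ :=
  LinearMap.mkContinuous
    { toFun := fun f => f x
      map_add' := fun f g => rfl
      map_smul' := fun c f => rfl } 1
    (fun f => by
      rw [one_mul, ← ZeroAtInftyContinuousMap.norm_toBCF_eq_norm]
      exact f.toBCF.norm_coe_le_norm x)

@[simp] lemma evC0_apply (x : X) (f : C₀(X, ℝ)) : evC0 x f = f x := rfl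

/-- Level sets of the norm of a function vanishing at infinity are compact. -/
lemma isCompact_norm_le {E : Type*} [NormedAddCommGroup E]
    (f : C₀(X, E)) {ε : ℝ} (hε : 0 < ε) : IsCompact {x | ε ≤ ‖f x‖} := by
  have h : f ⁻¹' Metric.ball 0 ε ∈ cocompact X :=
    zero_at_infty f (Metric.ball_mem_nhds 0 hε)
  obtain ⟨K, hK, hKsub⟩ := Filter.mem_cocompact.mp h
  refine hK.of_isClosed_subset
    (isClosed_le continuous_const (continuous_norm.comp (map_continuous f))) ?_
  intro x hx
  by_contra hxK
  have : ‖f x‖ < ε := by simpa [dist_zero_right] using hKsub hxK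
  exact absurd hx (by simpa using not_le.mpr this)

/-- An open σ-compact subset of a locally compact Hausdorff space is the cozero set
of some nonnegative function in `C₀(X, ℝ)`. -/
lemma exists_c0_cozero_eq [LocallyCompactSpace X] [T2Space X]
    {U : Set X} (hUo : IsOpen U) (hU : IsSigmaCompact U) :
    ∃ f : C₀(X, ℝ), (∀ x, 0 ≤ f x) ∧ ∀ x, f x ≠ 0 ↔ x ∈ U := by
  obtain ⟨K, hK, hKU⟩ := hU
  have hKsub : ∀ n, K n ⊆ U := fun n => hKU ▸ subset_iUnion K n
  have A : ∀ n, ∃ f : C(X, ℝ), EqOn f 1 (K n) ∧ EqOn f 0 Uᶜ ∧ HasCompactSupport f ∧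
      ∀ x, f x ∈ Icc (0:ℝ) 1 := fun n =>
    exists_continuous_one_zero_of_isCompact (hK n) hUo.isClosed_compl
      (Set.disjoint_left.mpr fun x hx hxc => hxc (hKsub n hx))
  choose f hf1 hf0 hfc hfr using A
  let c : ℕ → C₀(X, ℝ) := fun n => ⟨f n, (hfc n).is_zero_at_infty⟩
  have hcapp : ∀ n x, c n x = f n x := fun n x => rfl
  have hcnorm : ∀ n, ‖c n‖ ≤ 1 := by
    intro n
    rw [← ZeroAtInftyContinuousMap.norm_toBCF_eq_norm]
    refine (BoundedContinuousFunction.norm_le zero_le_one).mpr fun x => ?_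
    have := hfr n x
    have hb : (c n).toBCF x = f n x := rfl
    rw [Real.norm_eq_abs, hb, abs_le]
    constructor <;> linarith [this.1, this.2]
  let g : ℕ → C₀(X, ℝ) := fun n => (2⁻¹ : ℝ)^n • c n
  have hgnorm : ∀ n, ‖g n‖ ≤ (2⁻¹ : ℝ)^n := by
    intro n
    rw [← ZeroAtInftyContinuousMap.norm_toBCF_eq_norm]
    refine (BoundedContinuousFunction.norm_le (by positivity)).mpr fun x => ?_
    have hb : (g n).toBCF x = (2⁻¹ : ℝ)^n * f n x := by
      show g n x = _
      show ((2⁻¹ : ℝ)^n • c n) x = _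
      rw [ZeroAtInftyContinuousMap.smul_apply, smul_eq_mul, hcapp]
    rw [hb, Real.norm_eq_abs, abs_mul, abs_of_nonneg (a := (2⁻¹:ℝ)^n) (by positivity)]
    have h1 : |f n x| ≤ 1 := by
      rw [abs_le]; constructor <;> linarith [(hfr n x).1, (hfr n x).2]
    nlinarith [pow_nonneg (by norm_num : (0:ℝ) ≤ 2⁻¹) n, abs_nonneg (f n x)]
  have hsum : Summable g := by
    refine Summable.of_norm_bounded ?_ hgnorm
    exact summable_geometric_of_lt_one (by norm_num) (by norm_num)
  have hgapp : ∀ n x, g n x = (2⁻¹ : ℝ)^n * f n x := fun n x => by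
    show ((2⁻¹ : ℝ)^n • c n) x = _
    rw [ZeroAtInftyContinuousMap.smul_apply, smul_eq_mul, hcapp]
  refine ⟨∑' n, g n, ?_, ?_⟩
  all_goals
    have key : ∀ x : X, (∑' n, g n) x = ∑' n, (2⁻¹ : ℝ)^n * f n x := by
      intro x
      have := (evC0 x).map_tsum hsum
      simpa [hgapp] using this
  · intro x
    rw [key]
    exact tsum_nonneg fun n => mul_nonneg (by positivity) (hfr n x).1
  · intro x
    constructor
    · intro hne
      by_contra hx
      apply hne
      rw [key]
      have hz : (fun n => (2⁻¹ : ℝ)^n * f n x) = fun _ => 0 :=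
        funext fun n => by rw [hf0 n hx, Pi.zero_apply, mul_zero]
      rw [hz, tsum_zero]
    · intro hx
      obtain ⟨n, hn⟩ : ∃ n, x ∈ K n := by
        have := hKU ▸ hx
        simpa using this
      have hsumpt : Summable (fun n => (2⁻¹ : ℝ)^n * f n x) := by
        have hh := hsum.map (AddMonoidHomClass.toAddMonoidHom (evC0 x)) (evC0 x).continuous
        refine hh.congr fun n => ?_
        show evC0 x (g n) = _
        rw [evC0_apply, hgapp]
      have hpos : 0 < ∑' n, (2⁻¹ : ℝ)^n * f n x := by
        refine Summable.tsum_pos hsumpt (fun m => mul_nonneg (by positivity) (hfr m x).1) n ?_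
        rw [hf1 n hn, Pi.one_apply, mul_one]
        positivity
      rw [key]
      exact ne_of_gt hpos

/-- Coercion `C₀(X, ℝ) → C₀(X, ℂ)`. -/
noncomputable def ofRealC0 (f : C₀(X, ℝ)) : C₀(X, ℂ) where
  toFun := fun x => (f x : ℂ)
  continuous_toFun := Complex.continuous_ofReal.comp (map_continuous f)
  zero_at_infty' := by
    have := (Complex.continuous_ofReal.tendsto 0).comp (zero_at_infty f)
    simpa [Function.comp_def] using this

@[simp] lemma ofRealC0_apply (f : C₀(X, ℝ)) (x : X) : ofRealC0 f x = (f x : ℂ) := rfl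

end Aux

/-- `C₀(X)` is a SAW*-algebra (for any two orthogonal positive elements `f, g` there is
a positive `e` with `e f = f` and `e g = 0`) if and only if `X` is sub-Stonean. -/
theorem c0_sawstar_iff_subStonean
    (X : Type*) [TopologicalSpace X] [LocallyCompactSpace X] [T2Space X] :
    (∀ f g : C₀(X, ℂ), (∀ t, 0 ≤ f t) → (∀ t, 0 ≤ g t) → f * g = 0 →
      ∃ e : C₀(X, ℂ), (∀ t, 0 ≤ e t) ∧ e * f = f ∧ e * g = 0) ↔
    SubStonean X := by
  constructor
  · -- SAW* ⇒ sub-Stonean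
    intro h U V hUo hVo hUsc hVsc hUV
    obtain ⟨fr, hfr0, hfrU⟩ := exists_c0_cozero_eq hUo hUsc
    obtain ⟨gr, hgr0, hgrV⟩ := exists_c0_cozero_eq hVo hVsc
    set f : C₀(X, ℂ) := ofRealC0 fr with hf_def
    set g : C₀(X, ℂ) := ofRealC0 gr with hg_def
    have hfpos : ∀ t, 0 ≤ f t := fun t => Complex.zero_le_real.mpr (hfr0 t)
    have hgpos : ∀ t, 0 ≤ g t := fun t => Complex.zero_le_real.mpr (hgr0 t)
    have hfg : f * g = 0 := by
      ext x
      rw [ZeroAtInftyContinuousMap.mul_apply]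
      by_cases hx : x ∈ U
      · have hxV : x ∉ V := Set.disjoint_left.mp hUV hx
        have : gr x = 0 := by simpa using (hgrV x).not.mpr hxV
        simp [hg_def, this]
      · have : fr x = 0 := by simpa using (hfrU x).not.mpr hx
        simp [hf_def, this]
    -- first application: get e with e = 1 on U, e = 0 on V
    obtain ⟨e, -, hef, heg⟩ := h f g hfpos hgpos hfg
    have heU : ∀ x ∈ U, e x = 1 := by
      intro x hx
      have hfx : f x ≠ 0 := by
        simpa [hf_def, Complex.ofReal_eq_zero] using (hfrU x).mpr hx
      have : e x * f x = 1 * f x := by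
        rw [one_mul]
        have := congrArg (fun u : C₀(X, ℂ) => u x) hef
        simpa [ZeroAtInftyContinuousMap.mul_apply] using this
      exact mul_right_cancel₀ hfx this
    have heV : ∀ x ∈ V, e x = 0 := by
      intro x hx
      have hgx : g x ≠ 0 := by
        simpa [hg_def, Complex.ofReal_eq_zero] using (hgrV x).mpr hx
      have : e x * g x = 0 := by
        have := congrArg (fun u : C₀(X, ℂ) => u x) heg
        simpa [ZeroAtInftyContinuousMap.mul_apply] using this
      rcases mul_eq_zero.mp this with h' | h'
      · exact h'
      · exact absurd h' hgx
    have hclU : closure U ⊆ {x | e x = 1} :=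
      closure_minimal (fun x hx => heU x hx)
        (isClosed_eq (map_continuous e) continuous_const)
    have hclV : closure V ⊆ {x | e x = 0} :=
      closure_minimal (fun x hx => heV x hx)
        (isClosed_eq (map_continuous e) continuous_const)
    refine ⟨Set.disjoint_left.mpr fun x hx hx' => ?_, ?_, ?_⟩
    · exact one_ne_zero ((hclU hx).symm.trans (hclV hx'))
    · refine (isCompact_norm_le e one_pos).of_isClosed_subset isClosed_closure ?_
      intro x hx
      have h1 : e x = 1 := hclU hx
      simp only [Set.mem_setOf_eq, h1, norm_one, le_refl]
    · -- second application with roles swapped gives compactness of closure V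
      obtain ⟨e', -, he'g, -⟩ := h g f hgpos hfpos (by rw [mul_comm]; exact hfg)
      have he'V : ∀ x ∈ V, e' x = 1 := by
        intro x hx
        have hgx : g x ≠ 0 := by
          simpa [hg_def, Complex.ofReal_eq_zero] using (hgrV x).mpr hx
        have : e' x * g x = 1 * g x := by
          rw [one_mul]
          have := congrArg (fun u : C₀(X, ℂ) => u x) he'g
          simpa [ZeroAtInftyContinuousMap.mul_apply] using this
        exact mul_right_cancel₀ hgx this
      have hclV' : closure V ⊆ {x | e' x = 1} :=
        closure_minimal (fun x hx => he'V x hx)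
          (isClosed_eq (map_continuous e') continuous_const)
      refine (isCompact_norm_le e' one_pos).of_isClosed_subset isClosed_closure ?_
      intro x hx
      have h1 : e' x = 1 := hclV' hx
      simp only [Set.mem_setOf_eq, h1, norm_one, le_refl]
  · -- sub-Stonean ⇒ SAW*
    intro hS f g hf hg hfg
    set U : Set X := {x | f x ≠ 0} with hU_def
    set V : Set X := {x | g x ≠ 0} with hV_def
    have hUo : IsOpen U := isOpen_compl_singleton.preimage (map_continuous f)
    have hVo : IsOpen V := isOpen_compl_singleton.preimage (map_continuous g)
    have hsc : ∀ (u : C₀(X, ℂ)), IsSigmaCompact {x | u x ≠ 0} := by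
      intro u
      refine ⟨fun n => {x | (1 / (n + 1) : ℝ) ≤ ‖u x‖}, fun n => ?_, ?_⟩
      · exact isCompact_norm_le u (by positivity)
      · ext x
        simp only [Set.mem_iUnion, Set.mem_setOf_eq]
        constructor
        · rintro ⟨n, hn⟩
          have : (0:ℝ) < ‖u x‖ := lt_of_lt_of_le (by positivity) hn
          exact norm_pos_iff.mp this
        · intro hx
          obtain ⟨n, hn⟩ := exists_nat_one_div_lt (norm_pos_iff.mpr hx)
          exact ⟨n, le_of_lt hn⟩
    have hUV : Disjoint U V := by
      refine Set.disjoint_left.mpr fun x hx hx' => ?_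
      have : f x * g x = 0 := by
        have := congrArg (fun u : C₀(X, ℂ) => u x) hfg
        simpa [ZeroAtInftyContinuousMap.mul_apply] using this
      exact mul_ne_zero hx hx' this
    obtain ⟨hdisj, hcU, hcV⟩ := hS U V hUo hVo (hsc f) (hsc g) hUV
    obtain ⟨er, her1, her0, hercs, herr⟩ :=
      exists_continuous_one_zero_of_isCompact hcU isClosed_closure hdisj
    set erc : C₀(X, ℝ) := ⟨er, hercs.is_zero_at_infty⟩ with herc_def
    have happ : ∀ x, erc x = er x := fun _ => rfl
    refine ⟨ofRealC0 erc, ?_, ?_, ?_⟩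
    · intro t
      rw [ofRealC0_apply, happ]
      exact Complex.zero_le_real.mpr (herr t).1
    · ext x
      rw [ZeroAtInftyContinuousMap.mul_apply]
      by_cases hx : f x = 0
      · simp [hx]
      · have h1 : er x = 1 := her1 (subset_closure (show x ∈ U from hx))
        rw [ofRealC0_apply, happ, h1]
        simp
    · ext x
      rw [ZeroAtInftyContinuousMap.mul_apply]
      by_cases hx : g x = 0
      · simp [hx]
      · have h0 : er x = 0 := her0 (subset_closure (show x ∈ V from hx))
        rw [ofRealC0_apply, happ, h0]
        simp
end

section
/- Let X and Y be compact Hausdorff spaces, each containing a countable discrete sequence of points whose closures of complementary subsequences are disjoint (so each closure is homeomorphic to \beta\mathbb{N}). If the closure of the product grid \{(x_m, y_n)\} in X \times Y is homeomorphic to \beta\mathbb{N}, then a contradiction follows; i.e., the closure of such a grid in a product of two infinite compact spaces is never homeomorphic to \beta\mathbb{N}. -/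
open Set

/-- Let `X`, `Y` be compact Hausdorff spaces, each containing a sequence of points such
that closures of complementary subsequences are disjoint.  Then the closure of the
product grid `{(xₘ, yₙ)}` in `X × Y` is not homeomorphic to `βℕ`. -/
theorem closure_of_grid_not_stoneCech
    {X Y : Type*} [TopologicalSpace X] [CompactSpace X] [T2Space X]
    [TopologicalSpace Y] [CompactSpace Y] [T2Space Y]
    (x : ℕ → X) (hx : ∀ D : Set ℕ, Disjoint (closure (x '' D)) (closure (x '' Dᶜ)))
    (y : ℕ → Y) (hy : ∀ D : Set ℕ, Disjoint (closure (y '' D)) (closure (y '' Dᶜ))) :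
    ¬ Nonempty
      ((closure (Set.range fun p : ℕ × ℕ => (x p.1, y p.2)) : Set (X × Y)) ≃ₜ
        StoneCech ℕ) := by
  rintro ⟨e⟩
  -- `K` is extremally disconnected since `βℕ` is.
  haveI : ExtremallyDisconnected (StoneCech ℕ) :=
    CompactT2.Projective.extremallyDisconnected StoneCech.projective
  haveI hED : ExtremallyDisconnected
      (closure (Set.range fun p : ℕ × ℕ => (x p.1, y p.2)) : Set (X × Y)) :=
    extremallyDisconnected_of_homeo e.symm
  set K : Set (X × Y) := closure (Set.range fun p : ℕ × ℕ => (x p.1, y p.2)) with hKdef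
  -- The grid range is the product of the ranges.
  have hrange : (Set.range fun p : ℕ × ℕ => (x p.1, y p.2)) = Set.range x ×ˢ Set.range y := by
    ext ⟨a, b⟩
    constructor
    · rintro ⟨⟨m, n⟩, h⟩
      simp only [Prod.mk.injEq] at h
      exact ⟨⟨m, h.1⟩, ⟨n, h.2⟩⟩
    · rintro ⟨⟨m, hm⟩, ⟨n, hn⟩⟩
      exact ⟨(m, n), by simp [hm, hn]⟩
  have hKprod : K = closure (Set.range x) ×ˢ closure (Set.range y) := by
    rw [hKdef, hrange, closure_prod_eq]
  -- injectivity of x and y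
  have hxinj : Function.Injective x := by
    intro m k h
    by_contra hne
    have h1 : x m ∈ closure (x '' {m}) := subset_closure ⟨m, rfl, rfl⟩
    have h2 : x m ∈ closure (x '' {m}ᶜ) := by
      refine subset_closure ⟨k, ?_, h.symm⟩
      simp [Ne.symm hne]
    exact (hx {m}).ne_of_mem h1 h2 rfl
  have hyinj : Function.Injective y := by
    intro m k h
    by_contra hne
    have h1 : y m ∈ closure (y '' {m}) := subset_closure ⟨m, rfl, rfl⟩
    have h2 : y m ∈ closure (y '' {m}ᶜ) := by
      refine subset_closure ⟨k, ?_, h.symm⟩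
      simp [Ne.symm hne]
    exact (hy {m}).ne_of_mem h1 h2 rfl
  -- isolation of x m in closure (range x)
  have hisox : ∀ m : ℕ, ∃ U : Set X, IsOpen U ∧ x m ∈ U ∧
      U ∩ closure (Set.range x) ⊆ {x m} := by
    intro m
    refine ⟨(closure (x '' {m}ᶜ))ᶜ, isClosed_closure.isOpen_compl, ?_, ?_⟩
    · intro hmem
      exact (hx {m}).ne_of_mem (subset_closure ⟨m, rfl, rfl⟩) hmem rfl
    · intro a ⟨ha1, ha2⟩
      have : Set.range x = x '' {m} ∪ x '' {m}ᶜ := by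
        rw [← Set.image_union, Set.union_compl_self, Set.image_univ]
      rw [this, closure_union] at ha2
      rcases ha2 with h | h
      · simpa using h
      · exact absurd h ha1
  have hisoy : ∀ n : ℕ, ∃ V : Set Y, IsOpen V ∧ y n ∈ V ∧
      V ∩ closure (Set.range y) ⊆ {y n} := by
    intro n
    refine ⟨(closure (y '' {n}ᶜ))ᶜ, isClosed_closure.isOpen_compl, ?_, ?_⟩
    · intro hmem
      exact (hy {n}).ne_of_mem (subset_closure ⟨n, rfl, rfl⟩) hmem rfl
    · intro a ⟨ha1, ha2⟩
      have : Set.range y = y '' {n} ∪ y '' {n}ᶜ := by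
        rw [← Set.image_union, Set.union_compl_self, Set.image_univ]
      rw [this, closure_union] at ha2
      rcases ha2 with h | h
      · simpa using h
      · exact absurd h ha1
  -- definitions of the two disjoint open sets in K
  set A : Set K := {z | ∃ m n : ℕ, m < n ∧ (z : X × Y) = (x m, y n)} with hA
  set B : Set K := {z | ∃ m n : ℕ, n < m ∧ (z : X × Y) = (x m, y n)} with hB
  have hgridK : ∀ m n : ℕ, (x m, y n) ∈ K := fun m n =>
    subset_closure ⟨(m, n), rfl⟩
  -- A and B are open (grid points are isolated in K)
  have hopen : ∀ m n : ℕ, ∃ W : Set (X × Y), IsOpen W ∧ (x m, y n) ∈ W ∧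
      W ∩ K ⊆ {(x m, y n)} := by
    intro m n
    obtain ⟨U, hUo, hUm, hU⟩ := hisox m
    obtain ⟨V, hVo, hVn, hV⟩ := hisoy n
    refine ⟨U ×ˢ V, hUo.prod hVo, ⟨hUm, hVn⟩, ?_⟩
    rintro ⟨a, b⟩ ⟨⟨haU, hbV⟩, hmemK⟩
    rw [hKprod] at hmemK
    have ha : a = x m := hU ⟨haU, hmemK.1⟩
    have hb : b = y n := hV ⟨hbV, hmemK.2⟩
    simp [ha, hb]
  have hAopen : IsOpen A := by
    rw [isOpen_iff_mem_nhds]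
    rintro z ⟨m, n, hmn, hz⟩
    obtain ⟨W, hWo, hWmem, hW⟩ := hopen m n
    have : Subtype.val ⁻¹' W ∈ nhds z := by
      refine IsOpen.mem_nhds (hWo.preimage continuous_subtype_val) ?_
      simp [Set.mem_preimage, hz, hWmem]
    refine Filter.mem_of_superset this ?_
    rintro z' hz'
    have : (z' : X × Y) = (x m, y n) := hW ⟨hz', z'.2⟩
    exact ⟨m, n, hmn, this⟩
  have hBopen : IsOpen B := by
    rw [isOpen_iff_mem_nhds]
    rintro z ⟨m, n, hmn, hz⟩
    obtain ⟨W, hWo, hWmem, hW⟩ := hopen m n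
    have : Subtype.val ⁻¹' W ∈ nhds z := by
      refine IsOpen.mem_nhds (hWo.preimage continuous_subtype_val) ?_
      simp [Set.mem_preimage, hz, hWmem]
    refine Filter.mem_of_superset this ?_
    rintro z' hz'
    have : (z' : X × Y) = (x m, y n) := hW ⟨hz', z'.2⟩
    exact ⟨m, n, hmn, this⟩
  have hdisj : Disjoint A B := by
    rw [Set.disjoint_left]
    rintro z ⟨m, n, hmn, hz⟩ ⟨m', n', hnm, hz'⟩
    rw [hz] at hz'
    have h1 : x m = x m' := congrArg Prod.fst hz'
    have h2 : y n = y n' := congrArg Prod.snd hz'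
    have hm : m = m' := hxinj h1
    have hn : n = n' := hyinj h2
    omega
  -- cluster points p and q of the tails
  have hxtail : (⋂ n : ℕ, closure (x '' Set.Ioi n)).Nonempty := by
    apply IsCompact.nonempty_iInter_of_sequence_nonempty_isCompact_isClosed
    · intro i
      exact closure_mono (Set.image_mono fun a ha => lt_trans (Nat.lt_succ_self i) ha)
    · intro i
      exact ⟨x (i + 1), subset_closure ⟨i + 1, Nat.lt_succ_self i, rfl⟩⟩
    · exact isClosed_closure.isCompact
    · exact fun i => isClosed_closure
  have hytail : (⋂ n : ℕ, closure (y '' Set.Ioi n)).Nonempty := by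
    apply IsCompact.nonempty_iInter_of_sequence_nonempty_isCompact_isClosed
    · intro i
      exact closure_mono (Set.image_mono fun a ha => lt_trans (Nat.lt_succ_self i) ha)
    · intro i
      exact ⟨y (i + 1), subset_closure ⟨i + 1, Nat.lt_succ_self i, rfl⟩⟩
    · exact isClosed_closure.isCompact
    · exact fun i => isClosed_closure
  obtain ⟨p, hp⟩ := hxtail
  obtain ⟨q, hq⟩ := hytail
  have hpmem : ∀ n : ℕ, p ∈ closure (x '' Set.Ioi n) := fun n => Set.mem_iInter.mp hp n
  have hqmem : ∀ n : ℕ, q ∈ closure (y '' Set.Ioi n) := fun n => Set.mem_iInter.mp hq n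
  have hpCx : p ∈ closure (Set.range x) :=
    closure_mono (Set.image_subset_range x _) (hpmem 0)
  have hqCy : q ∈ closure (Set.range y) :=
    closure_mono (Set.image_subset_range y _) (hqmem 0)
  have hpqK : (p, q) ∈ K := by rw [hKprod]; exact ⟨hpCx, hqCy⟩
  set z₀ : K := ⟨(p, q), hpqK⟩ with hz₀
  -- ambient versions of A and B
  set SA : Set (X × Y) := {w | ∃ m n : ℕ, m < n ∧ w = (x m, y n)} with hSA
  set SB : Set (X × Y) := {w | ∃ m n : ℕ, n < m ∧ w = (x m, y n)} with hSB
  have hvalA : Subtype.val '' A = SA := by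
    ext w
    constructor
    · rintro ⟨z, ⟨m, n, hmn, hz⟩, rfl⟩
      exact ⟨m, n, hmn, hz⟩
    · rintro ⟨m, n, hmn, rfl⟩
      exact ⟨⟨(x m, y n), hgridK m n⟩, ⟨m, n, hmn, rfl⟩, rfl⟩
  have hvalB : Subtype.val '' B = SB := by
    ext w
    constructor
    · rintro ⟨z, ⟨m, n, hmn, hz⟩, rfl⟩
      exact ⟨m, n, hmn, hz⟩
    · rintro ⟨m, n, hmn, rfl⟩
      exact ⟨⟨(x m, y n), hgridK m n⟩, ⟨m, n, hmn, rfl⟩, rfl⟩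
  -- (p, q) is in the ambient closure of SA
  have hclA : (p, q) ∈ closure SA := by
    have step1 : Set.range x ×ˢ {q} ⊆ closure SA := by
      rintro ⟨a, b⟩ ⟨⟨m, rfl⟩, hb⟩
      have hb' : b = q := hb
      subst hb'
      have h1 : (x m, b) ∈ closure ({x m} ×ˢ (y '' Set.Ioi m)) := by
        rw [closure_prod_eq]
        exact ⟨subset_closure rfl, hqmem m⟩
      refine closure_mono ?_ h1
      rintro ⟨a', b'⟩ ⟨ha', ⟨n, hn, rfl⟩⟩
      exact ⟨m, n, hn, by simpa [Prod.ext_iff] using ha'⟩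
    have h2 : (p, q) ∈ closure (Set.range x ×ˢ ({q} : Set Y)) := by
      rw [closure_prod_eq]
      exact ⟨hpCx, subset_closure rfl⟩
    have := closure_mono step1 h2
    rwa [closure_closure] at this
  have hclB : (p, q) ∈ closure SB := by
    have step1 : ({p} : Set X) ×ˢ Set.range y ⊆ closure SB := by
      rintro ⟨a, b⟩ ⟨ha, ⟨n, rfl⟩⟩
      rw [Set.mem_singleton_iff] at ha
      subst ha
      have h1 : (a, y n) ∈ closure ((x '' Set.Ioi n) ×ˢ {y n}) := by
        rw [closure_prod_eq]
        exact ⟨hpmem n, subset_closure rfl⟩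
      refine closure_mono ?_ h1
      rintro ⟨a', b'⟩ ⟨⟨m, hm, rfl⟩, hb'⟩
      exact ⟨m, n, hm, by simpa [Prod.ext_iff] using hb'⟩
    have h2 : (p, q) ∈ closure (({p} : Set X) ×ˢ Set.range y) := by
      rw [closure_prod_eq]
      exact ⟨subset_closure rfl, hqCy⟩
    have := closure_mono step1 h2
    rwa [closure_closure] at this
  -- z₀ is in the subtype closures of A and B
  have hzA : z₀ ∈ closure A := by
    rw [closure_subtype, hvalA]
    exact hclA
  have hzB : z₀ ∈ closure B := by
    rw [closure_subtype, hvalB]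
    exact hclB
  exact (ExtremallyDisconnected.disjoint_closure_of_disjoint_isOpen hdisj
    hAopen hBopen).ne_of_mem hzA hzB rfl
end
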